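/- arXiv:2112.12305 — 6 statements merged into one kernel-verified Lean document; each statement's English description precedes it below -/
import Mathlib

section
/- Let G be a finite simple bipartite graph with edge ideal I = I(G) in R. Let b_0 be a vertex of G whose neighborhood is N(b_0) = {b_1, …, b_t}, and set f = x_{b_0} + x_{b_1} + ⋯ + x_{b_t} ∈ R. Then for every integer r ≥ 1, f is regular on R/I^r. -/
open MvPolynomial

/-- The edge ideal of a finite simple graph `G`: the ideal of `k[x_v : v ∈ V]`
generated by the monomials `x_u * x_v` over all edges `{u, v}` of `G`. -/
noncomputable def edgeIdeal (k : Type*) [Field k] {V : Type*} (G : SimpleGraph V) :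
    Ideal (MvPolynomial V k) :=
  Ideal.span {p | ∃ u v : V, G.Adj u v ∧ p = X u * X v}

set_option linter.unusedSectionVars false
set_option linter.unusedVariables false

namespace Stmt0Aux

open Finset

variable {V : Type*} [Fintype V] [DecidableEq V] (G : SimpleGraph V) [DecidableRel G.Adj]

/-- exponent vector of an (oriented) edge -/
noncomputable def ev (p : V × V) : V →₀ ℕ := Finsupp.single p.1 1 + Finsupp.single p.2 1

/-- `d` dominates a sum of `r` edges of `G` -/
def Reaches (r : ℕ) (d : V →₀ ℕ) : Prop :=
  ∃ l : Multiset (V × V), Multiset.card l = r ∧ (∀ p ∈ l, G.Adj p.1 p.2) ∧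
    (l.map ev).sum ≤ d

def IsCover (C : Finset V) : Prop := ∀ u v : V, G.Adj u v → u ∈ C ∨ v ∈ C

def wt (C : Finset V) (d : V →₀ ℕ) : ℕ := ∑ v ∈ C, d v

variable {G}

lemma wt_add (C : Finset V) (a b : V →₀ ℕ) : wt C (a + b) = wt C a + wt C b := by
  simp [wt, Finset.sum_add_distrib]

lemma wt_single (C : Finset V) (u : V) (n : ℕ) :
    wt C (Finsupp.single u n) = if u ∈ C then n else 0 := by
  simp [wt, Finsupp.single_apply, Finset.sum_ite_eq]

lemma wt_mono {C : Finset V} {a b : V →₀ ℕ} (h : a ≤ b) : wt C a ≤ wt C b :=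
  Finset.sum_le_sum fun v _ => h v

lemma wt_multiset_sum (C : Finset V) (l : Multiset (V →₀ ℕ)) :
    wt C l.sum = (l.map (wt C)).sum := by
  induction l using Multiset.induction with
  | empty => simp [wt]
  | cons a s ih => simp [wt_add, ih]

lemma le_wt_of_reaches {C : Finset V} (hC : IsCover G C) {r : ℕ} {d : V →₀ ℕ}
    (h : Reaches G r d) : r ≤ wt C d := by
  obtain ⟨l, hcard, hadj, hsum⟩ := h
  have h1 : wt C (l.map ev).sum ≤ wt C d := wt_mono hsum
  have h2 : r ≤ wt C (l.map ev).sum := by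
    rw [wt_multiset_sum, Multiset.map_map]
    have : ∀ p ∈ l, 1 ≤ wt C (ev p) := by
      intro p hp
      rcases hC p.1 p.2 (hadj p hp) with h | h
      · calc 1 = wt C (Finsupp.single p.1 1) := by simp [wt_single, h]
          _ ≤ wt C (ev p) := wt_mono le_self_add
      · calc 1 = wt C (Finsupp.single p.2 1) := by simp [wt_single, h]
          _ ≤ wt C (ev p) := wt_mono le_add_self
    calc r = (Multiset.card l) := hcard.symm
      _ = (l.map (fun _ => 1)).sum := by simp
      _ ≤ (l.map (fun p => wt C (ev p))).sum := by
          apply Multiset.sum_map_le_sum_map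
          exact this
    
  omega

lemma reaches_mono {r t : ℕ} {d : V →₀ ℕ} (hrt : r ≤ t) (h : Reaches G t d) :
    Reaches G r d := by
  obtain ⟨l, hcard, hadj, hsum⟩ := h
  refine ⟨↑(l.toList.take r), ?_, ?_, ?_⟩
  · have hlen : l.toList.length = t := by rw [Multiset.length_toList, hcard]
    simp [List.length_take, hlen]
    omega
  · intro p hp
    apply hadj
    have : p ∈ l.toList := List.mem_of_mem_take hp
    rwa [Multiset.mem_toList] at this
  · refine le_trans ?_ hsum
    have hle : (↑(l.toList.take r) : Multiset (V × V)) ≤ l := by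
      have : (l.toList.take r).Subperm l.toList := (List.take_sublist _ _).subperm
      calc (↑(l.toList.take r) : Multiset (V × V)) ≤ ↑l.toList := this
        _ = l := l.coe_toList
    have := Multiset.map_le_map (f := ev) hle
    obtain ⟨u, hu⟩ := Multiset.le_iff_exists_add.mp this
    rw [hu, Multiset.sum_add]
    exact le_add_of_nonneg_right zero_le


section Koenig

variable (G)

/-- neighbors of a set -/
def NB (W : Finset V) : Finset V := univ.filter (fun x => ∃ w ∈ W, G.Adj w x)

variable {G}

lemma sum_union_le' (s t : Finset V) (f : V → ℕ) :
    ∑ v ∈ s ∪ t, f v ≤ ∑ v ∈ s, f v + ∑ v ∈ t, f v := by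
  have := Finset.sum_union_inter (s₁ := s) (s₂ := t) (f := f)
  omega

lemma finsupp_multiset_sum_apply (l : Multiset (V →₀ ℕ)) (x : V) :
    l.sum x = (l.map (fun g => g x)).sum := by
  induction l using Multiset.induction with
  | empty => simp
  | cons a s ih => simp [ih]

lemma koenig (c : G.Coloring (Fin 2)) (d : V →₀ ℕ) (r : ℕ) (h : ¬ Reaches G r d) :
    ∃ C : Finset V, IsCover G C ∧ wt C d < r := by
  classical
  set A₀ : Finset V := univ.filter (fun v => c v = 0) with hA₀def
  obtain ⟨W, hWmem, hWmax⟩ := A₀.powerset.exists_max_image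
      (fun W => (∑ v ∈ W, (d v : ℤ)) - ∑ u ∈ NB G W, (d u : ℤ)) ⟨∅, Finset.empty_mem_powerset _⟩
  rw [Finset.mem_powerset] at hWmem
  set SW := ∑ v ∈ W, d v with hSW
  set SN := ∑ u ∈ NB G W, d u with hSN
  set SD := ∑ v ∈ A₀ \ W, d v with hSD
  have hmax' : ∀ W' ⊆ A₀, ((∑ v ∈ W', d v : ℕ) : ℤ) - ((∑ u ∈ NB G W', d u : ℕ) : ℤ)
      ≤ (SW : ℤ) - (SN : ℤ) := by
    intro W' hW'
    have h' := hWmax W' (Finset.mem_powerset.mpr hW')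
    rw [hSW, hSN]
    push_cast
    exact h'
  have hSNSW : SN ≤ SW := by
    have h0 := hmax' ∅ (Finset.empty_subset _)
    simp [NB] at h0
    omega
  set D : ℕ := SW - SN with hDdef
  -- index types for Hall's theorem
  have hall : ∀ s : Finset (Σ v : {x : V // x ∈ A₀}, Fin (d v.1)),
      s.card ≤ (s.biUnion (fun p => ((univ.filter
        (fun q : Σ v : V, Fin (d v) => G.Adj p.1.1 q.1)).image Sum.inl)
        ∪ (univ.image (Sum.inr : Fin D → (Σ v : V, Fin (d v)) ⊕ Fin D)))).card := by
    have card_copies : ∀ B : Finset V,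
        (univ.filter (fun q : Σ v : V, Fin (d v) => q.1 ∈ B)).card = ∑ v ∈ B, d v := by
      intro B
      rw [show univ.filter (fun q : Σ v : V, Fin (d v) => q.1 ∈ B)
          = B.sigma (fun v => (univ : Finset (Fin (d v)))) by
        ext q; simp [Finset.mem_sigma]]
      rw [Finset.card_sigma]
      simp
    intro s
    rcases s.eq_empty_or_nonempty with rfl | ⟨p₀, hp₀⟩
    · simp
    set Ws := s.image (fun p : Σ v : {x : V // x ∈ A₀}, Fin (d v.1) => p.1.1) with hWsdef
    have hWsA : Ws ⊆ A₀ := by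
      intro v hv
      obtain ⟨p, hp, rfl⟩ := Finset.mem_image.mp hv
      exact p.1.2
    have h1 : s.card ≤ ∑ v ∈ Ws, d v := by
      have hinj : Set.InjOn
          (fun p : Σ v : {x : V // x ∈ A₀}, Fin (d v.1) => (⟨p.1.1, p.2⟩ : Σ v : V, Fin (d v)))
          s := by
        rintro ⟨⟨v, hv⟩, i⟩ _ ⟨⟨w, hw⟩, j⟩ _ hpq
        simp only [Sigma.mk.inj_iff] at hpq
        obtain ⟨rfl, hij⟩ := hpq
        have : i = j := by simpa using hij
        subst this
        rfl
      calc s.card = (s.image (fun p : Σ v : {x : V // x ∈ A₀}, Fin (d v.1) =>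
            (⟨p.1.1, p.2⟩ : Σ v : V, Fin (d v)))).card := (Finset.card_image_of_injOn hinj).symm
        _ ≤ (univ.filter (fun q : Σ v : V, Fin (d v) => q.1 ∈ Ws)).card := by
            apply Finset.card_le_card
            intro q hq
            obtain ⟨p, hp, rfl⟩ := Finset.mem_image.mp hq
            simp only [Finset.mem_filter, Finset.mem_univ, true_and]
            exact Finset.mem_image_of_mem _ hp
        _ = ∑ v ∈ Ws, d v := card_copies Ws
    have h2 : ((univ.filter (fun q : Σ v : V, Fin (d v) => q.1 ∈ NB G Ws)).image Sum.inl
        ∪ (univ.image (Sum.inr : Fin D → (Σ v : V, Fin (d v)) ⊕ Fin D)))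
        ⊆ s.biUnion (fun p => ((univ.filter
        (fun q : Σ v : V, Fin (d v) => G.Adj p.1.1 q.1)).image Sum.inl)
        ∪ (univ.image (Sum.inr : Fin D → (Σ v : V, Fin (d v)) ⊕ Fin D))) := by
      intro a ha
      rcases Finset.mem_union.mp ha with ha | ha
      · obtain ⟨q, hq, rfl⟩ := Finset.mem_image.mp ha
        rw [Finset.mem_filter] at hq
        have hqNB := hq.2
        simp only [NB, Finset.mem_filter, Finset.mem_univ, true_and] at hqNB
        obtain ⟨w, hwWs, hadj⟩ := hqNB
        obtain ⟨p, hp, rfl⟩ := Finset.mem_image.mp hwWs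
        refine Finset.mem_biUnion.mpr ⟨p, hp, Finset.mem_union_left _ ?_⟩
        exact Finset.mem_image_of_mem _ (by simp [hadj])
      · obtain ⟨y, _, rfl⟩ := Finset.mem_image.mp ha
        exact Finset.mem_biUnion.mpr ⟨p₀, hp₀, Finset.mem_union_right _
          (Finset.mem_image_of_mem _ (Finset.mem_univ y))⟩
    have hcard2 : ((univ.filter (fun q : Σ v : V, Fin (d v) => q.1 ∈ NB G Ws)).image Sum.inl
        ∪ (univ.image (Sum.inr : Fin D → (Σ v : V, Fin (d v)) ⊕ Fin D))).card
        = (∑ u ∈ NB G Ws, d u) + D := by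
      rw [Finset.card_union_of_disjoint (by
        simp only [Finset.disjoint_left, Finset.mem_image]
        rintro a ⟨q, _, rfl⟩ ⟨y, _, hy⟩
        exact Sum.inl_ne_inr hy.symm)]
      rw [Finset.card_image_of_injective _ Sum.inl_injective,
        Finset.card_image_of_injective _ Sum.inr_injective, card_copies]
      simp
    have h3 : (∑ v ∈ Ws, d v) ≤ (∑ u ∈ NB G Ws, d u) + D := by
      have := hmax' Ws hWsA
      omega
    calc s.card ≤ ∑ v ∈ Ws, d v := h1
      _ ≤ (∑ u ∈ NB G Ws, d u) + D := h3
      _ = _ := hcard2.symm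
      _ ≤ _ := Finset.card_le_card h2
  obtain ⟨f, hfinj, hft⟩ := (Finset.all_card_le_biUnion_card_iff_exists_injective _).mp hall
  set lefts : Finset (Σ v : {x : V // x ∈ A₀}, Fin (d v.1)) :=
    univ.filter (fun p => (f p).isLeft) with hleftsdef
  set F : (Σ v : {x : V // x ∈ A₀}, Fin (d v.1)) → V × V :=
    fun p => Sum.elim (fun q : Σ v : V, Fin (d v) => (p.1.1, q.1))
      (fun _ => (p.1.1, p.1.1)) (f p) with hFdef
  have hF1 : ∀ p, (F p).1 = p.1.1 := by
    intro p
    rcases hx : f p with q | y <;> simp [hFdef, hx]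
  have hFleft : ∀ p ∈ lefts, ∃ q : Σ v : V, Fin (d v),
      f p = Sum.inl q ∧ F p = (p.1.1, q.1) ∧ G.Adj p.1.1 q.1 := by
    intro p hp
    rw [hleftsdef, Finset.mem_filter] at hp
    obtain ⟨q, hq⟩ := Sum.isLeft_iff.mp hp.2
    refine ⟨q, hq, by simp [hFdef, hq], ?_⟩
    have hmem := hft p
    rw [hq] at hmem
    rcases Finset.mem_union.mp hmem with hm | hm
    · obtain ⟨q', hq', he⟩ := Finset.mem_image.mp hm
      obtain rfl : q' = q := Sum.inl.inj he
      exact (Finset.mem_filter.mp hq').2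
    · obtain ⟨y, _, he⟩ := Finset.mem_image.mp hm
      exact absurd he (by simp)
  have hcardι : Fintype.card (Σ v : {x : V // x ∈ A₀}, Fin (d v.1)) = ∑ v ∈ A₀, d v := by
    rw [Fintype.card_sigma]
    simp only [Fintype.card_fin]
    exact Finset.sum_coe_sort A₀ (fun v => d v)
  have hrights : (univ.filter (fun p : Σ v : {x : V // x ∈ A₀}, Fin (d v.1) =>
      ¬ (f p).isLeft)).card ≤ D := by
    have hsub : (univ.filter (fun p : Σ v : {x : V // x ∈ A₀}, Fin (d v.1) =>
        ¬ (f p).isLeft)).image f ⊆ univ.image (Sum.inr : Fin D → _) := by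
      intro a ha
      obtain ⟨p, hp, rfl⟩ := Finset.mem_image.mp ha
      rw [Finset.mem_filter] at hp
      rcases hx : f p with q | y
      · rw [hx] at hp; simp at hp
      · exact Finset.mem_image_of_mem _ (Finset.mem_univ y)
    calc (univ.filter (fun p : Σ v : {x : V // x ∈ A₀}, Fin (d v.1) => ¬ (f p).isLeft)).card
        = ((univ.filter (fun p : Σ v : {x : V // x ∈ A₀}, Fin (d v.1) =>
            ¬ (f p).isLeft)).image f).card := (Finset.card_image_of_injective _ hfinj).symm
      _ ≤ (univ.image (Sum.inr : Fin D → _)).card := Finset.card_le_card hsub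
      _ ≤ D := by
          calc (univ.image (Sum.inr : Fin D → _)).card ≤ (univ : Finset (Fin D)).card :=
            Finset.card_image_le
          _ = D := by simp
  have hsplit : lefts.card + (univ.filter (fun p : Σ v : {x : V // x ∈ A₀}, Fin (d v.1) =>
      ¬ (f p).isLeft)).card = ∑ v ∈ A₀, d v := by
    rw [hleftsdef, Finset.card_filter_add_card_filter_not, Finset.card_univ, hcardι]
  have hA0split : ∑ v ∈ A₀, d v = SD + SW := by
    rw [hSD, hSW, Finset.sum_sdiff hWmem]
  have hlefts_card : SD + SN ≤ lefts.card := by omega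
  have hreach : Reaches G lefts.card d := by
    refine ⟨lefts.val.map F, by simp, ?_, ?_⟩
    · intro p hp
      obtain ⟨p', hp', rfl⟩ := Multiset.mem_map.mp hp
      obtain ⟨q, _, hFq, hadj⟩ := hFleft p' hp'
      rw [hFq]
      exact hadj
    · intro x
      have happ : (((lefts.val.map F).map ev).sum) x = ∑ p ∈ lefts, (ev (F p)) x := by
        rw [finsupp_multiset_sum_apply, Multiset.map_map, Multiset.map_map]
        rfl
      have hev : ∀ p : V × V, (ev p) x = (if p.1 = x then 1 else 0)
          + (if p.2 = x then 1 else 0) := by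
        intro p
        simp [ev, Finsupp.single_apply]
      have hb1 : (lefts.filter (fun p => (F p).1 = x)).card ≤ d x := by
        calc (lefts.filter (fun p => (F p).1 = x)).card ≤ (Finset.range (d x)).card := by
              apply Finset.card_le_card_of_injOn (fun p => (p.2 : ℕ))
              · intro p hp
                rw [Finset.mem_coe, Finset.mem_filter] at hp
                have hx1 : p.1.1 = x := by rw [← hF1 p]; exact hp.2
                simp only [Finset.mem_coe, Finset.mem_range]
                rw [← hx1]
                exact p.2.isLt
              · rintro ⟨⟨v, hv⟩, i⟩ hp ⟨⟨w, hw⟩, j⟩ hq hij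
                rw [Finset.mem_coe, Finset.mem_filter] at hp hq
                have hvx : v = x := by
                  simpa using (hF1 ⟨⟨v, hv⟩, i⟩).symm.trans hp.2
                have hwx : w = x := by
                  simpa using (hF1 ⟨⟨w, hw⟩, j⟩).symm.trans hq.2
                subst hvx
                subst hwx
                simp only at hij
                have : i = j := Fin.ext hij
                subst this
                rfl
          _ = d x := by simp
      have hb2 : (lefts.filter (fun p => (F p).2 = x)).card ≤ d x := by
        calc (lefts.filter (fun p => (F p).2 = x)).card ≤ (Finset.range (d x)).card := by
              apply Finset.card_le_card_of_injOn
                (fun p => Sum.elim (fun q : Σ v : V, Fin (d v) => (q.2 : ℕ)) (fun _ => 0) (f p))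
              · intro p hp
                rw [Finset.mem_coe, Finset.mem_filter] at hp
                obtain ⟨q, hfq, hFq, _⟩ := hFleft p hp.1
                have hq1 : q.1 = x := by rw [← hp.2, hFq]
                simp only [Finset.mem_coe, Finset.mem_range, hfq, Sum.elim_inl]
                rw [← hq1]
                exact q.2.isLt
              · intro p hp p' hp' hval
                rw [Finset.mem_coe, Finset.mem_filter] at hp hp'
                obtain ⟨q, hfq, hFq, _⟩ := hFleft p hp.1
                obtain ⟨q', hfq', hFq', _⟩ := hFleft p' hp'.1
                simp only [hfq, hfq', Sum.elim_inl] at hval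
                have hq1 : q.1 = x := by rw [← hp.2, hFq]
                have hq1' : q'.1 = x := by rw [← hp'.2, hFq']
                have hqq : q = q' := by
                  obtain ⟨v, i⟩ := q
                  obtain ⟨v', i'⟩ := q'
                  simp only at hq1 hq1' hval
                  subst hq1
                  subst hq1'
                  have : i = i' := Fin.ext hval
                  subst this
                  rfl
                have : f p = f p' := by rw [hfq, hfq', hqq]
                exact hfinj this
          _ = d x := by simp
      rw [happ]
      calc ∑ p ∈ lefts, (ev (F p)) x
          = ∑ p ∈ lefts, ((if (F p).1 = x then 1 else 0) + if (F p).2 = x then 1 else 0) := by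
            apply Finset.sum_congr rfl
            intro p _
            exact hev (F p)
        _ = (lefts.filter (fun p => (F p).1 = x)).card
            + (lefts.filter (fun p => (F p).2 = x)).card := by
            rw [Finset.sum_add_distrib, Finset.card_filter, Finset.card_filter]
        _ ≤ d x := by
            by_cases hcx : c x = 0
            · have hempty : (lefts.filter (fun p => (F p).2 = x)).card = 0 := by
                rw [Finset.card_eq_zero, Finset.filter_eq_empty_iff]
                intro p hp
                obtain ⟨q, _, hFq, hadj⟩ := hFleft p hp
                have h1 : c p.1.1 = 0 := (Finset.mem_filter.mp p.1.2).2
                intro hqx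
                rw [hFq] at hqx
                simp only at hqx
                exact c.valid hadj (by rw [h1, hqx, hcx])
              omega
            · have hempty : (lefts.filter (fun p => (F p).1 = x)).card = 0 := by
                rw [Finset.card_eq_zero, Finset.filter_eq_empty_iff]
                intro p hp hx1
                rw [hF1 p] at hx1
                have h1 : c p.1.1 = 0 := (Finset.mem_filter.mp p.1.2).2
                rw [hx1] at h1
                exact hcx h1
              omega
  -- construct the cover
  set C : Finset V := ((A₀ \ W) ∪ NB G W) ∪ univ.filter (fun v => d v = 0) with hCdef
  have hcover : IsCover G C := by
    have key : ∀ u v : V, G.Adj u v → c u = 0 → u ∈ C ∨ v ∈ C := by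
      intro u v huv hu0
      by_cases hdu : d u = 0
      · left
        rw [hCdef]
        exact Finset.mem_union_right _ (by simp [hdu])
      by_cases huW : u ∈ W
      · right
        rw [hCdef]
        refine Finset.mem_union_left _ (Finset.mem_union_right _ ?_)
        simp only [NB, Finset.mem_filter, Finset.mem_univ, true_and]
        exact ⟨u, huW, huv⟩
      · left
        rw [hCdef]
        refine Finset.mem_union_left _ (Finset.mem_union_left _ ?_)
        rw [Finset.mem_sdiff]
        exact ⟨by simp [hA₀def, hu0], huW⟩
    intro u v huv
    have hne : c u ≠ c v := c.valid huv
    have h01 : c u = 0 ∨ c v = 0 := by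
      rcases (by decide : ∀ i j : Fin 2, i ≠ j → i = 0 ∨ j = 0) (c u) (c v) hne with h | h
      · exact Or.inl h
      · exact Or.inr h
    rcases h01 with h0 | h0
    · exact key u v huv h0
    · rcases key v u huv.symm h0 with hm | hm
      · exact Or.inr hm
      · exact Or.inl hm
  have hwtC : wt C d ≤ SD + SN := by
    unfold wt
    calc ∑ v ∈ C, d v
        ≤ (∑ v ∈ (A₀ \ W) ∪ NB G W, d v) + ∑ v ∈ univ.filter (fun v => d v = 0), d v := by
          rw [hCdef]; exact sum_union_le' _ _ _
      _ = ∑ v ∈ (A₀ \ W) ∪ NB G W, d v := by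
          have : ∑ v ∈ univ.filter (fun v => d v = 0), d v = 0 :=
            Finset.sum_eq_zero (fun v hv => (Finset.mem_filter.mp hv).2)
          omega
      _ ≤ SD + SN := sum_union_le' _ _ _
  refine ⟨C, hcover, ?_⟩
  by_contra hlt
  push_neg at hlt
  exact h (reaches_mono (le_trans hlt (le_trans hwtC hlefts_card)) hreach)

end Koenig

section Poly

variable (k : Type*) [Field k] (G)

noncomputable def edgeIdeal' : Ideal (MvPolynomial V k) :=
  Ideal.span {p | ∃ u v : V, G.Adj u v ∧ p = X u * X v}

/-- the set of exponents that are sums of exactly `r` edges -/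
def ESet (r : ℕ) : Set (V →₀ ℕ) :=
  {s | ∃ l : Multiset (V × V), Multiset.card l = r ∧ (∀ p ∈ l, G.Adj p.1 p.2) ∧
    s = (l.map ev).sum}

lemma X_mul_X (u v : V) : (X u * X v : MvPolynomial V k) = monomial (ev (u, v)) 1 := by
  rw [X, X, monomial_mul, one_mul]; rfl

lemma edgeIdeal'_eq :
    edgeIdeal' G k = Ideal.span ((fun s => monomial s (1 : k)) '' ESet G 1) := by
  unfold edgeIdeal'
  congr 1
  ext p
  constructor
  · rintro ⟨u, v, huv, rfl⟩
    refine ⟨ev (u, v), ⟨{(u, v)}, by simp, by simp [huv], by simp⟩, (X_mul_X k u v).symm⟩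
  · rintro ⟨s, ⟨l, hcard, hadj, rfl⟩, rfl⟩
    obtain ⟨p, rfl⟩ := Multiset.card_eq_one.mp hcard
    refine ⟨p.1, p.2, hadj p (Multiset.mem_singleton_self p), ?_⟩
    rw [X_mul_X]
    simp

lemma edgeIdeal'_pow (r : ℕ) :
    edgeIdeal' G k ^ r = Ideal.span ((fun s => monomial s (1 : k)) '' ESet G r) := by
  induction r with
  | zero =>
    rw [pow_zero, Ideal.one_eq_top, eq_comm, Ideal.eq_top_iff_one]
    apply Ideal.subset_span
    refine ⟨0, ⟨0, by simp, by simp, by simp⟩, by simp⟩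
  | succ r ih =>
    rw [pow_succ, ih, edgeIdeal'_eq, Ideal.span_mul_span']
    congr 1
    ext p
    constructor
    · rintro ⟨x, ⟨s, ⟨l, hcard, hadj, rfl⟩, rfl⟩, y, ⟨s', ⟨l', hcard', hadj', rfl⟩, rfl⟩, rfl⟩
      refine ⟨(l.map ev).sum + (l'.map ev).sum,
        ⟨l + l', by simp [hcard, hcard'], ?_, by simp⟩, ?_⟩
      · intro q hq
        rcases Multiset.mem_add.mp hq with h | h
        · exact hadj q h
        · exact hadj' q h
      · simp only [monomial_mul, one_mul]
    · rintro ⟨s, ⟨l, hcard, hadj, rfl⟩, rfl⟩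
      have hne : l ≠ 0 := by intro h; simp [h] at hcard
      obtain ⟨q, hq⟩ := Multiset.exists_mem_of_ne_zero hne
      have hl : l = q ::ₘ l.erase q := (Multiset.cons_erase hq).symm
      have hcard' : Multiset.card (l.erase q) = r := by
        rw [hl, Multiset.card_cons] at hcard; omega
      refine ⟨monomial ((l.erase q).map ev).sum 1,
        ⟨((l.erase q).map ev).sum,
          ⟨l.erase q, hcard', fun p hp => hadj p (Multiset.mem_of_mem_erase hp), rfl⟩, rfl⟩,
        monomial (ev q) 1,
        ⟨ev q, ⟨{q}, by simp, by simp [hadj q hq], by simp⟩, rfl⟩, ?_⟩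
      simp only [monomial_mul, one_mul]
      congr 1
      conv_rhs => rw [hl]
      simp [add_comm]

lemma mem_pow_iff (r : ℕ) (p : MvPolynomial V k) :
    p ∈ edgeIdeal' G k ^ r ↔ ∀ w ∈ p.support, Reaches G r w := by
  rw [edgeIdeal'_pow, mem_ideal_span_monomial_image]
  constructor
  · intro h w hw
    obtain ⟨s, ⟨l, hcard, hadj, rfl⟩, hle⟩ := h w hw
    exact ⟨l, hcard, hadj, hle⟩
  · intro h w hw
    obtain ⟨l, hcard, hadj, hle⟩ := h w hw
    exact ⟨(l.map ev).sum, ⟨l, hcard, hadj, rfl⟩, hle⟩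

end Poly

section Main

variable {k : Type*} [Field k]

lemma key_lemma (c : G.Coloring (Fin 2)) (b0 : V) (r : ℕ)
    (g : MvPolynomial V k)
    (hfg : (X b0 + ∑ v ∈ G.neighborFinset b0, X v) * g ∈ edgeIdeal' G k ^ r) :
    g ∈ edgeIdeal' G k ^ r := by
  classical
  set S' : Finset V := insert b0 (G.neighborFinset b0) with hS'
  have hb0N : b0 ∉ G.neighborFinset b0 := by simp
  have hf : (X b0 + ∑ v ∈ G.neighborFinset b0, X v : MvPolynomial V k) = ∑ v ∈ S', X v := by
    rw [hS', Finset.sum_insert hb0N]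
  rw [hf] at hfg
  set A : Finset (V →₀ ℕ) := g.support.filter (fun w => ¬ Reaches G r w) with hA
  set h₁ : MvPolynomial V k := ∑ w ∈ A, monomial w (coeff w g) with hh₁
  set g₂ : MvPolynomial V k :=
    ∑ w ∈ g.support.filter (fun w => Reaches G r w), monomial w (coeff w g) with hg₂
  have hgsplit : g = g₂ + h₁ := by
    conv_lhs => rw [g.as_sum]
    rw [hg₂, hh₁, hA, Finset.sum_filter_add_sum_filter_not]
  have hcoeffh₁ : ∀ w, coeff w h₁ = if w ∈ A then coeff w g else 0 := by
    intro w
    rw [hh₁, coeff_sum]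
    simp_rw [coeff_monomial]
    exact Finset.sum_ite_eq' A w (fun w' => coeff w' g)
  have hcoeffg₂ : ∀ w, coeff w g₂
      = if w ∈ g.support.filter (fun w => Reaches G r w) then coeff w g else 0 := by
    intro w
    rw [hg₂, coeff_sum]
    simp_rw [coeff_monomial]
    exact Finset.sum_ite_eq' _ w (fun w' => coeff w' g)
  have hg₂mem : g₂ ∈ edgeIdeal' G k ^ r := by
    rw [mem_pow_iff]
    intro w hw
    rw [mem_support_iff] at hw
    by_contra hc
    apply hw
    rw [hcoeffg₂ w, if_neg]
    intro hmem
    exact hc (Finset.mem_filter.mp hmem).2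
  have hfh₁ : (∑ v ∈ S', X v : MvPolynomial V k) * h₁ ∈ edgeIdeal' G k ^ r := by
    have heq : (∑ v ∈ S', X v : MvPolynomial V k) * h₁
        = (∑ v ∈ S', X v) * g - (∑ v ∈ S', X v) * g₂ := by
      rw [hgsplit]; ring
    rw [heq]
    exact Submodule.sub_mem _ hfg (Ideal.mul_mem_left _ _ hg₂mem)
  by_cases hzero : h₁ = 0
  · rw [hgsplit, hzero, add_zero]; exact hg₂mem
  exfalso
  obtain ⟨d₀, hd₀⟩ := ne_zero_iff.mp hzero
  have hd₀A : d₀ ∈ A := by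
    by_contra hc
    rw [hcoeffh₁ d₀, if_neg hc] at hd₀
    exact hd₀ rfl
  have hd₀nr : ¬ Reaches G r d₀ := (Finset.mem_filter.mp hd₀A).2
  obtain ⟨C, hcov, hwtd₀, v₀, hv₀S, hv₀C⟩ :
      ∃ C : Finset V, IsCover G C ∧ wt C d₀ < r ∧ ∃ v₀ ∈ S', v₀ ∉ C := by
    obtain ⟨C₀, hcov₀, hwt₀⟩ := koenig c d₀ r hd₀nr
    by_cases hb0C : b0 ∈ C₀
    · by_cases hNC : ∃ u ∈ G.neighborFinset b0, u ∉ C₀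
      · obtain ⟨u, huN, huC⟩ := hNC
        exact ⟨C₀, hcov₀, hwt₀, u, by rw [hS']; exact Finset.mem_insert_of_mem huN, huC⟩
      · push_neg at hNC
        refine ⟨C₀.erase b0, ?_, ?_, b0, by rw [hS']; exact Finset.mem_insert_self _ _,
          Finset.notMem_erase _ _⟩
        · intro u v huv
          rcases hcov₀ u v huv with hm | hm
          · by_cases hub : u = b0
            · right
              have huv' : G.Adj b0 v := hub ▸ huv
              have hvN : v ∈ G.neighborFinset b0 := by
                rw [SimpleGraph.mem_neighborFinset]; exact huv'
              refine Finset.mem_erase.mpr ⟨?_, hNC v hvN⟩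
              rintro rfl
              exact G.irrefl huv'
            · exact Or.inl (Finset.mem_erase.mpr ⟨hub, hm⟩)
          · by_cases hvb : v = b0
            · left
              have huv' : G.Adj b0 u := (hvb ▸ huv).symm
              have huN : u ∈ G.neighborFinset b0 := by
                rw [SimpleGraph.mem_neighborFinset]; exact huv'
              refine Finset.mem_erase.mpr ⟨?_, hNC u huN⟩
              rintro rfl
              exact G.irrefl huv'
            · exact Or.inr (Finset.mem_erase.mpr ⟨hvb, hm⟩)
        · calc wt (C₀.erase b0) d₀ ≤ wt C₀ d₀ :=
              Finset.sum_le_sum_of_subset (Finset.erase_subset _ _)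
            _ < r := hwt₀
    · exact ⟨C₀, hcov₀, hwt₀, b0, by rw [hS']; exact Finset.mem_insert_self _ _, hb0C⟩
  set B : Finset (V →₀ ℕ) := h₁.support.filter (fun w => wt C w < r) with hB
  have hd₀B : d₀ ∈ B := Finset.mem_filter.mpr ⟨mem_support_iff.mpr hd₀, hwtd₀⟩
  obtain ⟨a₁, ha₁B, ha₁min⟩ := B.exists_min_image (wt C) ⟨d₀, hd₀B⟩
  set B' : Finset (V →₀ ℕ) := B.filter (fun w => wt C w = wt C a₁) with hB'
  obtain ⟨a, haB', hamax⟩ := B'.exists_max_image (fun w => w v₀)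
    ⟨a₁, Finset.mem_filter.mpr ⟨ha₁B, rfl⟩⟩
  have haB : a ∈ B := (Finset.mem_filter.mp haB').1
  have ham : wt C a = wt C a₁ := (Finset.mem_filter.mp haB').2
  have hasupp : a ∈ h₁.support := (Finset.mem_filter.mp haB).1
  have hmr : wt C a₁ < r := lt_of_le_of_lt (ha₁min d₀ hd₀B) hwtd₀
  set w : V →₀ ℕ := a + Finsupp.single v₀ 1 with hw
  have hwtw : wt C w = wt C a₁ := by
    rw [hw, wt_add, wt_single, if_neg hv₀C, add_zero, ham]
  have hwnr : ¬ Reaches G r w := by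
    intro hre
    have := le_wt_of_reaches hcov hre
    omega
  have hcw : coeff w ((∑ v ∈ S', X v) * h₁) = 0 := by
    rw [mem_pow_iff] at hfh₁
    by_contra hc
    exact hwnr (hfh₁ w (mem_support_iff.mpr hc))
  rw [Finset.sum_mul, coeff_sum] at hcw
  have hv₀supp : v₀ ∈ w.support := by
    rw [Finsupp.mem_support_iff, hw]
    simp
  have hwv₀ : w - Finsupp.single v₀ 1 = a := by
    rw [hw]
    ext z
    simp [Finsupp.tsub_apply]
  have hv₀term : coeff w (X v₀ * h₁) ≠ 0 := by
    rw [coeff_X_mul', if_pos hv₀supp, hwv₀]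
    exact mem_support_iff.mp hasupp
  obtain ⟨u, huS, hune, huterm⟩ : ∃ u ∈ S', u ≠ v₀ ∧ coeff w (X u * h₁) ≠ 0 := by
    by_contra hc
    push_neg at hc
    have heq : ∑ v ∈ S', coeff w (X v * h₁) = coeff w (X v₀ * h₁) :=
      Finset.sum_eq_single_of_mem v₀ hv₀S (fun u hu hne => hc u hu hne)
    rw [heq] at hcw
    exact hv₀term hcw
  rw [coeff_X_mul'] at huterm
  by_cases husupp : u ∈ w.support
  swap
  · rw [if_neg husupp] at huterm
    exact huterm rfl
  rw [if_pos husupp] at huterm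
  set b : V →₀ ℕ := w - Finsupp.single u 1 with hbdef
  have hbsupp : b ∈ h₁.support := mem_support_iff.mpr huterm
  have hble : Finsupp.single u 1 ≤ w := by
    rw [Finsupp.single_le_iff]
    rw [Finsupp.mem_support_iff] at husupp
    omega
  have hbw : b + Finsupp.single u 1 = w := tsub_add_cancel_of_le hble
  have hwtb : wt C b + (if u ∈ C then 1 else 0) = wt C a₁ := by
    rw [← hwtw, ← hbw, wt_add, wt_single]
  by_cases huC : u ∈ C
  · rw [if_pos huC] at hwtb
    have hbB : b ∈ B := Finset.mem_filter.mpr ⟨hbsupp, by omega⟩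
    have := ha₁min b hbB
    omega
  · rw [if_neg huC] at hwtb
    have hbB' : b ∈ B' := Finset.mem_filter.mpr
      ⟨Finset.mem_filter.mpr ⟨hbsupp, by omega⟩, by omega⟩
    have hbv₀ : b v₀ = a v₀ + 1 := by
      rw [hbdef, Finsupp.tsub_apply, hw, Finsupp.add_apply, Finsupp.single_eq_same,
        Finsupp.single_apply, if_neg hune]
      omega
    have := hamax b hbB'
    simp only [hbv₀] at this
    omega

end Main

end Stmt0Aux

/-- Let `G` be a finite simple bipartite graph with edge ideal
`I = I(G)`.  Let `b₀` be a vertex and `f = x_{b₀} + ∑_{v ∈ N(b₀)} x_v`.  Then for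
every `r ≥ 1`, `f` is regular on `R / I^r` (multiplication by `f` is injective). -/
theorem stmt0 {V k : Type*} [Fintype V] [DecidableEq V] [Field k]
    (G : SimpleGraph V) [DecidableRel G.Adj]
    (hbip : G.Colorable 2)
    (b0 : V)
    (f : MvPolynomial V k)
    (hf : f = X b0 + ∑ v ∈ G.neighborFinset b0, X v)
    (r : ℕ) (hr : 1 ≤ r) :
    IsSMulRegular ((MvPolynomial V k) ⧸ (edgeIdeal k G ^ r)) f := by
  classical
  have hJ : edgeIdeal k G = Stmt0Aux.edgeIdeal' G k := rfl
  intro x y hxy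
  obtain ⟨gx, rfl⟩ := Ideal.Quotient.mk_surjective x
  obtain ⟨gy, rfl⟩ := Ideal.Quotient.mk_surjective y
  have hsmul : ∀ g : MvPolynomial V k,
      f • (Ideal.Quotient.mk (edgeIdeal k G ^ r) g) = Ideal.Quotient.mk _ (f * g) := by
    intro g
    rfl
  simp only at hxy
  rw [hsmul gx, hsmul gy, Ideal.Quotient.eq] at hxy
  rw [Ideal.Quotient.eq]
  have hmul : f * gx - f * gy = f * (gx - gy) := by ring
  rw [hmul] at hxy
  rw [hf] at hxy
  rw [hJ] at hxy ⊢
  exact Stmt0Aux.key_lemma hbip.some b0 r (gx - gy) hxy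
end

section
/- Let H be a finite simple hypergraph on vertex set V with edge ideal I = I(H) ⊆ R, and let b_0, …, b_t be distinct vertices of H. Suppose that for every subset C ⊆ V such that the hypergraph H_C has a 2-saturating set, the set {b_0, …, b_t} is not contained in C. Then f = x_{b_0} + x_{b_1} + ⋯ + x_{b_t} is regular on R/I and regular on R/I². -/
set_option maxHeartbeats 1000000

open MvPolynomial

variable {V : Type*} [DecidableEq V]

/-- A subset `U` of the vertices is *decomposable* with respect to a family of edges `E`
if `U` can be partitioned into two subsets each of which contains an edge. -/
def Decomposable (E : Set (Finset V)) (U : Finset V) : Prop :=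
  ∃ U₁ U₂ : Finset V, U₁ ∪ U₂ = U ∧ Disjoint U₁ U₂ ∧
    (∃ e ∈ E, e ⊆ U₁) ∧ (∃ e ∈ E, e ⊆ U₂)

/-- The edge family of the hypergraph `H(i)` obtained by deleting the vertex `i`
from every edge (possibly creating the empty edge). -/
def deleteVertex (E : Set (Finset V)) (i : V) : Set (Finset V) :=
  (fun e => e.erase i) '' E

/-- `U` is a *2-saturating* set of the hypergraph with vertex set `Vs` and edge family
`E` if `U ⊆ Vs`, `U` is indecomposable, and `U \ {i}` is decomposable in `H(i)` for
every vertex `i ∈ Vs`. -/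
def TwoSaturating (Vs : Finset V) (E : Set (Finset V)) (U : Finset V) : Prop :=
  U ⊆ Vs ∧ ¬ Decomposable E U ∧ ∀ i ∈ Vs, Decomposable (deleteVertex E i) (U.erase i)

/-- The edge family of the restricted hypergraph `H_C`, whose edges are `e ∩ C`. -/
def restrictEdges (E : Set (Finset V)) (C : Finset V) : Set (Finset V) :=
  (fun e => e ∩ C) '' E

/-- The edge ideal of a hypergraph with edge family `E`. -/
noncomputable def hEdgeIdeal (k : Type*) [Field k] (E : Set (Finset V)) :
    Ideal (MvPolynomial V k) :=
  Ideal.span {p | ∃ e ∈ E, p = ∏ v ∈ e, X v}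

section AuxIndicator
open Finsupp
noncomputable def eInd (e : Finset V) : V →₀ ℕ := ∑ v ∈ e, Finsupp.single v 1

lemma eInd_apply (e : Finset V) (w : V) : eInd e w = if w ∈ e then 1 else 0 := by
  classical
  induction e using Finset.induction with
  | empty => simp [eInd]
  | insert a s hx ih =>
    simp [eInd, Finset.sum_insert hx] at ih ⊢
    rw [ih, Finsupp.single_apply]
    by_cases h : a = w <;> by_cases h2 : w ∈ s <;> simp [h, h2, eq_comm] <;> [skip; skip] <;> first | (subst h; exact absurd h2 hx) | simp [Ne.symm h]

lemma eInd_support (e : Finset V) : (eInd e).support = e := by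
  ext w; simp [Finsupp.mem_support_iff, eInd_apply]

lemma prod_X_eq (k : Type*) [CommSemiring k] (e : Finset V) :
    (∏ v ∈ e, X v : MvPolynomial V k) = monomial (eInd e) 1 := by
  rw [← prod_X_pow_eq_monomial]
  rw [show (eInd e).support = e from eInd_support e]
  exact Finset.prod_congr rfl fun v hv => by rw [eInd_apply, if_pos hv, pow_one]

end AuxIndicator

section AuxIdeal
open Finsupp
lemma hEdgeIdeal_eq (k : Type*) [Field k] (E : Set (Finset V)) :
    Ideal.span {p : MvPolynomial V k | ∃ e ∈ E, p = ∏ v ∈ e, X v}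
      = Ideal.span ((fun s => monomial s (1:k)) '' (eInd '' E)) := by
  congr 1
  ext p
  simp only [Set.mem_setOf_eq, Set.image_image, Set.mem_image]
  constructor
  · rintro ⟨e, he, rfl⟩; exact ⟨e, he, (prod_X_eq k e).symm⟩
  · rintro ⟨e, he, rfl⟩; exact ⟨e, he, (prod_X_eq k e).symm⟩ 

lemma hEdgeIdeal_sq_eq (k : Type*) [Field k] (E : Set (Finset V)) :
    (Ideal.span {p : MvPolynomial V k | ∃ e ∈ E, p = ∏ v ∈ e, X v}) ^ 2
      = Ideal.span ((fun s => monomial s (1:k)) ''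
          {s | ∃ e₁ ∈ E, ∃ e₂ ∈ E, s = eInd e₁ + eInd e₂}) := by
  rw [hEdgeIdeal_eq, sq, Ideal.span_mul_span']
  congr 1
  ext p
  simp only [Set.mem_mul, Set.mem_image, Set.mem_setOf_eq]
  constructor
  · rintro ⟨q, ⟨s, ⟨e₁, he₁, rfl⟩, rfl⟩, r, ⟨s', ⟨e₂, he₂, rfl⟩, rfl⟩, rfl⟩
    exact ⟨eInd e₁ + eInd e₂, ⟨e₁, he₁, e₂, he₂, rfl⟩, by rw [monomial_mul, one_mul]⟩
  · rintro ⟨s, ⟨e₁, he₁, e₂, he₂, rfl⟩, rfl⟩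
    exact ⟨monomial (eInd e₁) 1, ⟨eInd e₁, ⟨e₁, he₁, rfl⟩, rfl⟩,
      monomial (eInd e₂) 1, ⟨eInd e₂, ⟨e₂, he₂, rfl⟩, rfl⟩, by rw [monomial_mul, one_mul]⟩

end AuxIdeal

section Restrict
variable {k : Type*} [CommSemiring k]

noncomputable def restr (s : Finset (V →₀ ℕ)) (g : MvPolynomial V k) : MvPolynomial V k :=
  ∑ m ∈ s, monomial m (coeff m g)

lemma coeff_restr (s : Finset (V →₀ ℕ)) (g : MvPolynomial V k) (m : V →₀ ℕ) :
    coeff m (restr s g) = if m ∈ s then coeff m g else 0 := by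
  rw [restr, coeff_sum]
  simp only [coeff_monomial]
  exact Finset.sum_ite_eq' s m (fun m' => coeff m' g)

lemma support_restr (s : Finset (V →₀ ℕ)) (g : MvPolynomial V k) (hs : s ⊆ g.support) :
    (restr s g).support = s := by
  ext m
  rw [MvPolynomial.mem_support_iff, coeff_restr]
  constructor
  · intro h; by_contra hm; simp [hm] at h
  · intro hm; simpa [hm] using MvPolynomial.mem_support_iff.mp (hs hm)

lemma restr_add_restr_compl (p : (V →₀ ℕ) → Prop) [DecidablePred p] (g : MvPolynomial V k) :
    restr (g.support.filter p) g + restr (g.support.filter (fun m => ¬ p m)) g = g := by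
  ext m
  rw [coeff_add, coeff_restr, coeff_restr]
  by_cases hm : m ∈ g.support
  · by_cases h : p m <;> simp [hm, h]
  · have hm' := MvPolynomial.notMem_support_iff.mp hm
    simp [hm, hm']

end Restrict

section Core
variable {k : Type*} [Field k] {t : ℕ} {b : Fin (t + 1) → V}

lemma core_zero (hb : Function.Injective b)
    (J : Ideal (MvPolynomial V k)) (M : Set (V →₀ ℕ))
    (hJM : ∀ p : MvPolynomial V k, p ∈ J ↔ ∀ m ∈ p.support, m ∈ M)
    (hw : ¬ ∃ w : V →₀ ℕ, w ∉ M ∧ ∀ i, w + Finsupp.single (b i) 1 ∈ M) :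
    ∀ (n : ℕ) (g : MvPolynomial V k), g.support.card ≤ n →
      (∀ m ∈ g.support, m ∉ M) → (∑ i, X (b i)) * g ∈ J → g = 0 := by
  classical
  intro n
  induction n with
  | zero =>
    intro g hcard _ _
    rw [Nat.le_zero, Finset.card_eq_zero] at hcard
    exact MvPolynomial.support_eq_empty.mp hcard
  | succ n ih =>
    intro g hcard hout hfg
    by_contra hg0
    -- the sets sᵢ
    set f : MvPolynomial V k := ∑ i, X (b i) with hfdef
    have hstep : ∀ i : Fin (t + 1),
        g.support.filter (fun m => m + Finsupp.single (b i) 1 ∈ M) = ∅ ∨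
        g.support.filter (fun m => m + Finsupp.single (b i) 1 ∈ M) = g.support := by
      intro i
      set si := g.support.filter (fun m => m + Finsupp.single (b i) 1 ∈ M) with hsi
      by_cases hne : si = ∅
      · exact Or.inl hne
      right
      -- split g
      set gB := restr (g.support.filter (fun m => m + Finsupp.single (b i) 1 ∈ M)) g with hgB
      set gA := restr (g.support.filter (fun m => ¬ (m + Finsupp.single (b i) 1 ∈ M))) g with hgA
      have hsplit : gB + gA = g := restr_add_restr_compl _ g
      have hsetA : g.support.filter (fun m => ¬ (m + Finsupp.single (b i) 1 ∈ M))
          = g.support \ si := by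
        rw [hsi]; exact Finset.filter_not _ _
      have hsuppA : gA.support = g.support \ si := by
        rw [hgA, support_restr _ _ (Finset.filter_subset _ _), hsetA]
      have hsuppB : gB.support = si := by
        rw [hgB, support_restr _ _ (Finset.filter_subset _ _), hsi]
      -- X (b i) * gB ∈ J
      have hBJ : X (b i) * gB ∈ J := by
        rw [hJM]
        intro m hm
        rw [support_X_mul, Finset.mem_map] at hm
        obtain ⟨m', hm', rfl⟩ := hm
        rw [hsuppB, hsi, Finset.mem_filter] at hm'
        simpa [addLeftEmbedding_apply, add_comm] using hm'.2
      -- f * (X (b i) * gA) ∈ J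
      have hAJ : f * (X (b i) * gA) ∈ J := by
        have h1 : X (b i) * (f * g) ∈ J := Ideal.mul_mem_left J _ hfg
        have h2 : f * (X (b i) * gB) ∈ J := Ideal.mul_mem_left J _ hBJ
        have heq : f * (X (b i) * gA) = X (b i) * (f * g) - f * (X (b i) * gB) := by
          rw [← hsplit]; ring
        rw [heq]; exact Ideal.sub_mem J h1 h2
      have houtA : ∀ m ∈ (X (b i) * gA).support, m ∉ M := by
        intro m hm
        rw [support_X_mul, Finset.mem_map] at hm
        obtain ⟨m', hm', rfl⟩ := hm
        rw [hsuppA, Finset.mem_sdiff, hsi] at hm'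
        have := hm'.1
        have h2 := hm'.2
        simp only [Finset.mem_filter, not_and] at h2
        simpa [addLeftEmbedding_apply, add_comm] using h2 this
      have hcardA : (X (b i) * gA).support.card ≤ n := by
        rw [support_X_mul, Finset.card_map, hsuppA]
        have h1 : si.Nonempty := Finset.nonempty_of_ne_empty hne
        have h2 : si ⊆ g.support := by rw [hsi]; exact Finset.filter_subset _ _
        have : (g.support \ si).card < g.support.card := by
          apply Finset.card_lt_card
          rw [Finset.ssubset_iff_of_subset (Finset.sdiff_subset)]
          obtain ⟨x, hx⟩ := h1
          exact ⟨x, h2 hx, by simp [Finset.mem_sdiff, hx]⟩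
        omega
      have hA0 : X (b i) * gA = 0 := ih _ hcardA houtA hAJ
      have hgA0 : gA = 0 := by
        rcases mul_eq_zero.mp hA0 with h | h
        · exact absurd h (X_ne_zero _)
        · exact h
      have : g.support \ si = ∅ := by rw [← hsuppA, hgA0, MvPolynomial.support_zero]
      exact Finset.Subset.antisymm (Finset.filter_subset _ _)
        (Finset.sdiff_eq_empty_iff_subset.mp this)
    -- index split
    set I1 := (Finset.univ : Finset (Fin (t + 1))).filter (fun i =>
      g.support.filter (fun m => m + Finsupp.single (b i) 1 ∈ M) = g.support) with hI1
    by_cases hI1e : I1 = Finset.univ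
    · -- every i is full : witness
      obtain ⟨m0, hm0⟩ := MvPolynomial.support_nonempty.mpr hg0
      refine hw ⟨m0, hout m0 hm0, fun i => ?_⟩
      have hi : i ∈ I1 := hI1e ▸ Finset.mem_univ i
      rw [hI1, Finset.mem_filter] at hi
      have : m0 ∈ g.support.filter (fun m => m + Finsupp.single (b i) 1 ∈ M) := by
        rw [hi.2]; exact hm0
      exact (Finset.mem_filter.mp this).2
    · -- some i is empty
      set I0 := Finset.univ \ I1 with hI0d
      have hI0ne : I0.Nonempty := by
        rw [hI0d]
        rcases Finset.eq_empty_or_nonempty (Finset.univ \ I1) with h | h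
        · exact absurd (Finset.Subset.antisymm (Finset.subset_univ I1)
            (Finset.sdiff_eq_empty_iff_subset.mp h)) hI1e
        · exact h
      have hI0empty : ∀ i ∈ I0, ∀ m ∈ g.support, m + Finsupp.single (b i) 1 ∉ M := by
        intro i hi m hm
        rw [hI0d, Finset.mem_sdiff, hI1, Finset.mem_filter] at hi
        have hne : ¬ (g.support.filter (fun m => m + Finsupp.single (b i) 1 ∈ M) = g.support) := by
          intro h; exact hi.2 ⟨Finset.mem_univ i, h⟩
        have hempty : g.support.filter (fun m => m + Finsupp.single (b i) 1 ∈ M) = ∅ :=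
          (hstep i).resolve_right hne
        intro hmem
        have : m ∈ g.support.filter (fun m => m + Finsupp.single (b i) 1 ∈ M) :=
          Finset.mem_filter.mpr ⟨hm, hmem⟩
        rw [hempty] at this
        exact absurd this (Finset.notMem_empty m)
      set f1 : MvPolynomial V k := ∑ i ∈ I1, X (b i) with hf1
      set f0 : MvPolynomial V k := ∑ i ∈ I0, X (b i) with hf0
      have hff : f = f1 + f0 := by
        rw [hfdef, hf1, hf0, hI0d, ← Finset.sum_sdiff (Finset.subset_univ I1), add_comm]
      have hf1J : f1 * g ∈ J := by
        rw [hf1, Finset.sum_mul]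
        refine Ideal.sum_mem J fun i hi => ?_
        rw [hJM]
        intro m hm
        rw [support_X_mul, Finset.mem_map] at hm
        obtain ⟨m', hm', rfl⟩ := hm
        rw [hI1, Finset.mem_filter] at hi
        have : m' ∈ g.support.filter (fun m => m + Finsupp.single (b i) 1 ∈ M) := by
          rw [hi.2]; exact hm'
        have := (Finset.mem_filter.mp this).2
        simpa [addLeftEmbedding_apply, add_comm] using this
      have hf0J : f0 * g ∈ J := by
        have : f0 * g = f * g - f1 * g := by rw [hff]; ring
        rw [this]; exact Ideal.sub_mem J hfg hf1J
      have hsupp0 : ∀ m ∈ (f0 * g).support, m ∉ M := by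
        intro m hm
        have hsub := MvPolynomial.support_mul f0 g hm
        rw [Finset.mem_add] at hsub
        obtain ⟨a, ha, m', hm', rfl⟩ := hsub
        have : a ∈ I0.biUnion (fun i => (X (b i) : MvPolynomial V k).support) :=
          MvPolynomial.support_sum ha
        rw [Finset.mem_biUnion] at this
        obtain ⟨i, hi, hai⟩ := this
        rw [MvPolynomial.support_X, Finset.mem_singleton] at hai
        subst hai
        rw [add_comm]
        exact hI0empty i hi m' hm'
      have hzero : f0 * g = 0 := by
        have : (f0 * g).support = ∅ := by
          rw [Finset.eq_empty_iff_forall_notMem]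
          intro m hm
          exact hsupp0 m hm ((hJM (f0 * g)).mp hf0J m hm)
        exact MvPolynomial.support_eq_empty.mp this
      rcases mul_eq_zero.mp hzero with h | h
      · -- f0 = 0 impossible
        obtain ⟨i0, hi0⟩ := hI0ne
        have hc : coeff (Finsupp.single (b i0) 1) f0 = 1 := by
          rw [hf0, MvPolynomial.coeff_sum]
          have : ∀ i ∈ I0, coeff (Finsupp.single (b i0) 1) (X (b i) : MvPolynomial V k)
              = if i = i0 then 1 else 0 := by
            intro i _
            rw [MvPolynomial.coeff_X']
            congr 1
            simp only [eq_iff_iff]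
            constructor
            · intro hh
              exact hb (by
                have := Finsupp.single_left_injective (α := V) (one_ne_zero (α := ℕ))
                exact (Finsupp.single_left_inj (one_ne_zero (α := ℕ))).mp hh)
            · rintro rfl; rfl
          rw [Finset.sum_congr rfl this, Finset.sum_ite_eq' I0 i0 (fun _ => (1:k))]
          simp [hi0]
        rw [h] at hc
        simp at hc
      · exact absurd h hg0

lemma colon_eq (hb : Function.Injective b)
    (J : Ideal (MvPolynomial V k)) (M : Set (V →₀ ℕ))
    (hJM : ∀ p : MvPolynomial V k, p ∈ J ↔ ∀ m ∈ p.support, m ∈ M)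
    (hw : ¬ ∃ w : V →₀ ℕ, w ∉ M ∧ ∀ i, w + Finsupp.single (b i) 1 ∈ M) :
    ∀ g : MvPolynomial V k, (∑ i, X (b i)) * g ∈ J → g ∈ J := by
  classical
  intro g hfg
  set gIn := restr (g.support.filter (fun m => m ∈ M)) g with hgIn
  set gOut := restr (g.support.filter (fun m => ¬ m ∈ M)) g with hgOut
  have hsplit : gIn + gOut = g := restr_add_restr_compl _ g
  have hInJ : gIn ∈ J := by
    rw [hJM]
    intro m hm
    rw [hgIn, support_restr _ _ (Finset.filter_subset _ _), Finset.mem_filter] at hm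
    exact hm.2
  have hOutJ : (∑ i, X (b i)) * gOut ∈ J := by
    have : (∑ i, X (b i)) * gOut = (∑ i, X (b i)) * g - (∑ i, X (b i)) * gIn := by
      rw [← hsplit]; ring
    rw [this]
    exact Ideal.sub_mem J hfg (Ideal.mul_mem_left J _ hInJ)
  have hout : ∀ m ∈ gOut.support, m ∉ M := by
    intro m hm
    rw [hgOut, support_restr _ _ (Finset.filter_subset _ _), Finset.mem_filter] at hm
    exact hm.2
  have h0 : gOut = 0 :=
    core_zero hb J M hJM hw gOut.support.card gOut le_rfl hout hOutJ
  rw [← hsplit, h0, add_zero]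
  exact hInJ

end Core

section Quot
variable {k : Type*} [Field k]

lemma reg_of_colon {J : Ideal (MvPolynomial V k)} {f : MvPolynomial V k}
    (h : ∀ g : MvPolynomial V k, f * g ∈ J → g ∈ J) :
    IsSMulRegular ((MvPolynomial V k) ⧸ J) f := by
  intro x y hxy
  obtain ⟨a, rfl⟩ := Ideal.Quotient.mk_surjective x
  obtain ⟨c, rfl⟩ := Ideal.Quotient.mk_surjective y
  have hs : ∀ r : MvPolynomial V k, f • (Ideal.Quotient.mk J r) = Ideal.Quotient.mk J (f * r) := by
    intro r
    rfl
  simp only at hxy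
  rw [hs, hs, Ideal.Quotient.eq] at hxy
  rw [Ideal.Quotient.eq]
  have : f * a - f * c = f * (a - c) := by ring
  rw [this] at hxy
  exact h _ hxy

end Quot

lemma dec_iff (E' : Set (Finset V)) (U : Finset V) :
    Decomposable E' U ↔ ∃ d₁ ∈ E', ∃ d₂ ∈ E', d₁ ∪ d₂ ⊆ U ∧ Disjoint d₁ d₂ := by
  constructor
  · rintro ⟨U₁, U₂, hU, hdisj, ⟨e₁, he₁, h1⟩, ⟨e₂, he₂, h2⟩⟩
    exact ⟨e₁, he₁, e₂, he₂, by
      rw [← hU]; exact Finset.union_subset_union h1 h2,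
      (hdisj.mono h1 h2)⟩
  · rintro ⟨d₁, hd₁, d₂, hd₂, hsub, hdisj⟩
    refine ⟨d₁, U \ d₁, ?_, Finset.disjoint_sdiff, ⟨d₁, hd₁, Finset.Subset.refl _⟩,
      ⟨d₂, hd₂, ?_⟩⟩
    · exact Finset.union_sdiff_of_subset (Finset.union_subset_iff.mp hsub).1
    · exact Finset.subset_sdiff.mpr ⟨(Finset.union_subset_iff.mp hsub).2, hdisj.symm⟩

section Combo
variable [Fintype V] (E : Set (Finset V)) {t : ℕ} (b : Fin (t + 1) → V)

def DecP (E : Set (Finset V)) (S S₂ : Finset V) : Prop :=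
  ∃ e₁ ∈ E, ∃ e₂ ∈ E, e₁ ∪ e₂ ⊆ S ∧ e₁ ∩ e₂ ⊆ S₂

lemma decP_mono {E : Set (Finset V)} {S S₂ S' S₂' : Finset V} (h1 : S ⊆ S') (h2 : S₂ ⊆ S₂')
    (h : DecP E S S₂) : DecP E S' S₂' := by
  obtain ⟨e₁, he₁, e₂, he₂, hu, hi⟩ := h
  exact ⟨e₁, he₁, e₂, he₂, hu.trans h1, hi.trans h2⟩

lemma combo (S S₂ : Finset V) (hshape : S₂ ⊆ S)
    (hN : ¬ DecP E S S₂)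
    (hY : ∀ i, DecP E (S ∪ {b i}) (S₂ ∪ ({b i} ∩ S))) :
    ∃ C : Finset V, (∃ U : Finset V, TwoSaturating C (restrictEdges E C) U) ∧
      ∀ i, b i ∈ C := by
  classical
  set P : Finset V × Finset V → Prop := fun p =>
    p.2 ⊆ p.1 ∧ ¬ DecP E p.1 p.2 ∧ ∀ i, DecP E (p.1 ∪ {b i}) (p.2 ∪ ({b i} ∩ p.1)) with hP
  have hPne : ((Finset.univ : Finset (Finset V × Finset V)).filter P).Nonempty :=
    ⟨(S, S₂), Finset.mem_filter.mpr ⟨Finset.mem_univ _, hshape, hN, hY⟩⟩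
  obtain ⟨p, hp, hmax⟩ := Finset.exists_max_image _ (fun p => p.1.card + p.2.card) hPne
  obtain ⟨hp2, hpN, hpY⟩ := Finset.mem_filter.mp hp |>.2
  set A := p.1 with hA
  set A₂ := p.2 with hA₂
  -- maximality consequences
  have hmaxS : ∀ v, v ∉ A → DecP E (A ∪ {v}) A₂ := by
    intro v hv
    by_contra hdec
    have hP' : P (A ∪ {v}, A₂) := by
      refine ⟨hp2.trans Finset.subset_union_left, hdec, fun i => ?_⟩
      show DecP E ((A ∪ {v}) ∪ {b i}) (A₂ ∪ ({b i} ∩ (A ∪ {v})))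
      refine decP_mono ?_ ?_ (hpY i) <;>
        (intro x hx;
         simp only [Finset.mem_union, Finset.mem_inter, Finset.mem_singleton] at hx ⊢; tauto)
    have hle := hmax (A ∪ {v}, A₂) (Finset.mem_filter.mpr ⟨Finset.mem_univ _, hP'⟩)
    have : (A ∪ {v}).card = A.card + 1 := by
      rw [Finset.union_comm, ← Finset.insert_eq, Finset.card_insert_of_notMem hv]
    simp only [this] at hle
    omega
  have hmaxS₂ : ∀ v, v ∈ A → v ∉ A₂ → DecP E A (A₂ ∪ {v}) := by
    intro v hvS hv
    by_contra hdec
    have hP' : P (A, A₂ ∪ {v}) := by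
      refine ⟨Finset.union_subset hp2 (by simpa using hvS), hdec, fun i => ?_⟩
      show DecP E (A ∪ {b i}) ((A₂ ∪ {v}) ∪ ({b i} ∩ A))
      exact decP_mono (Finset.Subset.refl _)
        (Finset.union_subset_union_left Finset.subset_union_left) (hpY i)
    have hle := hmax (A, A₂ ∪ {v}) (Finset.mem_filter.mpr ⟨Finset.mem_univ _, hP'⟩)
    have : (A₂ ∪ {v}).card = A₂.card + 1 := by
      rw [Finset.union_comm, ← Finset.insert_eq, Finset.card_insert_of_notMem hv]
    simp only [this] at hle
    omega
  -- b i ∉ A₂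
  have hbA₂ : ∀ i, b i ∉ A₂ := by
    intro i hbi
    apply hpN
    have h1 : A ∪ {b i} = A := by
      rw [Finset.union_eq_left]; simpa using hp2 hbi
    have h2 : A₂ ∪ ({b i} ∩ A) = A₂ := by
      rw [Finset.union_eq_left]
      intro x hx
      rw [Finset.mem_inter, Finset.mem_singleton] at hx
      rw [hx.1]; exact hbi
    have := hpY i
    rw [h1, h2] at this
    exact this
  -- the construction
  refine ⟨Finset.univ \ A₂, ⟨A \ A₂, ?_, ?_, ?_⟩, fun i => by simp [hbA₂ i]⟩
  · exact Finset.sdiff_subset_sdiff (Finset.subset_univ _) (Finset.Subset.refl _)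
  · -- indecomposable
    rw [dec_iff]
    rintro ⟨d₁, ⟨e₁, he₁, rfl⟩, d₂, ⟨e₂, he₂, rfl⟩, hsub, hdisj⟩
    apply hpN
    refine ⟨e₁, he₁, e₂, he₂, ?_, ?_⟩
    · intro v hv
      by_cases hv₂ : v ∈ A₂
      · exact hp2 hv₂
      · have hvC : v ∈ Finset.univ \ A₂ := by simp [hv₂]
        rcases Finset.mem_union.mp hv with h | h
        · have : v ∈ e₁ ∩ (Finset.univ \ A₂) := Finset.mem_inter.mpr ⟨h, hvC⟩
          have := hsub (Finset.mem_union_left _ this)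
          exact (Finset.mem_sdiff.mp this).1
        · have : v ∈ e₂ ∩ (Finset.univ \ A₂) := Finset.mem_inter.mpr ⟨h, hvC⟩
          have := hsub (Finset.mem_union_right _ this)
          exact (Finset.mem_sdiff.mp this).1
    · intro v hv
      by_contra hv₂
      have hvC : v ∈ Finset.univ \ A₂ := by simp [hv₂]
      rw [Finset.mem_inter] at hv
      have h1 : v ∈ e₁ ∩ (Finset.univ \ A₂) := Finset.mem_inter.mpr ⟨hv.1, hvC⟩
      have h2 : v ∈ e₂ ∩ (Finset.univ \ A₂) := Finset.mem_inter.mpr ⟨hv.2, hvC⟩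
      exact Finset.disjoint_left.mp hdisj h1 h2
  · -- 2-saturating deletions
    intro i hi
    have hiA₂ : i ∉ A₂ := (Finset.mem_sdiff.mp hi).2
    have hpair : ∃ e₁ ∈ E, ∃ e₂ ∈ E, e₁ ∪ e₂ ⊆ A ∪ {i} ∧ e₁ ∩ e₂ ⊆ A₂ ∪ {i} := by
      by_cases hiS : i ∈ A
      · obtain ⟨e₁, he₁, e₂, he₂, hu, hin⟩ := hmaxS₂ i hiS hiA₂
        exact ⟨e₁, he₁, e₂, he₂, hu.trans Finset.subset_union_left, hin⟩
      · obtain ⟨e₁, he₁, e₂, he₂, hu, hin⟩ := hmaxS i hiS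
        exact ⟨e₁, he₁, e₂, he₂, hu, hin.trans Finset.subset_union_left⟩
    obtain ⟨e₁, he₁, e₂, he₂, hu, hin⟩ := hpair
    rw [dec_iff]
    refine ⟨(e₁ ∩ (Finset.univ \ A₂)).erase i,
      ⟨e₁ ∩ (Finset.univ \ A₂), ⟨e₁, he₁, rfl⟩, rfl⟩,
      (e₂ ∩ (Finset.univ \ A₂)).erase i,
      ⟨e₂ ∩ (Finset.univ \ A₂), ⟨e₂, he₂, rfl⟩, rfl⟩, ?_, ?_⟩
    · intro v hv
      rcases Finset.mem_union.mp hv with h | h <;>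
      · obtain ⟨hvi, hve⟩ := Finset.mem_erase.mp h
        rw [Finset.mem_inter, Finset.mem_sdiff] at hve
        refine Finset.mem_erase.mpr ⟨hvi, Finset.mem_sdiff.mpr ⟨?_, hve.2.2⟩⟩
        have hvA : v ∈ A ∪ {i} := hu (by
          first
          | exact Finset.mem_union_left _ hve.1
          | exact Finset.mem_union_right _ hve.1)
        rcases Finset.mem_union.mp hvA with h' | h'
        · exact h'
        · exact absurd (Finset.mem_singleton.mp h') hvi
    · rw [Finset.disjoint_left]
      intro v h1 h2
      obtain ⟨hvi, hv1⟩ := Finset.mem_erase.mp h1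
      obtain ⟨_, hv2⟩ := Finset.mem_erase.mp h2
      rw [Finset.mem_inter, Finset.mem_sdiff] at hv1 hv2
      have : v ∈ A₂ ∪ {i} := hin (Finset.mem_inter.mpr ⟨hv1.1, hv2.1⟩)
      rcases Finset.mem_union.mp this with h' | h'
      · exact hv1.2.2 h'
      · exact hvi (Finset.mem_singleton.mp h')

end Combo

section Bridge
variable [Fintype V]

lemma eInd_pair_le (e₁ e₂ : Finset V) (α : V →₀ ℕ) :
    eInd e₁ + eInd e₂ ≤ α ↔
      (e₁ ∪ e₂ ⊆ α.support ∧
        e₁ ∩ e₂ ⊆ Finset.univ.filter (fun v => 2 ≤ α v)) := by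
  rw [Finsupp.le_def]
  constructor
  · intro h
    constructor
    · intro v hv
      have := h v
      rw [Finsupp.add_apply, eInd_apply, eInd_apply] at this
      rw [Finset.mem_union] at hv
      rw [Finsupp.mem_support_iff]
      rcases hv with hv | hv <;> simp [hv] at this <;> omega
    · intro v hv
      rw [Finset.mem_inter] at hv
      have := h v
      rw [Finsupp.add_apply, eInd_apply, eInd_apply, if_pos hv.1, if_pos hv.2] at this
      simp only [Finset.mem_filter, Finset.mem_univ, true_and]
      omega
  · rintro ⟨hu, hi⟩ v
    rw [Finsupp.add_apply, eInd_apply, eInd_apply]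
    by_cases h1 : v ∈ e₁ <;> by_cases h2 : v ∈ e₂ <;> simp [h1, h2]
    · have := hi (Finset.mem_inter.mpr ⟨h1, h2⟩)
      simp only [Finset.mem_filter] at this
      omega
    · have := hu (Finset.mem_union_left _ h1)
      rw [Finsupp.mem_support_iff] at this
      omega
    · have := hu (Finset.mem_union_right _ h2)
      rw [Finsupp.mem_support_iff] at this
      omega

lemma supp_shift (α : V →₀ ℕ) (x : V) :
    (α + Finsupp.single x 1).support = α.support ∪ {x} := by
  ext v
  rw [Finsupp.mem_support_iff, Finset.mem_union, Finsupp.mem_support_iff,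
    Finsupp.add_apply, Finsupp.single_apply, Finset.mem_singleton]
  by_cases h : x = v
  · subst h; simp
  · simp [h, Ne.symm h]

lemma filter2_shift (α : V →₀ ℕ) (x : V) :
    Finset.univ.filter (fun v => 2 ≤ ((α + Finsupp.single x 1 : V →₀ ℕ)) v)
      = Finset.univ.filter (fun v => 2 ≤ α v) ∪ ({x} ∩ α.support) := by
  ext v
  rw [Finset.mem_union, Finset.mem_inter, Finset.mem_singleton, Finsupp.mem_support_iff]
  simp only [Finset.mem_filter, Finset.mem_univ, true_and, Finsupp.add_apply,
    Finsupp.single_apply]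
  by_cases h : x = v
  · subst h; simp; omega
  · simp [h, Ne.symm h]

end Bridge

section Witness
variable {t : ℕ} {b : Fin (t + 1) → V} {E : Set (Finset V)}

lemma w1_to_w2 (w : V →₀ ℕ)
    (hnot : ¬ ∃ e ∈ E, eInd e ≤ w)
    (hyes : ∀ i, ∃ e ∈ E, eInd e ≤ w + Finsupp.single (b i) 1) :
    (¬ ∃ e₁ ∈ E, ∃ e₂ ∈ E, eInd e₁ + eInd e₂ ≤ w + w + Finsupp.single (b 0) 1) ∧
      ∀ i, ∃ e₁ ∈ E, ∃ e₂ ∈ E,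
        eInd e₁ + eInd e₂ ≤ (w + w + Finsupp.single (b 0) 1) + Finsupp.single (b i) 1 := by
  have hb0 : w (b 0) = 0 := by
    by_contra h0
    obtain ⟨e, he, hle⟩ := hyes 0
    refine hnot ⟨e, he, Finsupp.le_def.mpr fun v => ?_⟩
    have h1 := Finsupp.le_def.mp hle v
    rw [Finsupp.add_apply, Finsupp.single_apply] at h1
    by_cases hv : b 0 = v
    · rw [← hv] at h1 ⊢
      rw [eInd_apply] at h1 ⊢
      by_cases hve : b 0 ∈ e <;> simp [hve] at h1 ⊢ <;> omega
    · rw [if_neg hv] at h1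
      omega
  constructor
  · rintro ⟨e₁, he₁, e₂, he₂, hle⟩
    have hat : eInd e₁ (b 0) + eInd e₂ (b 0) ≤ 1 := by
      have h1 := Finsupp.le_def.mp hle (b 0)
      rw [Finsupp.add_apply, Finsupp.add_apply, Finsupp.add_apply, Finsupp.single_apply,
        if_pos rfl, hb0] at h1
      omega
    obtain ⟨e, he, hbe, hcomp⟩ :
        ∃ e, e ∈ E ∧ b 0 ∉ e ∧ ∀ v, eInd e v ≤ eInd e₁ v + eInd e₂ v := by
      rw [eInd_apply, eInd_apply] at hat
      by_cases h1 : b 0 ∈ e₁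
      · have h2 : b 0 ∉ e₂ := by
          by_contra h2; rw [if_pos h1, if_pos h2] at hat; omega
        exact ⟨e₂, he₂, h2, fun v => Nat.le_add_left _ _⟩
      · exact ⟨e₁, he₁, h1, fun v => Nat.le_add_right _ _⟩
    refine hnot ⟨e, he, Finsupp.le_def.mpr fun v => ?_⟩
    by_cases hv : b 0 = v
    · rw [eInd_apply, ← hv, if_neg hbe]
      exact Nat.zero_le _
    · have h1 := Finsupp.le_def.mp hle v
      rw [Finsupp.add_apply, Finsupp.add_apply, Finsupp.add_apply, Finsupp.single_apply,
        if_neg hv] at h1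
      have hc := hcomp v
      rw [eInd_apply] at hc ⊢
      by_cases hve : v ∈ e
      · rw [if_pos hve] at hc ⊢
        omega
      · rw [if_neg hve]
        exact Nat.zero_le _
  · intro i
    obtain ⟨e, he, hle⟩ := hyes i
    obtain ⟨e0, he0, hle0⟩ := hyes 0
    refine ⟨e, he, e0, he0, ?_⟩
    have h := add_le_add hle hle0
    have heq : (w + Finsupp.single (b i) 1) + (w + Finsupp.single (b 0) 1)
        = (w + w + Finsupp.single (b 0) 1) + Finsupp.single (b i) 1 := by abel
    rwa [heq] at h

end Witness


/-- Let `H` be a finite simple hypergraph with edge ideal `I = I(H)`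
and let `b₀, …, b_t` be distinct vertices.  Suppose that for every subset `C` of the
vertices such that `H_C` has a 2-saturating set, `{b₀, …, b_t}` is not contained in `C`.
Then `f = x_{b₀} + ⋯ + x_{b_t}` is regular on `R/I` and on `R/I²`. -/
theorem stmt2 {V k : Type*} [Fintype V] [DecidableEq V] [Field k]
    (E : Set (Finset V))
    (hne : ∀ e ∈ E, e.Nonempty)
    (hsimple : ∀ e₁ ∈ E, ∀ e₂ ∈ E, e₁ ⊆ e₂ → e₁ = e₂)
    (t : ℕ) (b : Fin (t + 1) → V) (hb : Function.Injective b)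
    (hsat : ∀ C : Finset V,
      (∃ U : Finset V, TwoSaturating C (restrictEdges E C) U) → ¬ ∀ i, b i ∈ C)
    (f : MvPolynomial V k) (hf : f = ∑ i, X (b i)) :
    IsSMulRegular ((MvPolynomial V k) ⧸ (hEdgeIdeal k E)) f ∧
      IsSMulRegular ((MvPolynomial V k) ⧸ (hEdgeIdeal k E ^ 2)) f := by
  classical
  subst hf
  set M1 : Set (V →₀ ℕ) := {m | ∃ e ∈ E, eInd e ≤ m} with hM1
  set M2 : Set (V →₀ ℕ) := {m | ∃ e₁ ∈ E, ∃ e₂ ∈ E, eInd e₁ + eInd e₂ ≤ m} with hM2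
  have hJM1 : ∀ p : MvPolynomial V k, p ∈ hEdgeIdeal k E ↔ ∀ m ∈ p.support, m ∈ M1 := by
    intro p
    have h1 : hEdgeIdeal k E = Ideal.span ((fun s => monomial s (1:k)) '' (eInd '' E)) :=
      hEdgeIdeal_eq k E
    rw [h1, mem_ideal_span_monomial_image]
    constructor
    · intro h m hm
      obtain ⟨si, ⟨e, he, rfl⟩, hle⟩ := h m hm
      exact ⟨e, he, hle⟩
    · intro h m hm
      obtain ⟨e, he, hle⟩ := h m hm
      exact ⟨eInd e, ⟨e, he, rfl⟩, hle⟩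
  have hJM2 : ∀ p : MvPolynomial V k, p ∈ hEdgeIdeal k E ^ 2 ↔ ∀ m ∈ p.support, m ∈ M2 := by
    intro p
    have h1 : hEdgeIdeal k E ^ 2 = Ideal.span ((fun s => monomial s (1:k)) ''
        {s | ∃ e₁ ∈ E, ∃ e₂ ∈ E, s = eInd e₁ + eInd e₂}) := hEdgeIdeal_sq_eq k E
    rw [h1, mem_ideal_span_monomial_image]
    constructor
    · intro h m hm
      obtain ⟨si, ⟨e₁, he₁, e₂, he₂, rfl⟩, hle⟩ := h m hm
      exact ⟨e₁, he₁, e₂, he₂, hle⟩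
    · intro h m hm
      obtain ⟨e₁, he₁, e₂, he₂, hle⟩ := h m hm
      exact ⟨eInd e₁ + eInd e₂, ⟨e₁, he₁, e₂, he₂, rfl⟩, hle⟩
  -- no socle witness for I^2
  have hw2 : ¬ ∃ w : V →₀ ℕ, w ∉ M2 ∧ ∀ i, w + Finsupp.single (b i) 1 ∈ M2 := by
    rintro ⟨w, hwn, hwy⟩
    have hN : ¬ DecP E w.support (Finset.univ.filter fun v => 2 ≤ w v) := by
      rintro ⟨e₁, he₁, e₂, he₂, hu, hi⟩
      exact hwn ⟨e₁, he₁, e₂, he₂, (eInd_pair_le e₁ e₂ w).mpr ⟨hu, hi⟩⟩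
    have hY : ∀ i, DecP E (w.support ∪ {b i})
        ((Finset.univ.filter fun v => 2 ≤ w v) ∪ ({b i} ∩ w.support)) := by
      intro i
      obtain ⟨e₁, he₁, e₂, he₂, hle⟩ := hwy i
      have h2 := (eInd_pair_le e₁ e₂ _).mp hle
      rw [supp_shift, filter2_shift] at h2
      exact ⟨e₁, he₁, e₂, he₂, h2.1, h2.2⟩
    have hshape : (Finset.univ.filter fun v => 2 ≤ w v) ⊆ w.support := by
      intro v hv
      rw [Finset.mem_filter] at hv
      rw [Finsupp.mem_support_iff]
      omega
    obtain ⟨C, hCU, hCb⟩ := combo E b w.support _ hshape hN hY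
    exact hsat C hCU hCb
  -- no socle witness for I
  have hw1 : ¬ ∃ w : V →₀ ℕ, w ∉ M1 ∧ ∀ i, w + Finsupp.single (b i) 1 ∈ M1 := by
    rintro ⟨w, hwn, hwy⟩
    obtain ⟨h1, h2⟩ := w1_to_w2 (b := b) w hwn hwy
    exact hw2 ⟨w + w + Finsupp.single (b 0) 1, h1, h2⟩
  exact ⟨reg_of_colon (fun g => colon_eq hb (hEdgeIdeal k E) M1 hJM1 hw1 g),
    reg_of_colon (fun g => colon_eq hb (hEdgeIdeal k E ^ 2) M2 hJM2 hw2 g)⟩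
end

section
/- Let M_1, M_2 be monomials and g_1, g_2 nonzero polynomials such that no variable occurring in M_1 or M_2 occurs in g_1 or g_2. Then S(M_1 g_1, M_2 g_2) = lcm(M_1, M_2) · S(g_1, g_2). -/
open MvPolynomial

variable {σ k : Type*} [Field k]

/-- The exponent of the leading monomial of `f` with respect to the monomial order `m`. -/
noncomputable def mdeg (m : MonomialOrder σ) (f : MvPolynomial σ k) : σ →₀ ℕ :=
  m.toSyn.symm (f.support.sup fun a => m.toSyn a)

/-- The leading term `in(f)` of `f` with respect to the monomial order `m`. -/
noncomputable def ltm (m : MonomialOrder σ) (f : MvPolynomial σ k) : MvPolynomial σ k :=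
  monomial (mdeg m f) (f.coeff (mdeg m f))

/-- The S-resultant `S(f, g) = (lcm(in f, in g)/in f)·f − (lcm(in f, in g)/in g)·g`
of two polynomials whose leading coefficients are `1`:  the least common multiple of the
two leading monomials has exponent `mdeg f ⊔ mdeg g`. -/
noncomputable def Sres (m : MonomialOrder σ) (f g : MvPolynomial σ k) :
    MvPolynomial σ k :=
  monomial (mdeg m f ⊔ mdeg m g - mdeg m f) (1 : k) * f
    - monomial (mdeg m f ⊔ mdeg m g - mdeg m g) (1 : k) * g

section Aux

variable {σ k : Type*} [Field k]

open MvPolynomial Finsupp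

lemma mdeg_monomial_mul (m : MonomialOrder σ) (a : σ →₀ ℕ) (g : MvPolynomial σ k)
    (hg : g ≠ 0) : mdeg m (monomial a (1 : k) * g) = a + mdeg m g := by
  classical
  have hs : (monomial a (1 : k) * g).support = g.support.map (addLeftEmbedding a) :=
    AddMonoidAlgebra.support_coeff_single_mul g (1 : k) (by simp) a
  have hne : g.support.Nonempty := MvPolynomial.support_nonempty.mpr hg
  unfold mdeg
  rw [hs, Finset.sup_map]
  have : (g.support.sup fun b => m.toSyn (a + b))
      = m.toSyn a + g.support.sup fun b => m.toSyn b := by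
    rw [← Finset.sup'_eq_sup hne, ← Finset.sup'_eq_sup hne]
    simp only [map_add]
    exact (Finset.comp_sup'_eq_sup'_comp hne (fun x => m.toSyn a + x)
      (fun x y => by
        rcases le_total x y with h | h
        · rw [max_eq_right h, max_eq_right (by exact add_le_add_right h _)]
        · rw [max_eq_left h, max_eq_left (by exact add_le_add_right h _)])).symm
  have h2 : ((fun b => m.toSyn b) ∘ ⇑(addLeftEmbedding a)) = fun b => m.toSyn (a + b) := by
    funext b; simp [addLeftEmbedding]
  rw [h2, this, map_add]
  simp [mdeg]

lemma mdeg_mem_support (m : MonomialOrder σ) (g : MvPolynomial σ k) (hg : g ≠ 0) :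
    mdeg m g ∈ g.support := by
  have hne : g.support.Nonempty := MvPolynomial.support_nonempty.mpr hg
  obtain ⟨b, hb, he⟩ := Finset.exists_mem_eq_sup g.support hne fun a => m.toSyn a
  unfold mdeg
  rw [he]
  simpa using hb

end Aux

/-- Let `M₁ = x^{a₁}`, `M₂ = x^{a₂}` be monomials and `g₁, g₂` nonzero
polynomials (with leading coefficient 1) such that no variable occurring in `M₁` or `M₂`
occurs in `g₁` or `g₂`.  Then `S(M₁g₁, M₂g₂) = lcm(M₁, M₂) · S(g₁, g₂)`. -/
theorem stmt3 [DecidableEq σ] (m : MonomialOrder σ)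
    (a₁ a₂ : σ →₀ ℕ) (g₁ g₂ : MvPolynomial σ k)
    (hg₁ : g₁ ≠ 0) (hg₂ : g₂ ≠ 0)
    (hlc₁ : g₁.coeff (mdeg m g₁) = 1) (hlc₂ : g₂.coeff (mdeg m g₂) = 1)
    (hdisj : Disjoint (a₁.support ∪ a₂.support) (g₁.vars ∪ g₂.vars)) :
    Sres m (monomial a₁ (1 : k) * g₁) (monomial a₂ (1 : k) * g₂)
      = monomial (a₁ ⊔ a₂) (1 : k) * Sres m g₁ g₂ := by
  classical
  set d₁ := mdeg m g₁ with hd₁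
  set d₂ := mdeg m g₂ with hd₂
  have key : ∀ i, (a₁ i = 0 ∧ a₂ i = 0) ∨ (d₁ i = 0 ∧ d₂ i = 0) := by
    intro i
    by_cases h : i ∈ a₁.support ∪ a₂.support
    · right
      have hv := Finset.disjoint_left.mp hdisj h
      simp only [Finset.mem_union, not_or] at hv
      constructor
      · by_contra hne
        exact hv.1 ((mem_vars i).mpr
          ⟨d₁, mdeg_mem_support m g₁ hg₁, Finsupp.mem_support_iff.mpr hne⟩)
      · by_contra hne
        exact hv.2 ((mem_vars i).mpr
          ⟨d₂, mdeg_mem_support m g₂ hg₂, Finsupp.mem_support_iff.mpr hne⟩)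
    · left
      simp only [Finset.mem_union, Finsupp.mem_support_iff, not_or, not_not] at h
      exact h
  have hsup : (a₁ + d₁) ⊔ (a₂ + d₂) = (a₁ ⊔ a₂) + (d₁ ⊔ d₂) := by
    ext i
    simp only [Finsupp.sup_apply, Finsupp.add_apply]
    rcases key i with ⟨h1, h2⟩ | ⟨h1, h2⟩ <;> simp [h1, h2]
  have hsub1 : (a₁ ⊔ a₂) + (d₁ ⊔ d₂) - (a₁ + d₁) = (a₁ ⊔ a₂ - a₁) + (d₁ ⊔ d₂ - d₁) := by
    ext i
    simp only [Finsupp.tsub_apply, Finsupp.add_apply, Finsupp.sup_apply]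
    have := le_max_left (a₁ i) (a₂ i)
    have := le_max_left (d₁ i) (d₂ i)
    omega
  have hsub2 : (a₁ ⊔ a₂) + (d₁ ⊔ d₂) - (a₂ + d₂) = (a₁ ⊔ a₂ - a₂) + (d₁ ⊔ d₂ - d₂) := by
    ext i
    simp only [Finsupp.tsub_apply, Finsupp.add_apply, Finsupp.sup_apply]
    have := le_max_right (a₁ i) (a₂ i)
    have := le_max_right (d₁ i) (d₂ i)
    omega
  have e1 := mdeg_monomial_mul m a₁ g₁ hg₁
  have e2 := mdeg_monomial_mul m a₂ g₂ hg₂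
  unfold Sres
  rw [e1, e2, ← hd₁, ← hd₂, hsup, hsub1, hsub2, mul_sub,
    ← mul_assoc, ← mul_assoc, ← mul_assoc, ← mul_assoc,
    monomial_mul, monomial_mul, monomial_mul, monomial_mul, one_mul,
    add_right_comm (a₁ ⊔ a₂ - a₁), add_right_comm (a₁ ⊔ a₂ - a₂),
    tsub_add_cancel_of_le (le_sup_left : a₁ ≤ a₁ ⊔ a₂),
    tsub_add_cancel_of_le (le_sup_right : a₂ ≤ a₁ ⊔ a₂)]
end

section
/- Let I be a monomial ideal in R and let b_0, b_1 be distinct variables satisfying condition (⋆) with respect to I. Then for every integer t with 1 ≤ t ≤ 3, the colon ideal satisfies (I^t : (b_0 + b_1)) = (I^t : b_0) ∩ (I^t : b_1); in particular, (I^t : (b_0 + b_1)) is a monomial ideal for t ≤ 3. -/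
open MvPolynomial

variable {σ k : Type*} [Field k]

/-- `I` is a monomial ideal if it is generated by monomials. -/
def IsMonomialIdeal (I : Ideal (MvPolynomial σ k)) : Prop :=
  ∃ S : Set (σ →₀ ℕ),
    I = Ideal.span ((fun a => (monomial a (1 : k) : MvPolynomial σ k)) '' S)

/-- The exponents of the minimal monomial generators `G(I)` of a monomial ideal `I`:
the monomials in `I` that are minimal with respect to divisibility
(`x^b ∣ x^a ↔ b ≤ a`). -/
def minimalGens (I : Ideal (MvPolynomial σ k)) : Set (σ →₀ ℕ) :=
  {a | (monomial a (1 : k) : MvPolynomial σ k) ∈ I ∧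
    ∀ b : σ →₀ ℕ, (monomial b (1 : k) : MvPolynomial σ k) ∈ I → b ≤ a → b = a}

namespace Stmt7Aux

lemma mon_mul (a b : σ →₀ ℕ) :
    (monomial a (1 : k)) * monomial b 1 = monomial (a + b) 1 := by
  rw [monomial_mul, one_mul]

lemma mon_mem_up {J : Ideal (MvPolynomial σ k)} {a b : σ →₀ ℕ}
    (h : (monomial a (1 : k)) ∈ J) (hab : a ≤ b) : (monomial b (1 : k)) ∈ J := by
  have : (monomial (b - a) (1 : k)) * monomial a 1 = monomial b 1 := by
    rw [mon_mul, tsub_add_cancel_of_le hab]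
  exact this ▸ J.mul_mem_left _ h

lemma mon_mem_span_iff {S : Set (σ →₀ ℕ)} {m : σ →₀ ℕ} :
    (monomial m (1 : k)) ∈ Ideal.span ((fun a => (monomial a (1 : k) : MvPolynomial σ k)) '' S)
      ↔ ∃ s ∈ S, s ≤ m := by
  classical
  rw [mem_ideal_span_monomial_image]
  constructor
  · intro h
    exact h m (by classical simp [mem_support_iff, coeff_monomial])
  · rintro ⟨s, hs, hsm⟩ xi hxi
    rw [mem_support_iff, coeff_monomial] at hxi
    have hmxi : m = xi := by by_contra hne; simp [hne] at hxi
    exact ⟨s, hs, hmxi ▸ hsm⟩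

lemma exists_min [Fintype σ] (I : Ideal (MvPolynomial σ k)) :
    ∀ (n : ℕ) (m : σ →₀ ℕ), (∑ x, m x) ≤ n → (monomial m (1 : k)) ∈ I →
      ∃ g ∈ minimalGens I, g ≤ m := by
  intro n
  induction n with
  | zero =>
    intro m hm hmem
    by_cases hmin : m ∈ minimalGens I
    · exact ⟨m, hmin, le_rfl⟩
    · exfalso
      simp only [minimalGens, Set.mem_setOf_eq, not_and, not_forall] at hmin
      obtain ⟨b, hbI, hbm, hne⟩ := hmin hmem
      obtain ⟨x, hx⟩ : ∃ x, b x ≠ m x := by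
        by_contra h
        push_neg at h
        exact hne (Finsupp.ext h)
      have := hbm x
      have hxm : 0 < m x := by omega
      have : 0 < ∑ x, m x := Finset.sum_pos' (fun _ _ => Nat.zero_le _) ⟨x, Finset.mem_univ _, hxm⟩
      omega
  | succ n ih =>
    intro m hm hmem
    by_cases hmin : m ∈ minimalGens I
    · exact ⟨m, hmin, le_rfl⟩
    · simp only [minimalGens, Set.mem_setOf_eq, not_and, not_forall] at hmin
      obtain ⟨b, hbI, hbm, hne⟩ := hmin hmem
      obtain ⟨x, hx⟩ : ∃ x, b x ≠ m x := by
        by_contra h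
        push_neg at h
        exact hne (Finsupp.ext h)
      have hlt : (∑ x, b x) < ∑ x, m x := by
        refine Finset.sum_lt_sum (fun y _ => hbm y) ⟨x, Finset.mem_univ _, ?_⟩
        have := hbm x; omega
      obtain ⟨g, hg, hgb⟩ := ih b (by omega) hbI
      exact ⟨g, hg, hgb.trans hbm⟩

lemma span_min [Fintype σ] {I : Ideal (MvPolynomial σ k)} (hI : IsMonomialIdeal I) :
    I = Ideal.span ((fun a => (monomial a (1 : k) : MvPolynomial σ k)) '' minimalGens I) := by
  obtain ⟨S, hS⟩ := hI
  subst hS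
  apply le_antisymm
  · rw [Ideal.span_le]
    rintro _ ⟨s, hs, rfl⟩
    have hsI : (monomial s (1 : k)) ∈
        Ideal.span ((fun a => (monomial a (1 : k) : MvPolynomial σ k)) '' S) :=
      Ideal.subset_span ⟨s, hs, rfl⟩
    obtain ⟨g, hg, hgs⟩ := exists_min _ (∑ x, s x) s le_rfl hsI
    exact mon_mem_span_iff.mpr ⟨g, hg, hgs⟩
  · rw [Ideal.span_le]
    rintro _ ⟨g, hg, rfl⟩
    exact hg.1

lemma pow_supp [Fintype σ] {I : Ideal (MvPolynomial σ k)} (hI : IsMonomialIdeal I) :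
    ∀ (t : ℕ) (f : MvPolynomial σ k), f ∈ I ^ t → ∀ a ∈ f.support,
      ∃ gs : Multiset (σ →₀ ℕ), Multiset.card gs = t ∧
        (∀ g ∈ gs, g ∈ minimalGens I) ∧ gs.sum ≤ a := by
  classical
  intro t
  induction t with
  | zero =>
    intro f _ a _
    exact ⟨0, rfl, by simp, by simp⟩
  | succ n ih =>
    intro f hf
    rw [pow_succ] at hf
    refine Submodule.mul_induction_on hf ?_ ?_
    · intro p hp q hq a ha
      have hsupp := support_mul p q ha
      rw [Finset.mem_add] at hsupp
      obtain ⟨a1, ha1, a2, ha2, haa⟩ := hsupp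
      obtain ⟨gs, hcard, hmin, hsum⟩ := ih p hp a1 ha1
      have hq' : q ∈ Ideal.span
          ((fun a => (monomial a (1 : k) : MvPolynomial σ k)) '' minimalGens I) :=
        (span_min hI) ▸ hq
      rw [mem_ideal_span_monomial_image] at hq'
      obtain ⟨s, hs, hsle⟩ := hq' a2 ha2
      refine ⟨s ::ₘ gs, by simp [hcard], ?_, ?_⟩
      · intro g hg
        rcases Multiset.mem_cons.mp hg with h | h
        · exact h ▸ hs
        · exact hmin g h
      · rw [Multiset.sum_cons, ← haa]
        exact add_le_add hsle hsum |>.trans_eq (add_comm _ _)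
    · intro p q hp hq a ha
      rcases Finset.mem_union.mp (support_add ha) with h | h
      · exact hp a h
      · exact hq a h

lemma mem_pow_iff [Fintype σ] {I : Ideal (MvPolynomial σ k)} (hI : IsMonomialIdeal I)
    (t : ℕ) (m : σ →₀ ℕ) :
    (monomial m (1 : k)) ∈ I ^ t ↔
      ∃ gs : Multiset (σ →₀ ℕ), Multiset.card gs = t ∧
        (∀ g ∈ gs, g ∈ minimalGens I) ∧ gs.sum ≤ m := by
  classical
  constructor
  · intro h
    exact pow_supp hI t _ h m (by simp [mem_support_iff, coeff_monomial])
  · rintro ⟨gs, hcard, hmin, hsum⟩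
    have key : ∀ gs' : Multiset (σ →₀ ℕ), (∀ g ∈ gs', g ∈ minimalGens I) →
        (monomial gs'.sum (1 : k)) ∈ I ^ (Multiset.card gs') := by
      intro gs'
      induction gs' using Multiset.induction with
      | empty => intro _; simp [Ideal.one_eq_top]
      | cons g gs'' ih2 =>
        intro hall
        rw [Multiset.sum_cons, Multiset.card_cons, pow_succ, add_comm, ← mon_mul]
        exact Ideal.mul_mem_mul (ih2 (fun x hx => hall x (Multiset.mem_cons_of_mem hx)))
          (hall g (Multiset.mem_cons_self _ _)).1
    have h1 : (monomial gs.sum (1 : k)) ∈ I ^ t := hcard ▸ key gs hmin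
    exact mon_mem_up h1 hsum

lemma sum_coord (ms : Multiset (σ →₀ ℕ)) (x : σ) :
    ms.sum x = (ms.map (fun g => g x)).sum :=
  map_multiset_sum (Finsupp.applyAddHom x) ms

lemma conv [Fintype σ] {I : Ideal (MvPolynomial σ k)} (hI : IsMonomialIdeal I)
    {b0 b1 : σ}
    (hstar1 : ∀ a ∈ minimalGens I, a b0 ≤ 1 ∧ a b1 ≤ 1)
    (hstar2 : ∀ a ∈ minimalGens I, 1 ≤ a b0 → 1 ≤ a b1)
    {t : ℕ} (ht3 : t ≤ 3) {c c' w : σ →₀ ℕ} {s i : ℕ} (hs : 2 ≤ s) (hi : i ≤ s)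
    (hc'b0 : c' b0 = c b0 + s) (hc'b1 : c' b1 + s = c b1)
    (hc'x : ∀ x, x ≠ b0 → x ≠ b1 → c' x = c x)
    (hwb0 : w b0 = c b0 + i) (hwb1 : w b1 + i = c b1)
    (hwx : ∀ x, x ≠ b0 → x ≠ b1 → w x = c x)
    (h1 : (monomial c (1 : k)) ∈ I ^ t) (h2 : (monomial c' (1 : k)) ∈ I ^ t) :
    (monomial w (1 : k)) ∈ I ^ t := by
  classical
  obtain ⟨gs, hcard, hmin, hsum⟩ := (mem_pow_iff hI t c).mp h1
  obtain ⟨gs', hcard', hmin', hsum'⟩ := (mem_pow_iff hI t c').mp h2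
  by_cases hQ : gs.sum b1 ≤ w b1
  · refine (mem_pow_iff hI t w).mpr ⟨gs, hcard, hmin, Finsupp.le_def.mpr ?_⟩
    intro x
    by_cases hx0 : x = b0
    · rw [hx0]; have := Finsupp.le_def.mp hsum b0; omega
    · by_cases hx1 : x = b1
      · rw [hx1]; exact hQ
      · have := Finsupp.le_def.mp hsum x; rw [hwx x hx0 hx1]; exact this
  · by_cases hP : gs'.sum b0 ≤ w b0
    · refine (mem_pow_iff hI t w).mpr ⟨gs', hcard', hmin', Finsupp.le_def.mpr ?_⟩
      intro x
      by_cases hx0 : x = b0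
      · rw [hx0]; exact hP
      · by_cases hx1 : x = b1
        · rw [hx1]; have := Finsupp.le_def.mp hsum' b1; omega
        · have := Finsupp.le_def.mp hsum' x; rw [hwx x hx0 hx1, ← hc'x x hx0 hx1]; exact this
    · exfalso
      have hQt : gs.sum b1 ≤ t := by
        rw [sum_coord]
        calc (gs.map fun g => g b1).sum
            ≤ (Multiset.card (gs.map fun g => g b1)) • 1 := by
              refine Multiset.sum_le_card_nsmul _ _ ?_
              intro x hx
              obtain ⟨g, hg, rfl⟩ := Multiset.mem_map.mp hx
              exact (hstar1 g (hmin g hg)).2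
          _ = t := by simp [hcard]
      have hPQ : gs'.sum b0 ≤ gs'.sum b1 := by
        rw [sum_coord, sum_coord]
        refine Multiset.sum_map_le_sum_map _ _ ?_
        intro g hg
        have h1' := (hstar1 g (hmin' g hg)).1
        have h2' := hstar2 g (hmin' g hg)
        omega
      have hQ'c : gs'.sum b1 ≤ c' b1 := Finsupp.le_def.mp hsum' b1
      omega

end Stmt7Aux

/-- Let `I` be a monomial ideal and `b₀, b₁` distinct variables
satisfying condition (⋆): every `a ∈ G(I)` has `b₀`- and `b₁`-exponent at most 1, and
every element of `G(I)` divisible by `b₀` is divisible by `b₁`.  Then for every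
`1 ≤ t ≤ 3`, `(Iᵗ : (b₀+b₁)) = (Iᵗ : b₀) ∩ (Iᵗ : b₁)`; in particular,
`(Iᵗ : (b₀+b₁))` is a monomial ideal. -/
theorem stmt7 [Fintype σ]
    (I : Ideal (MvPolynomial σ k)) (hI : IsMonomialIdeal I)
    (b0 b1 : σ) (hb : b0 ≠ b1)
    (hstar1 : ∀ a ∈ minimalGens I, a b0 ≤ 1 ∧ a b1 ≤ 1)
    (hstar2 : ∀ a ∈ minimalGens I, 1 ≤ a b0 → 1 ≤ a b1)
    (t : ℕ) (ht1 : 1 ≤ t) (ht3 : t ≤ 3) :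
    (I ^ t).colon (Ideal.span {(X b0 + X b1 : MvPolynomial σ k)})
        = (I ^ t).colon (Ideal.span {(X b0 : MvPolynomial σ k)})
          ⊓ (I ^ t).colon (Ideal.span {(X b1 : MvPolynomial σ k)}) ∧
      IsMonomialIdeal ((I ^ t).colon (Ideal.span {(X b0 + X b1 : MvPolynomial σ k)})) := by
  classical
  have hX0 : (X b0 : MvPolynomial σ k) = monomial (Finsupp.single b0 1) 1 := rfl
  have hX1 : (X b1 : MvPolynomial σ k) = monomial (Finsupp.single b1 1) 1 := rfl
  have hJsupp1 : ∀ f : MvPolynomial σ k, f ∈ I ^ t → ∀ a ∈ f.support,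
      (monomial a (1 : k)) ∈ I ^ t := by
    intro f hf a ha
    exact (Stmt7Aux.mem_pow_iff hI t a).mpr (Stmt7Aux.pow_supp hI t f hf a ha)
  have hJsupp2 : ∀ f : MvPolynomial σ k,
      (∀ a ∈ f.support, (monomial a (1 : k)) ∈ I ^ t) → f ∈ I ^ t := by
    intro f hall
    have hmem : ∑ v ∈ f.support, monomial v (coeff v f) ∈ I ^ t := by
      refine Ideal.sum_mem _ fun v hv => ?_
      have hmv : monomial v (coeff v f) = C (coeff v f) * monomial v (1 : k) := by
        rw [C_mul_monomial, mul_one]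
      rw [hmv]
      exact Ideal.mul_mem_left _ _ (hall v hv)
    rwa [← as_sum f] at hmem
  -- coordinate computations
  have s00 : (Finsupp.single b0 1 : σ →₀ ℕ) b0 = 1 := Finsupp.single_eq_same
  have s11 : (Finsupp.single b1 1 : σ →₀ ℕ) b1 = 1 := Finsupp.single_eq_same
  have s01 : (Finsupp.single b0 1 : σ →₀ ℕ) b1 = 0 := Finsupp.single_eq_of_ne' hb
  have s10 : (Finsupp.single b1 1 : σ →₀ ℕ) b0 = 0 := Finsupp.single_eq_of_ne' (Ne.symm hb)
  have hadd01 : ∀ a : σ →₀ ℕ, (a + (Finsupp.single b1 1 : σ →₀ ℕ)) b0 = a b0 := by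
    intro a
    rw [Finsupp.add_apply, s10, add_zero]
  have hadd10 : ∀ a : σ →₀ ℕ, (a + (Finsupp.single b0 1 : σ →₀ ℕ)) b1 = a b1 := by
    intro a
    rw [Finsupp.add_apply, s01, add_zero]
  -- the hard direction
  have hard : ∀ f : MvPolynomial σ k, f * (X b0 + X b1) ∈ I ^ t →
      f * X b0 ∈ I ^ t ∧ f * X b1 ∈ I ^ t := by
    intro f hf
    have hmemc : ∀ c : σ →₀ ℕ, coeff c (f * (X b0 + X b1)) ≠ 0 →
        (monomial c (1 : k)) ∈ I ^ t :=
      fun c hc => hJsupp1 _ hf c (mem_support_iff.mpr hc)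
    have hcoeff : ∀ c, coeff c (f * (X b0 + X b1)) = coeff c (f * X b0) + coeff c (f * X b1) := by
      intro c; rw [mul_add, coeff_add]
    have key1 : ∀ a : σ →₀ ℕ, coeff (a + Finsupp.single b1 1) (f * X b1) = coeff a f :=
      fun a => coeff_mul_X a b1 f
    have key2 : ∀ a : σ →₀ ℕ, coeff (a + Finsupp.single b0 1) (f * X b0) = coeff a f :=
      fun a => coeff_mul_X a b0 f
    have key3 : ∀ a : σ →₀ ℕ, a b0 = 0 →
        coeff (a + Finsupp.single b1 1) (f * X b0) = 0 := by
      intro a ha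
      rw [coeff_mul_X', if_neg]
      rw [Finsupp.mem_support_iff, hadd01 a]
      simpa using ha
    have key4 : ∀ a : σ →₀ ℕ, 1 ≤ a b0 →
        coeff (a + Finsupp.single b1 1) (f * X b0)
          = coeff (a + Finsupp.single b1 1 - Finsupp.single b0 1) f := by
      intro a ha
      rw [coeff_mul_X', if_pos]
      rw [Finsupp.mem_support_iff, hadd01 a]
      omega
    have key5 : ∀ a : σ →₀ ℕ, a b1 = 0 →
        coeff (a + Finsupp.single b0 1) (f * X b1) = 0 := by
      intro a ha
      rw [coeff_mul_X', if_neg]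
      rw [Finsupp.mem_support_iff, hadd10 a]
      simpa using ha
    have key6 : ∀ a : σ →₀ ℕ, 1 ≤ a b1 →
        coeff (a + Finsupp.single b0 1) (f * X b1)
          = coeff (a + Finsupp.single b0 1 - Finsupp.single b1 1) f := by
      intro a ha
      rw [coeff_mul_X', if_pos]
      rw [Finsupp.mem_support_iff, hadd10 a]
      omega
    -- the descending-chain lemma
    have hdown : ∀ (n : ℕ) (a : σ →₀ ℕ), a b0 ≤ n → coeff a f ≠ 0 →
        ∃ (r : ℕ) (z : σ →₀ ℕ),
          (monomial (z + Finsupp.single b1 1) (1 : k)) ∈ I ^ t ∧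
          a b0 = z b0 + r ∧ z b1 = a b1 + r ∧ (∀ x, x ≠ b0 → x ≠ b1 → a x = z x) := by
      intro n
      induction n with
      | zero =>
        intro a ha0 haf
        refine ⟨0, a, ?_, by omega, by omega, fun _ _ _ => rfl⟩
        apply hmemc
        rw [hcoeff, key3 a (by omega), key1 a, zero_add]
        exact haf
      | succ n ih =>
        intro a ha0 haf
        by_cases hnz : coeff (a + Finsupp.single b1 1) (f * (X b0 + X b1)) ≠ 0
        · exact ⟨0, a, hmemc _ hnz, by omega, by omega, fun _ _ _ => rfl⟩
        · push_neg at hnz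
          have hab0 : 1 ≤ a b0 := by
            by_contra h'
            rw [hcoeff, key3 a (by omega), key1 a, zero_add] at hnz
            exact haf hnz
          set a' := a + Finsupp.single b1 1 - Finsupp.single b0 1 with ha'def
          have ha'f : coeff a' f ≠ 0 := by
            have hsum0 : coeff a' f + coeff a f = 0 := by
              rw [ha'def, ← key4 a hab0, ← key1 a, ← hcoeff]; exact hnz
            intro h0; rw [h0, zero_add] at hsum0; exact haf hsum0
          have ha'0 : a' b0 + 1 = a b0 := by
            rw [ha'def, Finsupp.tsub_apply, Finsupp.add_apply, s10, s00]
            omega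
          have ha'1 : a' b1 = a b1 + 1 := by
            rw [ha'def, Finsupp.tsub_apply, Finsupp.add_apply, s11, s01]
            omega
          have ha'x : ∀ x, x ≠ b0 → x ≠ b1 → a' x = a x := by
            intro x hx0 hx1
            rw [ha'def, Finsupp.tsub_apply, Finsupp.add_apply,
              Finsupp.single_eq_of_ne' (Ne.symm hx1), Finsupp.single_eq_of_ne' (Ne.symm hx0)]
            omega
          obtain ⟨r, z, hz1, hz2, hz3, hz4⟩ := ih a' (by omega) ha'f
          refine ⟨r + 1, z, hz1, by omega, by omega, ?_⟩
          intro x hx0 hx1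
          rw [← ha'x x hx0 hx1]
          exact hz4 x hx0 hx1
    -- upward lemma: for every a in the support, monomial (a + e0) lies in I^t
    have hA : ∀ (n : ℕ) (a : σ →₀ ℕ), a b1 ≤ n → coeff a f ≠ 0 →
        (monomial (a + Finsupp.single b0 1) (1 : k)) ∈ I ^ t := by
      intro n
      induction n with
      | zero =>
        intro a ha1 haf
        apply hmemc
        rw [hcoeff, key5 a (by omega), key2 a, add_zero]
        exact haf
      | succ n ih =>
        intro a ha1 haf
        by_cases hnz : coeff (a + Finsupp.single b0 1) (f * (X b0 + X b1)) ≠ 0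
        · exact hmemc _ hnz
        · push_neg at hnz
          have hab1 : 1 ≤ a b1 := by
            by_contra h'
            rw [hcoeff, key5 a (by omega), key2 a, add_zero] at hnz
            exact haf hnz
          set a' := a + Finsupp.single b0 1 - Finsupp.single b1 1 with ha'def
          have ha'f : coeff a' f ≠ 0 := by
            have hsum0 : coeff a f + coeff a' f = 0 := by
              rw [ha'def, ← key6 a hab1, ← key2 a, ← hcoeff]; exact hnz
            intro h0; rw [h0, add_zero] at hsum0; exact haf hsum0
          have ha'0 : a' b0 = a b0 + 1 := by
            rw [ha'def, Finsupp.tsub_apply, Finsupp.add_apply, s00, s10]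
            omega
          have ha'1 : a' b1 + 1 = a b1 := by
            rw [ha'def, Finsupp.tsub_apply, Finsupp.add_apply, s01, s11]
            omega
          have ha'x : ∀ x, x ≠ b0 → x ≠ b1 → a' x = a x := by
            intro x hx0 hx1
            rw [ha'def, Finsupp.tsub_apply, Finsupp.add_apply,
              Finsupp.single_eq_of_ne' (Ne.symm hx0), Finsupp.single_eq_of_ne' (Ne.symm hx1)]
            omega
          have hIH : (monomial (a' + Finsupp.single b0 1) (1 : k)) ∈ I ^ t :=
            ih a' (by omega) ha'f
          obtain ⟨r, z, hz1, hz2, hz3, hz4⟩ := hdown (a b0) a le_rfl haf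
          -- apply convexity with c = z + e1, c' = a' + e0, w = a + e0
          refine Stmt7Aux.conv hI hstar1 hstar2 ht3 (s := r + 2) (i := r + 1)
            (c := z + Finsupp.single b1 1) (c' := a' + Finsupp.single b0 1)
            (by omega) (by omega) ?_ ?_ ?_ ?_ ?_ ?_ hz1 hIH
          · rw [Finsupp.add_apply, Finsupp.add_apply, s00, s10]; omega
          · rw [Finsupp.add_apply, Finsupp.add_apply, s01, s11]; omega
          · intro x hx0 hx1
            have e1 := ha'x x hx0 hx1
            have e2 := hz4 x hx0 hx1
            rw [Finsupp.add_apply, Finsupp.add_apply, Finsupp.single_eq_of_ne' (Ne.symm hx0),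
              Finsupp.single_eq_of_ne' (Ne.symm hx1)]
            omega
          · rw [Finsupp.add_apply, Finsupp.add_apply, s00, s10]; omega
          · rw [Finsupp.add_apply, Finsupp.add_apply, s01, s11]; omega
          · intro x hx0 hx1
            have e2 := hz4 x hx0 hx1
            rw [Finsupp.add_apply, Finsupp.add_apply, Finsupp.single_eq_of_ne' (Ne.symm hx0),
              Finsupp.single_eq_of_ne' (Ne.symm hx1)]
            omega
    -- downward lemma
    have hB : ∀ a : σ →₀ ℕ, coeff a f ≠ 0 →
        (monomial (a + Finsupp.single b1 1) (1 : k)) ∈ I ^ t := by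
      intro a haf
      obtain ⟨r, z, hz1, hz2, hz3, hz4⟩ := hdown (a b0) a le_rfl haf
      rcases Nat.eq_zero_or_pos r with hr | hr
      · subst hr
        have haz : a = z := by
          apply Finsupp.ext; intro x
          by_cases hx0 : x = b0
          · rw [hx0]; omega
          · by_cases hx1 : x = b1
            · rw [hx1]; omega
            · exact hz4 x hx0 hx1
        rw [haz]; exact hz1
      · have hAa : (monomial (a + Finsupp.single b0 1) (1 : k)) ∈ I ^ t :=
          hA (a b1) a le_rfl haf
        refine Stmt7Aux.conv hI hstar1 hstar2 ht3 (s := r + 1) (i := r)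
          (c := z + Finsupp.single b1 1) (c' := a + Finsupp.single b0 1)
          (by omega) (by omega) ?_ ?_ ?_ ?_ ?_ ?_ hz1 hAa
        · rw [Finsupp.add_apply, Finsupp.add_apply, s00, s10]; omega
        · rw [Finsupp.add_apply, Finsupp.add_apply, s01, s11]; omega
        · intro x hx0 hx1
          have e2 := hz4 x hx0 hx1
          rw [Finsupp.add_apply, Finsupp.add_apply, Finsupp.single_eq_of_ne' (Ne.symm hx0),
            Finsupp.single_eq_of_ne' (Ne.symm hx1)]
          omega
        · rw [Finsupp.add_apply, Finsupp.add_apply, s10]; omega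
        · rw [Finsupp.add_apply, Finsupp.add_apply, s11]; omega
        · intro x hx0 hx1
          have e2 := hz4 x hx0 hx1
          rw [Finsupp.add_apply, Finsupp.add_apply, Finsupp.single_eq_of_ne' (Ne.symm hx1)]
          omega
    constructor
    · apply hJsupp2
      intro m hm
      rw [support_mul_X] at hm
      obtain ⟨a, ha, rfl⟩ := Finset.mem_map.mp hm
      rw [addRightEmbedding_apply]
      exact hA (a b1) a le_rfl (mem_support_iff.mp ha)
    · apply hJsupp2
      intro m hm
      rw [support_mul_X] at hm
      obtain ⟨a, ha, rfl⟩ := Finset.mem_map.mp hm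
      rw [addRightEmbedding_apply]
      exact hB a (mem_support_iff.mp ha)
  -- the colon ideal equality
  have heq : (I ^ t).colon (Ideal.span {(X b0 + X b1 : MvPolynomial σ k)})
      = (I ^ t).colon (Ideal.span {(X b0 : MvPolynomial σ k)})
        ⊓ (I ^ t).colon (Ideal.span {(X b1 : MvPolynomial σ k)}) := by
    apply le_antisymm
    · intro f hf
      rw [Ideal.mem_colon_span_singleton] at hf
      obtain ⟨h0, h1⟩ := hard f hf
      exact Ideal.mem_inf.mpr ⟨Ideal.mem_colon_span_singleton.mpr h0, Ideal.mem_colon_span_singleton.mpr h1⟩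
    · intro f hf
      obtain ⟨h0, h1⟩ := Ideal.mem_inf.mp hf
      rw [Ideal.mem_colon_span_singleton] at h0 h1 ⊢
      rw [mul_add]
      exact Ideal.add_mem _ h0 h1
  refine ⟨heq, ?_⟩
  rw [heq]
  set K := (I ^ t).colon (Ideal.span {(X b0 : MvPolynomial σ k)})
    ⊓ (I ^ t).colon (Ideal.span {(X b1 : MvPolynomial σ k)}) with hK
  refine ⟨{m : σ →₀ ℕ | (monomial m (1 : k)) ∈ K}, ?_⟩
  apply le_antisymm
  · intro f hf
    have hsupp : ∀ a ∈ f.support, (monomial a (1 : k)) ∈ K := by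
      intro a ha
      obtain ⟨h0, h1⟩ := Ideal.mem_inf.mp hf
      rw [Ideal.mem_colon_span_singleton] at h0 h1
      have hm0 : a + Finsupp.single b0 1 ∈ (f * X b0).support := by
        rw [support_mul_X]
        exact Finset.mem_map.mpr ⟨a, ha, by rw [addRightEmbedding_apply]⟩
      have hm1 : a + Finsupp.single b1 1 ∈ (f * X b1).support := by
        rw [support_mul_X]
        exact Finset.mem_map.mpr ⟨a, ha, by rw [addRightEmbedding_apply]⟩
      have hmon0 := hJsupp1 _ h0 _ hm0
      have hmon1 := hJsupp1 _ h1 _ hm1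
      refine Ideal.mem_inf.mpr ⟨Ideal.mem_colon_span_singleton.mpr ?_, Ideal.mem_colon_span_singleton.mpr ?_⟩
      · rw [hX0, Stmt7Aux.mon_mul]; exact hmon0
      · rw [hX1, Stmt7Aux.mon_mul]; exact hmon1
    have hmem : ∑ v ∈ f.support, monomial v (coeff v f)
        ∈ Ideal.span ((fun a => (monomial a (1 : k) : MvPolynomial σ k))
          '' {m : σ →₀ ℕ | (monomial m (1 : k)) ∈ K}) := by
      refine Ideal.sum_mem _ fun v hv => ?_
      have hmv : monomial v (coeff v f) = C (coeff v f) * monomial v (1 : k) := by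
        rw [C_mul_monomial, mul_one]
      rw [hmv]
      exact Ideal.mul_mem_left _ _ (Ideal.subset_span ⟨v, hsupp v hv, rfl⟩)
    rwa [← as_sum f] at hmem
  · rw [Ideal.span_le]
    rintro _ ⟨m, hm, rfl⟩
    exact hm
end

section
/- Let I be a proper monomial ideal in R and let b_0, b_1 be distinct variables satisfying condition (⋆) with respect to I. Suppose that there do not exist variables c and d (not necessarily distinct) such that all three of b_1c, b_1d and cd divide elements of G(I). Then f = b_0 + b_1 is regular on R/I². -/
open MvPolynomial

variable {σ k : Type*} [Field k]

/-! ### Auxiliary lemmas -/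

private lemma aux_pair_le {σ : Type*} (x y : σ) (v : σ →₀ ℕ) (hxy : x ≠ y)
    (hx : 1 ≤ v x) (hy : 1 ≤ v y) :
    Finsupp.single x 1 + Finsupp.single y 1 ≤ v := by
  rw [Finsupp.le_def]
  intro z
  rw [Finsupp.add_apply]
  rcases eq_or_ne x z with rfl | h1
  · rw [Finsupp.single_eq_same, Finsupp.single_eq_of_ne' (Ne.symm hxy)]; omega
  · rw [Finsupp.single_eq_of_ne' h1]
    rcases eq_or_ne y z with rfl | h2
    · rw [Finsupp.single_eq_same]; omega
    · rw [Finsupp.single_eq_of_ne' h2]; omega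

private lemma aux_pair2_le {σ : Type*} (x : σ) (v : σ →₀ ℕ) (hx : 2 ≤ v x) :
    Finsupp.single x 1 + Finsupp.single x 1 ≤ v := by
  rw [Finsupp.le_def]
  intro z
  rw [Finsupp.add_apply]
  rcases eq_or_ne x z with rfl | h1
  · rw [Finsupp.single_eq_same]; omega
  · rw [Finsupp.single_eq_of_ne' h1]; omega

private lemma aux_exists_minimalGens_le (I : Ideal (MvPolynomial σ k))
    {u : σ →₀ ℕ} (hu : (monomial u (1 : k) : MvPolynomial σ k) ∈ I) :
    ∃ a ∈ minimalGens I, a ≤ u := by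
  set s : Set (σ →₀ ℕ) := {b | (monomial b (1 : k) : MvPolynomial σ k) ∈ I ∧ b ≤ u} with hs
  have hne : s.Nonempty := ⟨u, hu, le_rfl⟩
  obtain ⟨a, ⟨haI, hau⟩, hmin⟩ := (Finsupp.wellFoundedLT' (N := ℕ)).wf.has_min s hne
  refine ⟨a, ⟨haI, fun b hbI hba => ?_⟩, hau⟩
  by_contra hne'
  exact hmin b ⟨hbI, hba.trans hau⟩ (lt_of_le_of_ne hba hne')

private lemma aux_sq_span (S : Set (σ →₀ ℕ)) :
    (Ideal.span ((fun a => (monomial a (1 : k) : MvPolynomial σ k)) '' S)) ^ 2 =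
      Ideal.span
        ((fun a => (monomial a (1 : k) : MvPolynomial σ k)) '' (Set.image2 (· + ·) S S)) := by
  rw [sq, Ideal.span_mul_span']
  congr 1
  rw [← Set.image2_mul, Set.image_image2, Set.image2_image_left, Set.image2_image_right]
  apply Set.image2_congr
  intro a _ b _
  rw [monomial_mul, one_mul]

private lemma aux_mono_mem (T : Set (σ →₀ ℕ)) (u : σ →₀ ℕ) :
    (monomial u (1 : k) : MvPolynomial σ k) ∈
        Ideal.span ((fun a => (monomial a (1 : k) : MvPolynomial σ k)) '' T) ↔
      ∃ t ∈ T, t ≤ u := by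
  classical
  rw [mem_ideal_span_monomial_image]
  constructor
  · intro h
    exact h u (by rw [support_monomial, if_neg (one_ne_zero)]; exact Finset.mem_singleton_self u)
  · intro h v hv
    rw [support_monomial, if_neg (one_ne_zero), Finset.mem_singleton] at hv
    exact hv ▸ h

private lemma aux_mem_supp (T : Set (σ →₀ ℕ))
    (p : MvPolynomial σ k)
    (hp : p ∈ Ideal.span ((fun a => (monomial a (1 : k) : MvPolynomial σ k)) '' T))
    (u : σ →₀ ℕ) (hu : u ∈ p.support) :
    (monomial u (1 : k) : MvPolynomial σ k) ∈
      Ideal.span ((fun a => (monomial a (1 : k) : MvPolynomial σ k)) '' T) := by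
  classical
  rw [aux_mono_mem]
  exact mem_ideal_span_monomial_image.mp hp u hu

/-- Characterization of monomials of `I ^ 2` in terms of the minimal generators. -/
private lemma aux_sq_char (I : Ideal (MvPolynomial σ k)) (S : Set (σ →₀ ℕ))
    (hS : I = Ideal.span ((fun a => (monomial a (1 : k) : MvPolynomial σ k)) '' S))
    (u : σ →₀ ℕ) :
    (monomial u (1 : k) : MvPolynomial σ k) ∈ I ^ 2 ↔
      ∃ a ∈ minimalGens I, ∃ a' ∈ minimalGens I, a + a' ≤ u := by
  constructor
  · intro h
    rw [hS, aux_sq_span, aux_mono_mem] at h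
    obtain ⟨t, ht, htu⟩ := h
    obtain ⟨s, hs, s', hs', rfl⟩ := ht
    have hsI : (monomial s (1 : k) : MvPolynomial σ k) ∈ I := by
      rw [hS]; exact Ideal.subset_span ⟨s, hs, rfl⟩
    have hs'I : (monomial s' (1 : k) : MvPolynomial σ k) ∈ I := by
      rw [hS]; exact Ideal.subset_span ⟨s', hs', rfl⟩
    obtain ⟨a, ha, has⟩ := aux_exists_minimalGens_le I hsI
    obtain ⟨a', ha', has'⟩ := aux_exists_minimalGens_le I hs'I
    exact ⟨a, ha, a', ha', le_trans (add_le_add has has') htu⟩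
  · rintro ⟨a, ha, a', ha', hle⟩
    have h1 : (monomial (a + a') (1 : k) : MvPolynomial σ k) ∈ I ^ 2 := by
      rw [sq]
      have := Ideal.mul_mem_mul ha.1 ha'.1
      rwa [monomial_mul, one_mul] at this
    have h2 : (monomial u (1 : k) : MvPolynomial σ k) =
        monomial (a + a') (1 : k) * monomial (u - (a + a')) (1 : k) := by
      rw [monomial_mul, one_mul, add_tsub_cancel_of_le hle]
    rw [h2]
    exact Ideal.mul_mem_right _ _ h1

/-- The chain-climbing lemma.  If all monomials of `g` lie outside the monomial ideal
`J = span T` but `(X i + X j) * g ∈ J`, then from any `u` in the support of `g` we can climb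
in direction `i` (trading `j`s for `i`s) until multiplying by `X i` lands in `J`. -/
private lemma aux_chain (T : Set (σ →₀ ℕ)) (i j : σ) (hij : i ≠ j) (g : MvPolynomial σ k)
    (hfg : (X i + X j) * g ∈
      Ideal.span ((fun a => (monomial a (1 : k) : MvPolynomial σ k)) '' T))
    (hsupp : ∀ u ∈ g.support, (monomial u (1 : k) : MvPolynomial σ k) ∉
      Ideal.span ((fun a => (monomial a (1 : k) : MvPolynomial σ k)) '' T)) :
    ∀ n : ℕ, ∀ u ∈ g.support, u j ≤ n → ∃ s : ℕ, ∃ v ∈ g.support,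
      v + s • Finsupp.single j 1 = u + s • Finsupp.single i 1 ∧
      (monomial (v + Finsupp.single i 1) (1 : k) : MvPolynomial σ k) ∈
        Ideal.span ((fun a => (monomial a (1 : k) : MvPolynomial σ k)) '' T) := by
  classical
  have hcoe : ∀ u : σ →₀ ℕ,
      (monomial u (1 : k) : MvPolynomial σ k) ∉
        Ideal.span ((fun a => (monomial a (1 : k) : MvPolynomial σ k)) '' T) →
      (if i ∈ u.support then coeff (u - Finsupp.single i 1) g else 0) +
        (if j ∈ u.support then coeff (u - Finsupp.single j 1) g else 0) = 0 := by
    intro u hu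
    have h0 : coeff u ((X i + X j) * g) = 0 := by
      by_contra h
      exact hu (aux_mem_supp T _ hfg u (mem_support_iff.mpr h))
    rw [add_mul, coeff_add, mul_comm (X i) g, mul_comm (X j) g,
      coeff_mul_X', coeff_mul_X'] at h0
    exact h0
  intro n
  induction n with
  | zero =>
    intro u hu hub
    by_cases hP : (monomial (u + Finsupp.single i 1) (1 : k) : MvPolynomial σ k) ∈
        Ideal.span ((fun a => (monomial a (1 : k) : MvPolynomial σ k)) '' T)
    · exact ⟨0, u, hu, by simp, hP⟩
    · exfalso
      have h1 := hcoe _ hP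
      have hmem : i ∈ (u + Finsupp.single i 1).support := by
        rw [Finsupp.mem_support_iff, Finsupp.add_apply, Finsupp.single_eq_same]; omega
      rw [if_pos hmem, add_tsub_cancel_right] at h1
      have hmem2 : ¬ j ∈ (u + Finsupp.single i 1).support := by
        rw [Finsupp.mem_support_iff, Finsupp.add_apply,
          Finsupp.single_eq_of_ne' hij]
        omega
      rw [if_neg hmem2, add_zero] at h1
      exact (mem_support_iff.mp hu) h1
  | succ n ih =>
    intro u hu hub
    by_cases hP : (monomial (u + Finsupp.single i 1) (1 : k) : MvPolynomial σ k) ∈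
        Ideal.span ((fun a => (monomial a (1 : k) : MvPolynomial σ k)) '' T)
    · exact ⟨0, u, hu, by simp, hP⟩
    · have h1 := hcoe _ hP
      have hmem : i ∈ (u + Finsupp.single i 1).support := by
        rw [Finsupp.mem_support_iff, Finsupp.add_apply, Finsupp.single_eq_same]; omega
      rw [if_pos hmem, add_tsub_cancel_right] at h1
      have hcu : coeff u g ≠ 0 := mem_support_iff.mp hu
      have hmem2 : j ∈ (u + Finsupp.single i 1).support := by
        by_contra h2
        rw [if_neg h2, add_zero] at h1
        exact hcu h1
      rw [if_pos hmem2] at h1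
      set v0 : σ →₀ ℕ := u + Finsupp.single i 1 - Finsupp.single j 1 with hv0
      have hv0mem : v0 ∈ g.support := by
        rw [mem_support_iff]
        intro h2
        rw [h2, add_zero] at h1
        exact hcu h1
      have hju : 1 ≤ u j := by
        have := Finsupp.mem_support_iff.mp hmem2
        rw [Finsupp.add_apply, Finsupp.single_eq_of_ne' hij] at this
        omega
      have hsle : Finsupp.single j 1 ≤ u + Finsupp.single i 1 := by
        rw [Finsupp.single_le_iff, Finsupp.add_apply, Finsupp.single_eq_of_ne' hij]
        omega
      have hcancel : v0 + Finsupp.single j 1 = u + Finsupp.single i 1 :=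
        tsub_add_cancel_of_le hsle
      have hv0j : v0 j ≤ n := by
        rw [hv0, Finsupp.tsub_apply, Finsupp.add_apply, Finsupp.single_eq_same,
          Finsupp.single_eq_of_ne' hij]
        omega
      obtain ⟨s, v, hv, heq, hP'⟩ := ih v0 hv0mem hv0j
      refine ⟨s + 1, v, hv, ?_, hP'⟩
      have : v + (s + 1) • Finsupp.single j 1 =
          (v + s • Finsupp.single j 1) + Finsupp.single j 1 := by
        rw [succ_nsmul, add_assoc]
      rw [this, heq, add_right_comm, hcancel, succ_nsmul, add_right_comm, add_assoc]

/-! ### Main theorem -/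

/-- Let `I` be a proper monomial ideal and `b₀, b₁` distinct variables
satisfying condition (⋆).  Suppose there do not exist variables `c, d` (not necessarily
distinct) such that `b₁c`, `b₁d` and `cd` all divide elements of `G(I)`.  Then
`f = b₀ + b₁` is regular on `R/I²`. -/
theorem stmt8 [Fintype σ]
    (I : Ideal (MvPolynomial σ k)) (hI : IsMonomialIdeal I) (hproper : I ≠ ⊤)
    (b0 b1 : σ) (hb : b0 ≠ b1)
    (hstar1 : ∀ a ∈ minimalGens I, a b0 ≤ 1 ∧ a b1 ≤ 1)
    (hstar2 : ∀ a ∈ minimalGens I, 1 ≤ a b0 → 1 ≤ a b1)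
    (hcd : ¬ ∃ c d : σ,
      (∃ a ∈ minimalGens I, Finsupp.single b1 1 + Finsupp.single c 1 ≤ a) ∧
      (∃ a ∈ minimalGens I, Finsupp.single b1 1 + Finsupp.single d 1 ≤ a) ∧
      (∃ a ∈ minimalGens I, Finsupp.single c 1 + Finsupp.single d 1 ≤ a)) :
    IsSMulRegular ((MvPolynomial σ k) ⧸ (I ^ 2)) (X b0 + X b1 : MvPolynomial σ k) := by
  classical
  obtain ⟨S, hS⟩ := hI
  have hchar := aux_sq_char I S hS
  -- the combinatorial collision lemma (L')
  have collision : ∀ (m0 ms : σ →₀ ℕ) (Sn : ℕ),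
      ms b0 = m0 b0 + Sn → ms b1 + Sn = m0 b1 →
      (∀ x, x ≠ b0 → x ≠ b1 → ms x = m0 x) →
      (monomial m0 (1 : k) : MvPolynomial σ k) ∉ I ^ 2 →
      (monomial ms (1 : k) : MvPolynomial σ k) ∉ I ^ 2 →
      (monomial (m0 + Finsupp.single b1 1) (1 : k) : MvPolynomial σ k) ∈ I ^ 2 →
      (monomial (ms + Finsupp.single b0 1) (1 : k) : MvPolynomial σ k) ∈ I ^ 2 → False := by
    intro m0 ms Sn hcb0 hcb1 hcoth hm0 hms hP0 hPs
    have notle : ∀ (p q m' : σ →₀ ℕ), p ∈ minimalGens I → q ∈ minimalGens I →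
        (monomial m' (1 : k) : MvPolynomial σ k) ∉ I ^ 2 → ∃ x, m' x < p x + q x := by
      intro p q m' hp hq hm'
      by_contra h
      push_neg at h
      refine hm' ((hchar m').2 ⟨p, hp, q, hq, Finsupp.le_def.mpr fun x => ?_⟩)
      rw [Finsupp.add_apply]
      exact h x
    obtain ⟨a, ha, a', ha', haa⟩ := (hchar _).1 hP0
    obtain ⟨c0, hc0, c0', hc0', hcc0⟩ := (hchar _).1 hPs
    have haa' : ∀ x, a x + a' x ≤ m0 x + (Finsupp.single b1 1) x := fun x => by
      have := Finsupp.le_def.mp haa x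
      rw [Finsupp.add_apply, Finsupp.add_apply] at this
      exact this
    -- a-side: a b1 + a' b1 = m0 b1 + 1
    have ea : a b1 + a' b1 = m0 b1 + 1 := by
      obtain ⟨x, hx⟩ := notle a a' m0 ha ha' hm0
      have h1 := haa' b1
      rw [Finsupp.single_eq_same] at h1
      rcases eq_or_ne x b1 with rfl | hxne
      · omega
      · exfalso
        have h2 := haa' x
        rw [Finsupp.single_eq_of_ne' (Ne.symm hxne)] at h2
        omega
    have m0b1 : m0 b1 ≤ 1 := by
      have := (hstar1 a ha).2
      have := (hstar1 a' ha').2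
      omega
    -- c-side, normalized so that b0 divides c
    have hcstep : ∃ c ∈ minimalGens I, ∃ c' ∈ minimalGens I,
        c + c' ≤ ms + Finsupp.single b0 1 ∧ 1 ≤ c b0 ∧ c b0 + c' b0 = ms b0 + 1 := by
      have hcc0' : ∀ x, c0 x + c0' x ≤ ms x + (Finsupp.single b0 1) x := fun x => by
        have := Finsupp.le_def.mp hcc0 x
        rw [Finsupp.add_apply, Finsupp.add_apply] at this
        exact this
      have ec : c0 b0 + c0' b0 = ms b0 + 1 := by
        obtain ⟨x, hx⟩ := notle c0 c0' ms hc0 hc0' hms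
        have h1 := hcc0' b0
        rw [Finsupp.single_eq_same] at h1
        rcases eq_or_ne x b0 with rfl | hxne
        · omega
        · exfalso
          have h2 := hcc0' x
          rw [Finsupp.single_eq_of_ne' (Ne.symm hxne)] at h2
          omega
      rcases Nat.eq_zero_or_pos (c0 b0) with h | h
      · exact ⟨c0', hc0', c0, hc0, by rwa [add_comm], by omega, by omega⟩
      · exact ⟨c0, hc0, c0', hc0', hcc0, h, ec⟩
    obtain ⟨c, hc, c', hc', hcc, hcb0pos, ecsum⟩ := hcstep
    have hcc' : ∀ x, c x + c' x ≤ ms x + (Finsupp.single b0 1) x := fun x => by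
      have := Finsupp.le_def.mp hcc x
      rw [Finsupp.add_apply, Finsupp.add_apply] at this
      exact this
    have hcb1 : c b1 = 1 := le_antisymm (hstar1 c hc).2 (hstar2 c hc hcb0pos)
    have msb1 : 1 ≤ ms b1 := by
      have := hcc' b1
      rw [Finsupp.single_eq_of_ne' hb] at this
      omega
    have hSn : Sn = 0 := by omega
    have hmeq : ms = m0 := by
      ext x
      rcases eq_or_ne x b0 with rfl | hx0
      · omega
      · rcases eq_or_ne x b1 with rfl | hx1
        · omega
        · exact hcoth x hx0 hx1
    rw [hmeq] at hcc' msb1 ecsum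
    have m0b1eq : m0 b1 = 1 := by omega
    have eab1 : a b1 = 1 ∧ a' b1 = 1 := by
      have := (hstar1 a ha).2
      have := (hstar1 a' ha').2
      omega
    have hc'b1 : c' b1 = 0 := by
      have := hcc' b1
      rw [Finsupp.single_eq_of_ne' hb] at this
      omega
    have hc'b0 : c' b0 = 0 := by
      by_contra h
      have := hstar2 c' hc' (by omega)
      omega
    have m0b0 : m0 b0 = 0 := by
      have := (hstar1 c hc).1
      omega
    have hab0 : a b0 = 0 ∧ a' b0 = 0 := by
      have := haa' b0
      rw [Finsupp.single_eq_of_ne' (Ne.symm hb)] at this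
      omega
    have hale : ∀ x, a x ≤ m0 x := by
      intro x
      rcases eq_or_ne x b1 with rfl | hx1
      · omega
      · have := haa' x
        rw [Finsupp.single_eq_of_ne' (Ne.symm hx1)] at this
        omega
    have ha'le : ∀ x, a' x ≤ m0 x := by
      intro x
      rcases eq_or_ne x b1 with rfl | hx1
      · omega
      · have := haa' x
        rw [Finsupp.single_eq_of_ne' (Ne.symm hx1)] at this
        omega
    have hc'le : ∀ x, c' x ≤ m0 x := by
      intro x
      rcases eq_or_ne x b0 with rfl | hx0
      · omega
      · have := hcc' x
        rw [Finsupp.single_eq_of_ne' (Ne.symm hx0)] at this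
        omega
    by_cases hcsupp : ∀ x, x ≠ b0 → x ≠ b1 → c x = 0
    · -- c = x_{b0} x_{b1}
      obtain ⟨w, hw⟩ := notle a c' m0 ha hc' hm0
      have hwb0 : w ≠ b0 := by rintro rfl; omega
      have hwb1 : w ≠ b1 := by rintro rfl; omega
      have haw : 1 ≤ a w ∧ 1 ≤ c' w := by
        have := hale w
        have := hc'le w
        omega
      obtain ⟨w', hw'⟩ := notle a' c' m0 ha' hc' hm0
      have hw'b0 : w' ≠ b0 := by rintro rfl; omega
      have hw'b1 : w' ≠ b1 := by rintro rfl; omega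
      have haw' : 1 ≤ a' w' ∧ 1 ≤ c' w' := by
        have := ha'le w'
        have := hc'le w'
        omega
      rcases eq_or_ne w w' with rfl | hne
      · have haaw := haa' w
        rw [Finsupp.single_eq_of_ne' (Ne.symm hwb1)] at haaw
        have hc'w2 : 2 ≤ c' w := by omega
        exact hcd ⟨w, w,
          ⟨a, ha, aux_pair_le b1 w a (Ne.symm hwb1) (by omega) haw.1⟩,
          ⟨a, ha, aux_pair_le b1 w a (Ne.symm hwb1) (by omega) haw.1⟩,
          ⟨c', hc', aux_pair2_le w c' hc'w2⟩⟩
      · exact hcd ⟨w, w',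
          ⟨a, ha, aux_pair_le b1 w a (Ne.symm hwb1) (by omega) haw.1⟩,
          ⟨a', ha', aux_pair_le b1 w' a' (Ne.symm hw'b1) (by omega) haw'.1⟩,
          ⟨c', hc', aux_pair_le w w' c' hne haw.2 haw'.2⟩⟩
    · push_neg at hcsupp
      obtain ⟨w, hwb0, hwb1, hcw⟩ := hcsupp
      exact hcd ⟨b0, w,
        ⟨c, hc, aux_pair_le b1 b0 c (Ne.symm hb) (by omega) hcb0pos⟩,
        ⟨c, hc, aux_pair_le b1 w c (Ne.symm hwb1) (by omega) (by omega)⟩,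
        ⟨c, hc, aux_pair_le b0 w c (Ne.symm hwb0) hcb0pos (by omega)⟩⟩
  -- J = I^2 as a monomial ideal
  set T2 : Set (σ →₀ ℕ) := Set.image2 (· + ·) S S with hT2
  have hJ : I ^ 2 = Ideal.span ((fun a => (monomial a (1 : k) : MvPolynomial σ k)) '' T2) := by
    rw [hS, aux_sq_span]
  -- the core claim: if fg ∈ I² and no monomial of g is in I², then g = 0
  have key : ∀ g : MvPolynomial σ k,
      (∀ u ∈ g.support, (monomial u (1 : k) : MvPolynomial σ k) ∉ I ^ 2) →
      (X b0 + X b1) * g ∈ I ^ 2 → g = 0 := by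
    intro g hsupp hfg
    by_contra hg
    obtain ⟨u, hu⟩ := ne_zero_iff.mp hg
    have hu : u ∈ g.support := mem_support_iff.mpr hu
    rw [hJ] at hfg
    have hsupp' : ∀ u ∈ g.support, (monomial u (1 : k) : MvPolynomial σ k) ∉
        Ideal.span ((fun a => (monomial a (1 : k) : MvPolynomial σ k)) '' T2) := by
      intro v hv
      rw [← hJ]
      exact hsupp v hv
    obtain ⟨s, ms, hmss, hup, hPs⟩ :=
      aux_chain T2 b0 b1 hb g hfg hsupp' (u b1) u hu le_rfl
    have hfg' : (X b1 + X b0) * g ∈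
        Ideal.span ((fun a => (monomial a (1 : k) : MvPolynomial σ k)) '' T2) := by
      rwa [add_comm (X b1)]
    obtain ⟨t, m0, hm0s, hdown, hP0⟩ :=
      aux_chain T2 b1 b0 (Ne.symm hb) g hfg' hsupp' (u b0) u hu le_rfl
    -- extract the componentwise relations
    refine collision m0 ms (s + t) ?_ ?_ ?_
      (by rw [← hJ] at hsupp'; exact hsupp' m0 hm0s)
      (by rw [← hJ] at hsupp'; exact hsupp' ms hmss)
      (by rw [hJ]; exact hP0) (by rw [hJ]; exact hPs)
    · have h1 := DFunLike.congr_fun hup b0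
      have h2 := DFunLike.congr_fun hdown b0
      simp only [Finsupp.add_apply, Finsupp.smul_apply, Finsupp.single_eq_same,
        Finsupp.single_eq_of_ne' (Ne.symm hb), Finsupp.single_eq_of_ne' hb, smul_eq_mul,
        mul_one, mul_zero, add_zero] at h1 h2
      omega
    · have h1 := DFunLike.congr_fun hup b1
      have h2 := DFunLike.congr_fun hdown b1
      simp only [Finsupp.add_apply, Finsupp.smul_apply, Finsupp.single_eq_same,
        Finsupp.single_eq_of_ne' (Ne.symm hb), Finsupp.single_eq_of_ne' hb, smul_eq_mul,
        mul_one, mul_zero, add_zero] at h1 h2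
      omega
    · intro x hx0 hx1
      have h1 := DFunLike.congr_fun hup x
      have h2 := DFunLike.congr_fun hdown x
      simp only [Finsupp.add_apply, Finsupp.smul_apply,
        Finsupp.single_eq_of_ne' (Ne.symm hx1), Finsupp.single_eq_of_ne' (Ne.symm hx0),
        smul_eq_mul, mul_one, mul_zero, add_zero] at h1 h2
      omega
  -- removing the part of g inside I² : the full regularity statement on representatives
  have main : ∀ g : MvPolynomial σ k, (X b0 + X b1) * g ∈ I ^ 2 → g ∈ I ^ 2 := by
    intro g hg
    set g1 : MvPolynomial σ k :=
      ∑ u ∈ g.support.filter (fun u => (monomial u (1 : k) : MvPolynomial σ k) ∉ I ^ 2),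
        monomial u (coeff u g) with hg1
    have hg1coeff : ∀ u : σ →₀ ℕ, coeff u g1 =
        if (monomial u (1 : k) : MvPolynomial σ k) ∉ I ^ 2 then coeff u g else 0 := by
      intro u
      rw [hg1, coeff_sum]
      simp only [coeff_monomial]
      rw [Finset.sum_ite_eq' _ u (fun v => coeff v g)]
      by_cases h : (monomial u (1 : k) : MvPolynomial σ k) ∉ I ^ 2
      · rw [if_pos h]
        by_cases h2 : u ∈ g.support
        · rw [if_pos (Finset.mem_filter.mpr ⟨h2, h⟩)]
        · rw [if_neg (fun hmem => h2 (Finset.mem_filter.mp hmem).1)]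
          exact (notMem_support_iff.mp h2).symm
      · rw [if_neg h]
        have hnm : u ∉ g.support.filter
            (fun u => (monomial u (1 : k) : MvPolynomial σ k) ∉ I ^ 2) :=
          fun hmem => h ((Finset.mem_filter.mp hmem).2)
        rw [if_neg hnm]
    have hg2 : g - g1 ∈ I ^ 2 := by
      rw [hJ, mem_ideal_span_monomial_image]
      intro v hv
      have hvne := mem_support_iff.mp hv
      rw [coeff_sub, hg1coeff] at hvne
      have hvmem : (monomial v (1 : k) : MvPolynomial σ k) ∈ I ^ 2 := by
        by_contra h
        rw [if_pos h, sub_self] at hvne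
        exact hvne rfl
      rw [hJ, aux_mono_mem] at hvmem
      exact hvmem
    have hfg1 : (X b0 + X b1) * g1 ∈ I ^ 2 := by
      have : (X b0 + X b1) * g1 = (X b0 + X b1) * g - (X b0 + X b1) * (g - g1) := by ring
      rw [this]
      exact Ideal.sub_mem _ hg (Ideal.mul_mem_left _ _ hg2)
    have hg1supp : ∀ u ∈ g1.support, (monomial u (1 : k) : MvPolynomial σ k) ∉ I ^ 2 := by
      intro u hu
      have := mem_support_iff.mp hu
      rw [hg1coeff] at this
      by_contra h
      rw [if_neg (fun h2 => h2 h)] at this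
      exact this rfl
    have hg10 : g1 = 0 := key g1 hg1supp hfg1
    have : g = g - g1 := by rw [hg10, sub_zero]
    rw [this]
    exact hg2
  -- conclude regularity
  intro x y hxy
  obtain ⟨gx, rfl⟩ := Ideal.Quotient.mk_surjective x
  obtain ⟨gy, rfl⟩ := Ideal.Quotient.mk_surjective y
  have hxy' : Ideal.Quotient.mk (I ^ 2) ((X b0 + X b1) * gx) =
      Ideal.Quotient.mk (I ^ 2) ((X b0 + X b1) * gy) := hxy
  rw [Ideal.Quotient.eq] at hxy'
  have : (X b0 + X b1) * (gx - gy) ∈ I ^ 2 := by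
    rwa [mul_sub]
  have := main _ this
  exact Ideal.Quotient.eq.mpr this
end

section
/- Let G be a finite simple graph with edge ideal I = I(G) ⊆ R, and let c_1, …, c_r be distinct leaves of G (vertices of degree one), with b_i the unique neighbor of c_i. Assume that d(c_i, c_j) ≥ 4 for all i ≠ j, and that no b_i lies on a triangle of G (i.e., there is no pair of vertices u, v with {b_i, u}, {b_i, v} and {u, v} all edges of G). Then x_{c_1} + x_{b_1}, x_{c_2} + x_{b_2}, …, x_{c_r} + x_{b_r} is a regular sequence on R/I² (hence depth(R/I²) ≥ r). -/
open MvPolynomial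

set_option linter.unusedSectionVars false
set_option maxHeartbeats 1000000
set_option synthInstance.maxHeartbeats 400000

noncomputable section EdgeAux

variable {V : Type*} [DecidableEq V]

def el (u : V) : V →₀ ℕ := Finsupp.single u 1

def me (p : V × V) : V →₀ ℕ := el p.1 + el p.2

def D2 (E : Set (V × V)) : Set (V →₀ ℕ) := {x | ∃ p ∈ E, ∃ q ∈ E, x = me p + me q}

lemma mem_D2 {E : Set (V × V)} {p q : V × V} (hp : p ∈ E) (hq : q ∈ E) :
    me p + me q ∈ D2 E := ⟨p, hp, q, hq, rfl⟩

lemma el_apply (u x : V) : el u x = if u = x then 1 else 0 := Finsupp.single_apply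

lemma me_apply (p : V × V) (x : V) :
    me p x = (if p.1 = x then 1 else 0) + (if p.2 = x then 1 else 0) := by
  simp [me, el_apply]

lemma me_pair (u v : V) : me (u, v) = el u + el v := rfl

lemma me_swap (u v : V) : me (u, v) = me (v, u) := by
  simp [me, add_comm]

end EdgeAux

section Key

variable {V : Type*} [DecidableEq V] {k : Type*} [CommRing k]

theorem keyLemma (E : Set (V × V)) (c b : V) (hcb : c ≠ b) (hcbE : (c, b) ∈ E)
    (hsym : ∀ u v, (u, v) ∈ E → (v, u) ∈ E)
    (hleaf : ∀ p ∈ E, me p c ≠ 0 → me p = me (c, b))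
    (htri : ¬∃ u v : V, (b, u) ∈ E ∧ (b, v) ∈ E ∧ (u, v) ∈ E)
    (g : MvPolynomial V k)
    (hg : ∀ μ ∈ ((X c + X b : MvPolynomial V k) * g).support, ∃ d ∈ D2 E, d ≤ μ) :
    ∀ m ∈ g.support, ∃ d ∈ D2 E, d ≤ m := by
  classical
  -- no loop at b
  have hbb : (b, b) ∉ E := fun h => htri ⟨b, b, h, h, h⟩
  -- edges containing b
  have hedgeb : ∀ p ∈ E, me p b ≠ 0 → ∃ w, (b, w) ∈ E ∧ me p = el b + el w ∧ w ≠ b := by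
    rintro ⟨u, v⟩ hp hpb
    rw [me_apply] at hpb
    by_cases hu : u = b
    · refine ⟨v, by rwa [hu] at hp, by rw [me_pair, hu], fun h => hbb (by rwa [hu, h] at hp)⟩
    · have hv : v = b := by
        simp only [hu, if_false] at hpb
        by_contra h
        simp [h] at hpb
      refine ⟨u, hsym _ _ (by rwa [hv] at hp), by rw [me_swap, me_pair, hv], hu⟩
  have hmecb_c : me (c, b) c = 1 := by simp [me_apply, hcb, Ne.symm hcb]
  have hmecb_b : me (c, b) b = 1 := by simp [me_apply, hcb, Ne.symm hcb]
  -- edge values at c and b are ≤ 1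
  have hmec : ∀ p ∈ E, me p c ≤ 1 := by
    intro p hp
    by_cases h : me p c = 0
    · omega
    · rw [hleaf p hp h, hmecb_c]
  have hmeb : ∀ p ∈ E, me p b ≤ 1 := by
    intro p hp
    by_cases h : me p b = 0
    · omega
    · obtain ⟨w, _, hw, hwb⟩ := hedgeb p hp h
      rw [hw]
      simp [Finsupp.add_apply, el_apply, hwb]
  have hdb2 : ∀ d ∈ D2 E, d b ≤ 2 := by
    rintro d ⟨p, hp, q, hq, rfl⟩
    have := hmeb p hp; have := hmeb q hq
    rw [Finsupp.add_apply]; omega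
  -- structure of d ∈ D2 with d c ≠ 0
  have hDc : ∀ d ∈ D2 E, d c ≠ 0 →
      d = me (c, b) + me (c, b) ∨ ∃ q ∈ E, me q c = 0 ∧ d = me (c, b) + me q := by
    rintro d ⟨p, hp, q, hq, rfl⟩ hdc
    rw [Finsupp.add_apply] at hdc
    by_cases hpc : me p c = 0
    · by_cases hqc : me q c = 0
      · omega
      · exact Or.inr ⟨p, hp, hpc, by rw [hleaf q hq hqc, add_comm]⟩
    · by_cases hqc : me q c = 0
      · exact Or.inr ⟨q, hq, hqc, by rw [hleaf p hp hpc]⟩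
      · exact Or.inl (by rw [hleaf p hp hpc, hleaf q hq hqc])
  have hDc0 : ∀ d ∈ D2 E, d c = 0 →
      ∃ p q, p ∈ E ∧ q ∈ E ∧ me p c = 0 ∧ me q c = 0 ∧ d = me p + me q := by
    rintro d ⟨p, hp, q, hq, rfl⟩ hdc
    rw [Finsupp.add_apply] at hdc
    exact ⟨p, q, hp, hq, by omega, by omega, rfl⟩
  -- coefficient formula
  have hco : ∀ μ : V →₀ ℕ, coeff μ ((X c + X b : MvPolynomial V k) * g) =
      (if μ c ≠ 0 then coeff (μ - el c) g else 0)
        + (if μ b ≠ 0 then coeff (μ - el b) g else 0) := by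
    intro μ
    rw [add_mul, coeff_add, mul_comm (X c), mul_comm (X b), coeff_mul_X', coeff_mul_X']
    simp [Finsupp.mem_support_iff, el]
  have hg' : ∀ μ : V →₀ ℕ,
      (if μ c ≠ 0 then coeff (μ - el c) g else 0)
        + (if μ b ≠ 0 then coeff (μ - el b) g else 0) ≠ 0 →
      ∃ d ∈ D2 E, d ≤ μ := by
    intro μ h
    exact hg μ (by rw [mem_support_iff, hco]; exact h)
  -- bound on c-degree
  set B := g.support.sup (fun m => m c) with hBdef
  have hB : ∀ m ∈ g.support, m c ≤ B := fun m hm => Finset.le_sup (f := fun m => m c) hm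
  have hbc : b ≠ c := Ne.symm hcb
  have helcc : el c c = 1 := by simp [el_apply]
  have helbc : el b c = 0 := by simp [el_apply, hbc]
  have helcb : el c b = 0 := by simp [el_apply, hcb]
  have helbb : el b b = 1 := by simp [el_apply]
  -- Step 1: every monomial of g dominates some d ∈ D2 away from the coordinate c
  have step1 : ∀ n (m : V →₀ ℕ), m ∈ g.support → B + 1 - m c = n →
      ∃ d ∈ D2 E, ∀ x, x ≠ c → d x ≤ m x := by
    intro n
    induction n using Nat.strong_induction_on with
    | _ n ih =>
      intro m hm hn
      have hmco : coeff m g ≠ 0 := mem_support_iff.mp hm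
      have hsub : m + el c - el c = m := add_tsub_cancel_right m (el c)
      have hμc : (m + el c) c ≠ 0 := by simp [Finsupp.add_apply, helcc]
      by_cases hF : (if (m + el c) c ≠ 0 then coeff ((m + el c) - el c) g else 0)
          + (if (m + el c) b ≠ 0 then coeff ((m + el c) - el b) g else 0) ≠ 0
      · obtain ⟨d, hdD, hdle⟩ := hg' _ hF
        refine ⟨d, hdD, fun x hx => ?_⟩
        have h1 := Finsupp.le_def.mp hdle x
        have h2 : el c x = 0 := by simp [el_apply, Ne.symm hx]
        rw [Finsupp.add_apply, h2, add_zero] at h1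
        exact h1
      · push_neg at hF
        rw [if_pos hμc, hsub] at hF
        by_cases hμb : (m + el c) b ≠ 0
        swap
        · rw [if_neg hμb, add_zero] at hF; exact absurd hF hmco
        rw [if_pos hμb] at hF
        set m' := (m + el c) - el b with hm'def
        have hm'co : coeff m' g ≠ 0 := fun h0 => hmco (by rwa [h0, add_zero] at hF)
        have hm'supp : m' ∈ g.support := mem_support_iff.mpr hm'co
        have hmb : m b ≠ 0 := by
          rw [Finsupp.add_apply, helcb, add_zero] at hμb; exact hμb
        have hm'c : m' c = m c + 1 := by
          rw [hm'def, Finsupp.tsub_apply, Finsupp.add_apply, helcc, helbc]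
          omega
        have h1 : m c ≤ B := hB m hm
        have h2 : m' c ≤ B := hB m' hm'supp
        obtain ⟨d, hdD, hd⟩ := ih (B + 1 - m' c) (by omega) m' hm'supp rfl
        refine ⟨d, hdD, fun x hx => ?_⟩
        have h3 := hd x hx
        have h4 : m' x ≤ m x := by
          rw [hm'def, Finsupp.tsub_apply, Finsupp.add_apply]
          have : el c x = 0 := by simp [el_apply, Ne.symm hx]
          omega
        omega
  -- Step 2: monomials of g with positive c-degree
  have step2 : ∀ m ∈ g.support, m c ≠ 0 → ∃ d ∈ D2 E, d ≤ m := by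
    intro m hm hmc
    have hmco : coeff m g ≠ 0 := mem_support_iff.mp hm
    obtain ⟨d0, hd0D, hd0⟩ := step1 (B + 1 - m c) m hm rfl
    by_cases hcle : d0 c ≤ m c
    · refine ⟨d0, hd0D, Finsupp.le_def.mpr fun x => ?_⟩
      rcases eq_or_ne x c with rfl | hxc
      · exact hcle
      · exact hd0 x hxc
    · rcases hDc d0 hd0D (by omega) with h2cb | ⟨q, hq, hqc, hd0eq⟩
      swap
      · exfalso
        have : d0 c = 1 := by rw [hd0eq, Finsupp.add_apply, hmecb_c, hqc]
        omega
      have hd0c : d0 c = 2 := by rw [h2cb, Finsupp.add_apply, hmecb_c]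
      have hmc1 : m c = 1 := by omega
      have hd0b : d0 b = 2 := by rw [h2cb, Finsupp.add_apply, hmecb_b]
      have hmb2 : 2 ≤ m b := by have := hd0 b hbc; omega
      have hμc : (m + el b) c ≠ 0 := by rw [Finsupp.add_apply, helbc]; omega
      have hμb : (m + el b) b ≠ 0 := by rw [Finsupp.add_apply, helbb]; omega
      have hsubb : m + el b - el b = m := add_tsub_cancel_right m (el b)
      by_cases hF : (if (m + el b) c ≠ 0 then coeff ((m + el b) - el c) g else 0)
          + (if (m + el b) b ≠ 0 then coeff ((m + el b) - el b) g else 0) ≠ 0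
      · obtain ⟨d, hdD, hdle⟩ := hg' _ hF
        refine ⟨d, hdD, Finsupp.le_def.mpr fun x => ?_⟩
        have h1 := Finsupp.le_def.mp hdle x
        rcases eq_or_ne x b with rfl | hxb
        · have := hdb2 d hdD; omega
        · have h2 : el b x = 0 := by simp [el_apply, Ne.symm hxb]
          rw [Finsupp.add_apply, h2, add_zero] at h1; exact h1
      · push_neg at hF
        rw [if_pos hμc, if_pos hμb, hsubb] at hF
        set m'' := m + el b - el c with hm''def
        have hm''co : coeff m'' g ≠ 0 := fun h0 => hmco (by rwa [h0, zero_add] at hF)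
        have hm''c : m'' c = 0 := by
          rw [hm''def, Finsupp.tsub_apply, Finsupp.add_apply, helbc, helcc]; omega
        have hm''x : ∀ x, x ≠ c → m'' x = (m + el b) x := by
          intro x hx
          rw [hm''def, Finsupp.tsub_apply]
          have : el c x = 0 := by simp [el_apply, Ne.symm hx]
          omega
        have hμ₂b : (m'' + el b) b ≠ 0 := by rw [Finsupp.add_apply, helbb]; omega
        have hF2 : (if (m'' + el b) c ≠ 0 then coeff ((m'' + el b) - el c) g else 0)
            + (if (m'' + el b) b ≠ 0 then coeff ((m'' + el b) - el b) g else 0) ≠ 0 := by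
          have hc0 : ¬ (m'' + el b) c ≠ 0 := by rw [Finsupp.add_apply, helbc]; omega
          rw [if_neg hc0, if_pos hμ₂b, add_tsub_cancel_right, zero_add]
          exact hm''co
        obtain ⟨d, hdD, hdle⟩ := hg' _ hF2
        have hdc0 : d c = 0 := by
          have := Finsupp.le_def.mp hdle c
          rw [Finsupp.add_apply, helbc] at this; omega
        obtain ⟨p, p', hp, hp', hpc, hp'c, hdeq⟩ := hDc0 d hdD hdc0
        have hdle' : ∀ x, x ≠ b → x ≠ c → me p x + me p' x ≤ m x := by
          intro x hxb hxc
          have h1 := Finsupp.le_def.mp hdle x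
          rw [hdeq, Finsupp.add_apply] at h1
          have h2 : el b x = 0 := by simp [el_apply, Ne.symm hxb]
          have h3 : el c x = 0 := by simp [el_apply, Ne.symm hxc]
          rw [Finsupp.add_apply, h2, add_zero] at h1
          have h4 : m'' x = m x := by
            rw [hm''x x hxc, Finsupp.add_apply, h2, add_zero]
          omega
        have hmepc : me p c = 0 := hpc
        by_cases hpb : me p b = 0
        · refine ⟨me (c, b) + me p, mem_D2 hcbE hp, Finsupp.le_def.mpr fun x => ?_⟩
          rw [Finsupp.add_apply]
          rcases eq_or_ne x c with rfl | hxc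
          · rw [hmecb_c, hpc]; omega
          · rcases eq_or_ne x b with rfl | hxb
            · rw [hmecb_b, hpb]; omega
            · have h5 : me (c, b) x = 0 := by
                rw [me_apply]; simp [Ne.symm hxc, Ne.symm hxb]
              have := hdle' x hxb hxc
              omega
        · by_cases hp'b : me p' b = 0
          · refine ⟨me (c, b) + me p', mem_D2 hcbE hp', Finsupp.le_def.mpr fun x => ?_⟩
            rw [Finsupp.add_apply]
            rcases eq_or_ne x c with rfl | hxc
            · rw [hmecb_c, hp'c]; omega
            · rcases eq_or_ne x b with rfl | hxb
              · rw [hmecb_b, hp'b]; omega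
              · have h5 : me (c, b) x = 0 := by
                  rw [me_apply]; simp [Ne.symm hxc, Ne.symm hxb]
                have := hdle' x hxb hxc
                omega
          · obtain ⟨w, hbw, hpw, hwb⟩ := hedgeb p hp hpb
            have hwc : w ≠ c := by
              intro h
              rw [hpw, Finsupp.add_apply, helbc, h, helcc] at hpc
              omega
            have hmw : 1 ≤ m w := by
              have h6 := hdle' w hwb hwc
              have h7 : me p w = 1 := by
                rw [hpw, Finsupp.add_apply, el_apply, el_apply]
                simp [Ne.symm hwb]
              omega
            refine ⟨me (c, b) + me (b, w), mem_D2 hcbE hbw, Finsupp.le_def.mpr fun x => ?_⟩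
            rw [Finsupp.add_apply, me_apply, me_apply]
            rcases eq_or_ne x c with rfl | hxc
            · simp [hcb, Ne.symm hcb, hbc, hwc]; omega
            · rcases eq_or_ne x b with rfl | hxb
              · simp [hcb, Ne.symm hcb, hwb]; omega
              · rcases eq_or_ne x w with rfl | hxw
                · simp [Ne.symm hxc, Ne.symm hxb]; omega
                · simp [Ne.symm hxc, Ne.symm hxb, Ne.symm hxw]
  -- Step 3: main conclusion
  intro m hm
  by_cases hmc : m c ≠ 0
  · exact step2 m hm hmc
  push_neg at hmc
  have hmco : coeff m g ≠ 0 := mem_support_iff.mp hm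
  have hstar : (∃ d ∈ D2 E, d ≤ m) ∨
      ∃ q, q ∈ E ∧ me q c = 0 ∧ 1 + me q b ≤ m b ∧ ∀ x, x ≠ b → x ≠ c → me q x ≤ m x := by
    have hμc : (m + el c) c ≠ 0 := by rw [Finsupp.add_apply, helcc]; omega
    have hsubc : m + el c - el c = m := add_tsub_cancel_right m (el c)
    by_cases hF : (if (m + el c) c ≠ 0 then coeff ((m + el c) - el c) g else 0)
        + (if (m + el c) b ≠ 0 then coeff ((m + el c) - el b) g else 0) ≠ 0
    · obtain ⟨d, hdD, hdle⟩ := hg' _ hF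
      by_cases hdc : d c = 0
      · left
        refine ⟨d, hdD, Finsupp.le_def.mpr fun x => ?_⟩
        have h1 := Finsupp.le_def.mp hdle x
        rcases eq_or_ne x c with rfl | hxc
        · omega
        · have h2 : el c x = 0 := by simp [el_apply, Ne.symm hxc]
          rw [Finsupp.add_apply, h2, add_zero] at h1; exact h1
      · rcases hDc d hdD hdc with h2cb | ⟨q, hq, hqc, hdeq⟩
        · exfalso
          have h1 := Finsupp.le_def.mp hdle c
          have h3 : d c = 2 := by rw [h2cb, Finsupp.add_apply, hmecb_c]
          rw [Finsupp.add_apply, helcc] at h1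
          omega
        · right
          refine ⟨q, hq, hqc, ?_, ?_⟩
          · have h1 := Finsupp.le_def.mp hdle b
            rw [hdeq, Finsupp.add_apply, hmecb_b, Finsupp.add_apply, helcb] at h1
            omega
          · intro x hxb hxc
            have h1 := Finsupp.le_def.mp hdle x
            have h2 : el c x = 0 := by simp [el_apply, Ne.symm hxc]
            have h5 : me (c, b) x = 0 := by rw [me_apply]; simp [Ne.symm hxc, Ne.symm hxb]
            rw [hdeq, Finsupp.add_apply, h5, zero_add, Finsupp.add_apply, h2, add_zero] at h1
            exact h1
    · push_neg at hF
      rw [if_pos hμc, hsubc] at hF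
      by_cases hμb : (m + el c) b ≠ 0
      swap
      · rw [if_neg hμb, add_zero] at hF; exact absurd hF hmco
      rw [if_pos hμb] at hF
      set ν := m + el c - el b with hνdef
      have hνco : coeff ν g ≠ 0 := fun h0 => hmco (by rwa [h0, add_zero] at hF)
      have hνsupp := mem_support_iff.mpr hνco
      have hmb : m b ≠ 0 := by rw [Finsupp.add_apply, helcb, add_zero] at hμb; exact hμb
      have hνc : ν c = 1 := by
        rw [hνdef, Finsupp.tsub_apply, Finsupp.add_apply, helcc, helbc]; omega
      have hνb : ν b = m b - 1 := by
        rw [hνdef, Finsupp.tsub_apply, Finsupp.add_apply, helcb, helbb]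
        omega
      have hνx : ∀ x, x ≠ b → x ≠ c → ν x = m x := by
        intro x hxb hxc
        rw [hνdef, Finsupp.tsub_apply, Finsupp.add_apply]
        have h2 : el c x = 0 := by simp [el_apply, Ne.symm hxc]
        have h3 : el b x = 0 := by simp [el_apply, Ne.symm hxb]
        omega
      obtain ⟨d, hdD, hdle⟩ := step2 ν hνsupp (by omega)
      by_cases hdc : d c = 0
      · left
        refine ⟨d, hdD, Finsupp.le_def.mpr fun x => ?_⟩
        have h1 := Finsupp.le_def.mp hdle x
        rcases eq_or_ne x c with rfl | hxc
        · omega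
        · rcases eq_or_ne x b with rfl | hxb
          · omega
          · rw [hνx x hxb hxc] at h1; exact h1
      · rcases hDc d hdD hdc with h2cb | ⟨q, hq, hqc, hdeq⟩
        · exfalso
          have h1 := Finsupp.le_def.mp hdle c
          have h3 : d c = 2 := by rw [h2cb, Finsupp.add_apply, hmecb_c]
          omega
        · right
          refine ⟨q, hq, hqc, ?_, ?_⟩
          · have h1 := Finsupp.le_def.mp hdle b
            rw [hdeq, Finsupp.add_apply, hmecb_b] at h1
            omega
          · intro x hxb hxc
            have h1 := Finsupp.le_def.mp hdle x
            have h5 : me (c, b) x = 0 := by rw [me_apply]; simp [Ne.symm hxc, Ne.symm hxb]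
            rw [hdeq, Finsupp.add_apply, h5, zero_add, hνx x hxb hxc] at h1
            exact h1
  rcases hstar with hdone | ⟨q, hq, hqc, hqb, hqoff⟩
  · exact hdone
  have hmb1 : 1 ≤ m b := by omega
  have hμ₂b : (m + el b) b ≠ 0 := by rw [Finsupp.add_apply, helbb]; omega
  have hF2 : (if (m + el b) c ≠ 0 then coeff ((m + el b) - el c) g else 0)
      + (if (m + el b) b ≠ 0 then coeff ((m + el b) - el b) g else 0) ≠ 0 := by
    have hc0 : ¬ (m + el b) c ≠ 0 := by rw [Finsupp.add_apply, helbc]; omega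
    rw [if_neg hc0, if_pos hμ₂b, add_tsub_cancel_right, zero_add]; exact hmco
  obtain ⟨δ, hδD, hδle⟩ := hg' _ hF2
  have hδc : δ c = 0 := by
    have h1 := Finsupp.le_def.mp hδle c
    rw [Finsupp.add_apply, helbc] at h1; omega
  obtain ⟨p, p', hp, hp', hpc, hp'c, hδeq⟩ := hDc0 δ hδD hδc
  have hδoff : ∀ x, x ≠ b → me p x + me p' x ≤ m x := by
    intro x hxb
    have h1 := Finsupp.le_def.mp hδle x
    have h2 : el b x = 0 := by simp [el_apply, Ne.symm hxb]
    rw [hδeq, Finsupp.add_apply] at h1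
    rw [Finsupp.add_apply, h2, add_zero] at h1
    exact h1
  by_cases hδb : me p b + me p' b ≤ m b
  · refine ⟨me p + me p', mem_D2 hp hp', Finsupp.le_def.mpr fun x => ?_⟩
    rw [Finsupp.add_apply]
    rcases eq_or_ne x b with rfl | hxb
    · exact hδb
    · exact hδoff x hxb
  · have hpb1 : me p b ≤ 1 := hmeb p hp
    have hp'b1 : me p' b ≤ 1 := hmeb p' hp'
    have h1 := Finsupp.le_def.mp hδle b
    rw [hδeq, Finsupp.add_apply, Finsupp.add_apply, helbb] at h1
    have hmbeq : m b = 1 := by omega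
    have hpb : me p b ≠ 0 := by omega
    have hp'b : me p' b ≠ 0 := by omega
    obtain ⟨w, hbw, hpw, hwb⟩ := hedgeb p hp hpb
    obtain ⟨w', hbw', hp'w, hw'b⟩ := hedgeb p' hp' hp'b
    have hwc : w ≠ c := by
      intro h
      rw [hpw, Finsupp.add_apply, helbc, h, helcc] at hpc
      omega
    have hw'c : w' ≠ c := by
      intro h
      rw [hp'w, Finsupp.add_apply, helbc, h, helcc] at hp'c
      omega
    have hqb0 : me q b = 0 := by omega
    obtain ⟨s, t⟩ := q
    have hsb : s ≠ b := by
      intro h; rw [me_apply] at hqb0; simp [h] at hqb0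
    have htb : t ≠ b := by
      intro h; rw [me_apply] at hqb0; simp [h] at hqb0
    have hsc : s ≠ c := by
      intro h; rw [me_apply] at hqc; simp [h] at hqc
    have htc : t ≠ c := by
      intro h; rw [me_apply] at hqc; simp [h] at hqc
    have hww : ∀ x, x ≠ b → el w x + el w' x ≤ m x := by
      intro x hxb
      have h2 := hδoff x hxb
      rw [hpw, hp'w, Finsupp.add_apply, Finsupp.add_apply] at h2
      have h3 : el b x = 0 := by simp [el_apply, Ne.symm hxb]
      omega
    have hms : 1 ≤ m s := by
      have h2 := hqoff s hsb hsc
      rw [me_apply] at h2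
      simp at h2
      omega
    have hmt : 1 ≤ m t := by
      have h2 := hqoff t htb htc
      rw [me_apply] at h2
      simp at h2
      omega
    have hfin : ∀ w0, (b, w0) ∈ E → w0 ≠ b → w0 ≠ c → 1 ≤ m w0 → w0 ≠ s → w0 ≠ t →
        ∃ d ∈ D2 E, d ≤ m := by
      intro w0 hbw0 hw0b hw0c hmw0 hw0s hw0t
      refine ⟨me (b, w0) + me (s, t), mem_D2 hbw0 hq, Finsupp.le_def.mpr fun x => ?_⟩
      rw [Finsupp.add_apply, me_apply, me_apply]
      rcases eq_or_ne x b with rfl | hxb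
      · rw [if_pos rfl, if_neg hw0b, if_neg hsb, if_neg htb]; omega
      · rcases eq_or_ne x w0 with rfl | hxw
        · rw [if_neg (Ne.symm hw0b), if_pos rfl, if_neg (Ne.symm hw0s), if_neg (Ne.symm hw0t)]
          omega
        · rcases eq_or_ne x c with rfl | hxc
          · rw [if_neg hbc, if_neg hw0c, if_neg hsc, if_neg htc]; omega
          · have h2 := hqoff x hxb hxc
            rw [me_apply] at h2
            rw [if_neg (Ne.symm hxb), if_neg (Ne.symm hxw)]
            omega
    by_cases hws : w ≠ s ∧ w ≠ t
    · have hmw : 1 ≤ m w := by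
        have h2 := hww w hwb
        rw [el_apply, if_pos rfl] at h2
        omega
      exact hfin w hbw hwb hwc hmw hws.1 hws.2
    · by_cases hw's : w' ≠ s ∧ w' ≠ t
      · have hmw' : 1 ≤ m w' := by
          have h2 := hww w' hw'b
          rw [el_apply (u := w'), if_pos rfl] at h2
          omega
        exact hfin w' hbw' hw'b hw'c hmw' hw's.1 hw's.2
      · have hwst : w = s ∨ w = t := by
          rcases not_and_or.mp hws with h | h
          · exact Or.inl (not_not.mp h)
          · exact Or.inr (not_not.mp h)
        have hw'st : w' = s ∨ w' = t := by
          rcases not_and_or.mp hw's with h | h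
          · exact Or.inl (not_not.mp h)
          · exact Or.inr (not_not.mp h)
        rcases eq_or_ne w w' with rfl | hww'
        · -- w = w' : 2 ≤ m w, use the edge of q through w
          have hmw2 : 2 ≤ m w := by
            have h2 := hww w hwb
            rw [el_apply, if_pos rfl] at h2
            omega
          rcases hwst with h1 | h1
          · -- w = s ; q = (s, t)
            have hbs : (b, s) ∈ E := by rw [← h1]; exact hbw
            have hms2 : 2 ≤ m s := by rw [← h1]; exact hmw2
            rcases eq_or_ne t s with hts0 | hts
            · exact absurd ⟨s, s, hbs, hbs, by rw [hts0] at hq; exact hq⟩ htri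
            · refine ⟨me (b, s) + me (s, t), mem_D2 hbs hq, Finsupp.le_def.mpr fun x => ?_⟩
              rw [Finsupp.add_apply, me_apply, me_apply]
              rcases eq_or_ne x b with rfl | hxb
              · rw [if_pos rfl, if_neg hsb, if_neg htb]; omega
              · rcases eq_or_ne x s with rfl | hxs
                · rw [if_neg (Ne.symm hsb), if_pos rfl, if_neg hts]; omega
                · rcases eq_or_ne x t with rfl | hxt
                  · rw [if_neg (Ne.symm htb), if_neg (Ne.symm hts), if_pos rfl]
                    omega
                  · rw [if_neg (Ne.symm hxb), if_neg (Ne.symm hxs), if_neg (Ne.symm hxt)]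
                    omega
          · -- w = t ; q = (s, t)
            have hbt : (b, t) ∈ E := by rw [← h1]; exact hbw
            have hmt2 : 2 ≤ m t := by rw [← h1]; exact hmw2
            rcases eq_or_ne s t with hst0 | hst
            · exact absurd ⟨t, t, hbt, hbt, by rw [hst0] at hq; exact hq⟩ htri
            · have hts2 : (t, s) ∈ E := hsym s t hq
              refine ⟨me (b, t) + me (t, s), mem_D2 hbt hts2, Finsupp.le_def.mpr fun x => ?_⟩
              rw [Finsupp.add_apply, me_apply, me_apply]
              rcases eq_or_ne x b with rfl | hxb
              · rw [if_pos rfl, if_neg htb, if_neg hsb]; omega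
              · rcases eq_or_ne x t with rfl | hxt
                · rw [if_neg (Ne.symm htb), if_pos rfl, if_neg hst]; omega
                · rcases eq_or_ne x s with rfl | hxs
                  · rw [if_neg (Ne.symm hsb), if_neg (Ne.symm hst), if_pos rfl]
                    omega
                  · rw [if_neg (Ne.symm hxb), if_neg (Ne.symm hxt), if_neg (Ne.symm hxs)]
                    omega
        · -- w ≠ w' : {w, w'} = {s, t} gives a triangle at b
          exfalso
          rcases hwst with h1 | h1 <;> rcases hw'st with h2 | h2
          · exact hww' (h1.trans h2.symm)
          · exact htri ⟨w, w', hbw, hbw', by rw [h1, h2]; exact hq⟩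
          · exact htri ⟨w, w', hbw, hbw', by rw [h1, h2]; exact hsym s t hq⟩
          · exact hww' (h1.trans h2.symm)

end Key

section Bridge

variable {V : Type*} [DecidableEq V] {k : Type*} [CommRing k]

lemma X_mul_X_eq (u v : V) : (X u * X v : MvPolynomial V k) = monomial (me (u, v)) 1 := by
  rw [show (X u : MvPolynomial V k) = monomial (el u) 1 from rfl,
    show (X v : MvPolynomial V k) = monomial (el v) 1 from rfl, monomial_mul, one_mul]
  rfl

/-- the span of the edge monomials of `E` -/
lemma span_edgeSet (E' : Set (V × V)) :
    Ideal.span ((fun d => monomial d (1 : k)) '' (me '' E')) =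
      Ideal.span {p : MvPolynomial V k | ∃ e ∈ E', p = X e.1 * X e.2} := by
  congr 1
  ext p
  constructor
  · rintro ⟨_, ⟨e, he, rfl⟩, rfl⟩
    exact ⟨e, he, (X_mul_X_eq e.1 e.2).symm⟩
  · rintro ⟨e, he, rfl⟩
    exact ⟨me e, ⟨e, he, rfl⟩, (X_mul_X_eq e.1 e.2).symm⟩

lemma span_edgeSet_sq (E' : Set (V × V)) :
    Ideal.span {p : MvPolynomial V k | ∃ e ∈ E', p = X e.1 * X e.2} ^ 2 =
      Ideal.span ((fun d => monomial d (1 : k)) '' D2 E') := by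
  rw [← span_edgeSet, pow_two, Ideal.span_mul_span']
  congr 1
  ext p
  constructor
  · rintro ⟨_, ⟨_, ⟨e, he, rfl⟩, rfl⟩, _, ⟨_, ⟨e', he', rfl⟩, rfl⟩, rfl⟩
    exact ⟨me e + me e', ⟨e, he, e', he', rfl⟩, by simp [monomial_mul]⟩
  · rintro ⟨_, ⟨e, he, e', he', rfl⟩, rfl⟩
    exact ⟨monomial (me e) 1, ⟨me e, ⟨e, he, rfl⟩, rfl⟩,
      monomial (me e') 1, ⟨me e', ⟨e', he', rfl⟩, rfl⟩, by simp [monomial_mul]⟩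

end Bridge

section Plumbing

variable {R : Type*} [CommRing R]

lemma smul_top_mem_iff (J I : Ideal R) (x : R) :
    Ideal.Quotient.mk J x ∈ (I • ⊤ : Submodule R (R ⧸ J)) ↔ x ∈ J ⊔ I := by
  rw [Ideal.smul_top_eq_map, Submodule.restrictScalars_mem, Ideal.Quotient.algebraMap_eq,
    Ideal.mem_map_iff_of_surjective _ Ideal.Quotient.mk_surjective]
  constructor
  · rintro ⟨a, haI, ha⟩
    have h1 : a - x ∈ J := Ideal.Quotient.eq.mp ha
    exact Submodule.mem_sup.mpr ⟨x - a, by simpa using J.neg_mem h1, a, haI, sub_add_cancel x a⟩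
  · intro hx
    obtain ⟨y, hy, z, hz, rfl⟩ := Submodule.mem_sup.mp hx
    exact ⟨z, hz, by rw [map_add, Ideal.Quotient.eq_zero_iff_mem.mpr hy, zero_add]⟩

lemma isSMulRegular_quot (J I : Ideal R) (f : R)
    (H : ∀ g : R, f * g ∈ J ⊔ I → g ∈ J ⊔ I) :
    IsSMulRegular ((R ⧸ J) ⧸ (I • ⊤ : Submodule R (R ⧸ J))) f := by
  intro x y hxy
  obtain ⟨x, rfl⟩ := Submodule.Quotient.mk_surjective _ x
  obtain ⟨y, rfl⟩ := Submodule.Quotient.mk_surjective _ y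
  obtain ⟨x, rfl⟩ := Ideal.Quotient.mk_surjective x
  obtain ⟨y, rfl⟩ := Ideal.Quotient.mk_surjective y
  have hs : ∀ z : R, f • Submodule.Quotient.mk (p := (I • ⊤ : Submodule R (R ⧸ J)))
      (Ideal.Quotient.mk J z) = Submodule.Quotient.mk (Ideal.Quotient.mk J (f * z)) := by
    intro z
    rw [← Submodule.Quotient.mk_smul]
    congr 1
  have hxy' : f • Submodule.Quotient.mk (p := (I • ⊤ : Submodule R (R ⧸ J)))
      (Ideal.Quotient.mk J x) = f • Submodule.Quotient.mk (Ideal.Quotient.mk J y) := hxy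
  rw [hs, hs, Submodule.Quotient.eq, ← map_sub, ← mul_sub, smul_top_mem_iff] at hxy'
  have h2 := H _ hxy'
  rw [Submodule.Quotient.eq, ← map_sub, smul_top_mem_iff]
  exact h2

end Plumbing


noncomputable section Subst

variable {V : Type*} [DecidableEq V] {k : Type*} [CommRing k] {r : ℕ}

open Classical in
/-- substitute `c j ↦ b j` for `j < i` -/
def subf (c b : Fin r → V) (i : ℕ) (v : V) : V :=
  if h : ∃ j : Fin r, (j : ℕ) < i ∧ c j = v then b h.choose else v

open Classical in
/-- the algebra endomorphism `x_{c j} ↦ -x_{b j}` for `j < i` -/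
def psi (k : Type*) [CommRing k] (c b : Fin r → V) (i : ℕ) :
    MvPolynomial V k →ₐ[k] MvPolynomial V k :=
  aeval fun v => if h : ∃ j : Fin r, (j : ℕ) < i ∧ c j = v then -X (b h.choose) else X v

variable {c b : Fin r → V}

lemma subf_of_not {i : ℕ} {v : V} (h : ¬ ∃ j : Fin r, (j : ℕ) < i ∧ c j = v) :
    subf c b i v = v := dif_neg h

lemma psi_X_of_not {i : ℕ} {v : V} (h : ¬ ∃ j : Fin r, (j : ℕ) < i ∧ c j = v) :
    psi k c b i (X v) = X v := by
  rw [psi, aeval_X, dif_neg h]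

lemma psi_X_of {i : ℕ} {v : V} (h : ∃ j : Fin r, (j : ℕ) < i ∧ c j = v) :
    psi k c b i (X v) = -X (subf c b i v) := by
  rw [psi, aeval_X, dif_pos h, subf, dif_pos h]

lemma subf_c (hc : Function.Injective c) {i : ℕ} {j : Fin r} (hj : (j : ℕ) < i) :
    subf c b i (c j) = b j := by
  have h : ∃ l : Fin r, (l : ℕ) < i ∧ c l = c j := ⟨j, hj, rfl⟩
  rw [subf, dif_pos h]
  congr 1
  exact hc h.choose_spec.2

lemma psi_X_c (hc : Function.Injective c) {i : ℕ} {j : Fin r} (hj : (j : ℕ) < i) :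
    psi k c b i (X (c j)) = -X (b j) := by
  rw [psi_X_of ⟨j, hj, rfl⟩, subf_c hc hj]

lemma subf_cases (i : ℕ) (v : V) :
    ((¬ ∃ j : Fin r, (j : ℕ) < i ∧ c j = v) ∧ subf c b i v = v) ∨
      ∃ j : Fin r, (j : ℕ) < i ∧ v = c j ∧ subf c b i v = b j := by
  by_cases h : ∃ j : Fin r, (j : ℕ) < i ∧ c j = v
  · exact Or.inr ⟨h.choose, h.choose_spec.1, h.choose_spec.2.symm, by rw [subf, dif_pos h]⟩
  · exact Or.inl ⟨h, subf_of_not h⟩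

lemma psi_sub_mem (i : ℕ) (h : MvPolynomial V k) :
    h - psi k c b i h ∈
      Ideal.span {p : MvPolynomial V k | ∃ j : Fin r, (j : ℕ) < i ∧ p = X (c j) + X (b j)} := by
  set K := Ideal.span {p : MvPolynomial V k | ∃ j : Fin r, (j : ℕ) < i ∧ p = X (c j) + X (b j)}
    with hK
  have hX : ∀ v, (X v : MvPolynomial V k) - psi k c b i (X v) ∈ K := by
    intro v
    by_cases h : ∃ j : Fin r, (j : ℕ) < i ∧ c j = v
    · rw [psi_X_of h, sub_neg_eq_add, subf, dif_pos h]
      exact Ideal.subset_span ⟨h.choose, h.choose_spec.1, by rw [h.choose_spec.2]⟩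
    · rw [psi_X_of_not h, sub_self]; exact K.zero_mem
  induction h using MvPolynomial.induction_on with
  | C a => simp only [psi, aeval_C, algebraMap_eq, sub_self]; exact K.zero_mem
  | add p q hp hq =>
      have heq : p + q - psi k c b i (p + q) = (p - psi k c b i p) + (q - psi k c b i q) := by
        rw [map_add]; ring
      rw [heq]; exact K.add_mem hp hq
  | mul_X p v hp =>
      have heq : p * X v - psi k c b i (p * X v) =
          (p - psi k c b i p) * X v + psi k c b i p * (X v - psi k c b i (X v)) := by
        rw [map_mul]; ring
      rw [heq]
      exact K.add_mem (Ideal.mul_mem_right _ _ hp) (Ideal.mul_mem_left _ _ (hX v))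

end Subst


section Main

variable {V : Type*} [DecidableEq V] {k : Type*} [Field k]
variable (G : SimpleGraph V) {r : ℕ} (c b : Fin r → V)

/-- the image of the edge set of `G` under `subf c b i` -/
def EsSet (i : ℕ) : Set (V × V) :=
  {e | ∃ u v, G.Adj u v ∧ e = (subf c b i u, subf c b i v)}

noncomputable def IsubI (i : ℕ) : Ideal (MvPolynomial V k) :=
  Ideal.span {p | ∃ e ∈ EsSet G c b i, p = X e.1 * X e.2}

noncomputable def KspanI (i : ℕ) : Ideal (MvPolynomial V k) :=
  Ideal.span {p | ∃ j : Fin r, (j : ℕ) < i ∧ p = X (c j) + X (b j)}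

theorem stmt10' [Fintype V] [DecidableRel G.Adj]
    (hc : Function.Injective c)
    (hleaf : ∀ i, G.neighborFinset (c i) = {b i})
    (hdist : ∀ i j, i ≠ j → 4 ≤ G.dist (c i) (c j))
    (htri : ∀ i, ¬ ∃ u v : V, G.Adj (b i) u ∧ G.Adj (b i) v ∧ G.Adj u v) :
    RingTheory.Sequence.IsRegular ((MvPolynomial V k) ⧸ (edgeIdeal k G ^ 2))
      (List.ofFn fun i : Fin r => (X (c i) + X (b i) : MvPolynomial V k)) := by
  classical
  -- basic graph facts
  have hGadj : ∀ i, G.Adj (c i) (b i) := by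
    intro i
    have h1 : b i ∈ G.neighborFinset (c i) := by
      rw [hleaf i]; exact Finset.mem_singleton_self _
    exact (SimpleGraph.mem_neighborFinset _ _ _).mp h1
  have hnbr : ∀ i v, G.Adj (c i) v → v = b i := by
    intro i v hv
    have h1 : v ∈ G.neighborFinset (c i) := (SimpleGraph.mem_neighborFinset _ _ _).mpr hv
    rw [hleaf i] at h1
    exact Finset.mem_singleton.mp h1
  have hw1 : ∀ i j : Fin r, i ≠ j → ¬ G.Adj (c i) (c j) := by
    intro i j hij hadj
    have h4 := hdist i j hij
    have h5 := SimpleGraph.dist_le (SimpleGraph.Walk.cons hadj SimpleGraph.Walk.nil)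
    simp at h5
    omega
  have hw2 : ∀ i j : Fin r, i ≠ j → ∀ x, G.Adj (c i) x → G.Adj x (c j) → False := by
    intro i j hij x h1 h2
    have h4 := hdist i j hij
    have h5 := SimpleGraph.dist_le
      (SimpleGraph.Walk.cons h1 (SimpleGraph.Walk.cons h2 SimpleGraph.Walk.nil))
    simp at h5
    omega
  have hw3 : ∀ i j : Fin r, i ≠ j → ∀ x y, G.Adj (c i) x → G.Adj x y → G.Adj y (c j) → False := by
    intro i j hij x y h1 h2 h3
    have h4 := hdist i j hij
    have h5 := SimpleGraph.dist_le (SimpleGraph.Walk.cons h1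
      (SimpleGraph.Walk.cons h2 (SimpleGraph.Walk.cons h3 SimpleGraph.Walk.nil)))
    simp at h5
    omega
  have hbcl : ∀ j l : Fin r, b j ≠ c l := by
    intro j l heq
    by_cases hjl : j = l
    · subst hjl; exact (hGadj j).ne' heq
    · exact hw1 j l hjl (heq ▸ hGadj j)
  -- subf facts
  have hsubf_bi : ∀ (i : ℕ) (j : Fin r), subf c b i (b j) = b j := by
    intro i j
    apply subf_of_not
    rintro ⟨l, hl, hlb⟩
    exact hbcl j l hlb.symm
  have hsubf_ci : ∀ i : Fin r, subf c b (i : ℕ) (c i) = c i := by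
    intro i
    apply subf_of_not
    rintro ⟨l, hl, hlb⟩
    have := hc hlb
    omega
  have hsubf_eq_ci : ∀ (i : Fin r) (v : V), subf c b (i : ℕ) v = c i → v = c i := by
    intro i v hv
    rcases subf_cases (c := c) (b := b) (i : ℕ) v with ⟨hne, hid⟩ | ⟨j, hj, rfl, hbj⟩
    · rw [hid] at hv; exact hv
    · exfalso; rw [hbj] at hv; exact hbcl j i hv
  have hsubf_eq_bi : ∀ (i : Fin r) (v : V), subf c b (i : ℕ) v = b i → v = b i := by
    intro i v hv
    rcases subf_cases (c := c) (b := b) (i : ℕ) v with ⟨hne, hid⟩ | ⟨j, hj, rfl, hbj⟩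
    · rw [hid] at hv; exact hv
    · exfalso
      rw [hbj] at hv
      have hij : i ≠ j := by intro h; subst h; omega
      exact hw2 i j hij (b i) (hGadj i) (by rw [← hv]; exact (hGadj j).symm)
  have hsubf_ne_c : ∀ (i : ℕ) (v : V) (l : Fin r), (l : ℕ) < i → c l ≠ subf c b i v := by
    intro i v l hl hlv
    rcases subf_cases (c := c) (b := b) i v with ⟨hne, hid⟩ | ⟨j, hj, rfl, hbj⟩
    · rw [hid] at hlv; exact hne ⟨l, hl, hlv⟩
    · rw [hbj] at hlv; exact hbcl j l hlv.symm
  -- properties of EsSet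
  have hEs_sym : ∀ (i : Fin r) (u v : V), (u, v) ∈ EsSet G c b (i : ℕ) →
      (v, u) ∈ EsSet G c b (i : ℕ) := by
    rintro i u v ⟨x, y, hxy, heq⟩
    simp only [Prod.mk.injEq] at heq
    exact ⟨y, x, hxy.symm, by simp only [Prod.mk.injEq]; exact ⟨heq.2, heq.1⟩⟩
  have hEs_cbi : ∀ i : Fin r, (c i, b i) ∈ EsSet G c b (i : ℕ) := by
    intro i
    exact ⟨c i, b i, hGadj i, by rw [hsubf_ci, hsubf_bi]⟩
  have hEs_leaf : ∀ i : Fin r, ∀ p ∈ EsSet G c b (i : ℕ),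
      me p (c i) ≠ 0 → me p = me (c i, b i) := by
    rintro i ⟨p1, p2⟩ ⟨u, v, huv, heq⟩ hne
    simp only [Prod.mk.injEq] at heq
    obtain ⟨h1, h2⟩ := heq
    rw [me_apply] at hne
    by_cases hp1 : p1 = c i
    · have hu : u = c i := hsubf_eq_ci i u (by rw [← h1, hp1])
      rw [hu] at huv
      have hv : v = b i := hnbr i v huv
      rw [hv, hsubf_bi] at h2
      rw [hp1, h2]
    · have hp2 : p2 = c i := by
        simp only [hp1, if_false] at hne
        by_contra h
        simp [Ne.symm hp1, h] at hne
      have hv : v = c i := hsubf_eq_ci i v (by rw [← h2, hp2])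
      rw [hv] at huv
      have hu : u = b i := hnbr i u huv.symm
      rw [hu, hsubf_bi] at h1
      rw [hp2, h1, me_swap]
  have hEs_b : ∀ (i : Fin r) (u : V), (b i, u) ∈ EsSet G c b (i : ℕ) →
      G.Adj (b i) u ∧ ∃ y, G.Adj (b i) y ∧ subf c b (i : ℕ) y = u := by
    rintro i u ⟨x, y, hxy, heq⟩
    simp only [Prod.mk.injEq] at heq
    obtain ⟨h1, h2⟩ := heq
    have hx : x = b i := hsubf_eq_bi i x h1.symm
    rw [hx] at hxy
    -- now y : if y was substituted, u = b j and G.Adj (b i) (c j) gives a short walk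
    rcases subf_cases (c := c) (b := b) (i : ℕ) y with ⟨hne, hid⟩ | ⟨j, hj, rfl, hbj⟩
    · have hu : u = y := by rw [h2, hid]
      rw [hu]
      exact ⟨hxy, y, hxy, hid⟩
    · exfalso
      have hij : i ≠ j := by intro h; subst h; omega
      exact hw2 i j hij (b i) (hGadj i) hxy
  have hEs_tri : ∀ i : Fin r, ¬ ∃ u v : V, (b i, u) ∈ EsSet G c b (i : ℕ) ∧
      (b i, v) ∈ EsSet G c b (i : ℕ) ∧ (u, v) ∈ EsSet G c b (i : ℕ) := by
    rintro i ⟨u, v, h1, h2, h3⟩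
    obtain ⟨hbu, _⟩ := hEs_b i u h1
    obtain ⟨hbv, _⟩ := hEs_b i v h2
    obtain ⟨x, y, hxy, heq⟩ := h3
    simp only [Prod.mk.injEq] at heq
    obtain ⟨hh1, hh2⟩ := heq
    have hx : x = u := by
      rcases subf_cases (c := c) (b := b) (i : ℕ) x with ⟨hne, hid⟩ | ⟨j, hj, rfl, hbj⟩
      · rw [hid] at hh1; exact hh1.symm
      · exfalso
        rw [hbj] at hh1
        have hij : i ≠ j := by intro h; subst h; omega
        exact hw3 i j hij (b i) (b j) (hGadj i) (by rw [← hh1]; exact hbu) (hGadj j).symm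
    have hy : y = v := by
      rcases subf_cases (c := c) (b := b) (i : ℕ) y with ⟨hne, hid⟩ | ⟨j, hj, rfl, hbj⟩
      · rw [hid] at hh2; exact hh2.symm
      · exfalso
        rw [hbj] at hh2
        have hij : i ≠ j := by intro h; subst h; omega
        exact hw3 i j hij (b i) (b j) (hGadj i) (by rw [← hh2]; exact hbv) (hGadj j).symm
    rw [hx, hy] at hxy
    exact htri i ⟨u, v, hbu, hbv, hxy⟩
  -- psi facts
  have hpsiK : ∀ (i : Fin r), ∀ x ∈ KspanI c b (i : ℕ), psi k c b (i : ℕ) x = 0 := by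
    intro i x hx
    refine Submodule.span_induction ?_ ?_ ?_ ?_ hx
    · rintro p ⟨j, hj, rfl⟩
      rw [map_add, psi_X_c hc hj, psi_X_of_not (fun ⟨l, hl, hlb⟩ => hbcl j l hlb.symm)]
      ring
    · exact map_zero _
    · intro p q _ _ hp hq
      rw [map_add, hp, hq, add_zero]
    · intro a p _ hp
      rw [smul_eq_mul, map_mul, hp, mul_zero]
  have hpsi_fix : ∀ (i : ℕ) (v : V), psi k c b i (X (subf c b i v)) = X (subf c b i v) := by
    intro i v
    apply psi_X_of_not
    rintro ⟨l, hl, hlv⟩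
    exact hsubf_ne_c i v l hl hlv
  have hpsiIsub : ∀ (i : Fin r), ∀ x ∈ (IsubI G c b (i : ℕ) : Ideal (MvPolynomial V k)) ^ 2,
      psi k c b (i : ℕ) x ∈ (IsubI G c b (i : ℕ) : Ideal (MvPolynomial V k)) ^ 2 := by
    intro i
    have hfix : ∀ x ∈ (IsubI G c b (i : ℕ) : Ideal (MvPolynomial V k)),
        psi k c b (i : ℕ) x ∈ (IsubI G c b (i : ℕ) : Ideal (MvPolynomial V k)) := by
      intro x hx
      refine Submodule.span_induction ?_ ?_ ?_ ?_ hx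
      · rintro p ⟨e, ⟨u, v, huv, rfl⟩, rfl⟩
        rw [map_mul]
        simp only []
        rw [hpsi_fix, hpsi_fix]
        exact Ideal.subset_span ⟨(subf c b (i : ℕ) u, subf c b (i : ℕ) v), ⟨u, v, huv, rfl⟩, rfl⟩
      · rw [map_zero]; exact Submodule.zero_mem _
      · intro p q _ _ hp hq
        rw [map_add]; exact Submodule.add_mem _ hp hq
      · intro a p _ hp
        rw [smul_eq_mul, map_mul]
        exact Ideal.mul_mem_left _ _ hp
    intro x hx
    rw [pow_two] at hx ⊢
    refine Submodule.mul_induction_on hx ?_ ?_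
    · intro p hp q hq
      rw [map_mul]
      exact Ideal.mul_mem_mul (hfix p hp) (hfix q hq)
    · intro p q hp hq
      rw [map_add]
      exact Submodule.add_mem _ hp hq
  -- the edge ideal in EsSet-form at level 0 is not needed; instead we prove the sup identity
  have hIdef : edgeIdeal k G = Ideal.span
      {p : MvPolynomial V k | ∃ e ∈ {e : V × V | ∃ u v, G.Adj u v ∧ e = (u, v)},
        p = X e.1 * X e.2} := by
    rw [edgeIdeal]
    congr 1
    ext p
    constructor
    · rintro ⟨u, v, huv, rfl⟩; exact ⟨(u, v), ⟨u, v, huv, rfl⟩, rfl⟩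
    · rintro ⟨e, ⟨u, v, huv, rfl⟩, rfl⟩; exact ⟨u, v, huv, rfl⟩
  have hsup : ∀ i : Fin r, edgeIdeal k G ^ 2 ⊔ KspanI c b (i : ℕ) =
      IsubI G c b (i : ℕ) ^ 2 ⊔ KspanI c b (i : ℕ) := by
    intro i
    set mk := Ideal.Quotient.mk (KspanI c b (i : ℕ) : Ideal (MvPolynomial V k)) with hmk
    have hcongX : ∀ v, mk (X (subf c b (i : ℕ) v)) = mk (X v) ∨
        mk (X (subf c b (i : ℕ) v)) = - mk (X v) := by
      intro v
      rcases subf_cases (c := c) (b := b) (i : ℕ) v with ⟨hne, hid⟩ | ⟨j, hj, rfl, hbj⟩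
      · left; rw [hid]
      · right
        rw [hbj]
        have hmem : (X (c j) + X (b j) : MvPolynomial V k) ∈ KspanI c b (i : ℕ) :=
          Ideal.subset_span ⟨j, hj, rfl⟩
        have h0 : mk (X (c j) + X (b j)) = 0 := Ideal.Quotient.eq_zero_iff_mem.mpr hmem
        rw [map_add] at h0
        linear_combination h0
    have hcongGen : ∀ u v, mk (X (subf c b (i : ℕ) u) * X (subf c b (i : ℕ) v)) = mk (X u * X v) ∨
        mk (X (subf c b (i : ℕ) u) * X (subf c b (i : ℕ) v)) = - mk (X u * X v) := by
      intro u v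
      rw [map_mul, map_mul]
      rcases hcongX u with h1 | h1 <;> rcases hcongX v with h2 | h2 <;> rw [h1, h2]
      · left; rfl
      · right; ring
      · right; ring
      · left; ring
    have hmapeq : Ideal.map mk (edgeIdeal k G) = Ideal.map mk (IsubI G c b (i : ℕ)) := by
      rw [hIdef, IsubI, Ideal.map_span, Ideal.map_span]
      apply le_antisymm
      · rw [Ideal.span_le]
        rintro _ ⟨_, ⟨e, ⟨u, v, huv, rfl⟩, rfl⟩, rfl⟩
        rcases hcongGen u v with h | h
        · rw [← h]
          exact Ideal.subset_span ⟨X (subf c b (i : ℕ) u) * X (subf c b (i : ℕ) v),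
            ⟨(subf c b (i : ℕ) u, subf c b (i : ℕ) v), ⟨u, v, huv, rfl⟩, rfl⟩, rfl⟩
        · have : mk (X u * X v) =
              - mk (X (subf c b (i : ℕ) u) * X (subf c b (i : ℕ) v)) := by rw [h]; ring
          rw [this]
          exact Submodule.neg_mem _ (Ideal.subset_span
            ⟨X (subf c b (i : ℕ) u) * X (subf c b (i : ℕ) v),
              ⟨(subf c b (i : ℕ) u, subf c b (i : ℕ) v), ⟨u, v, huv, rfl⟩, rfl⟩, rfl⟩)
      · rw [Ideal.span_le]
        rintro _ ⟨_, ⟨e, ⟨u, v, huv, rfl⟩, rfl⟩, rfl⟩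
        rcases hcongGen u v with h | h
        · rw [h]
          exact Ideal.subset_span ⟨X u * X v, ⟨(u, v), ⟨u, v, huv, rfl⟩, rfl⟩, rfl⟩
        · rw [h]
          exact Submodule.neg_mem _ (Ideal.subset_span
            ⟨X u * X v, ⟨(u, v), ⟨u, v, huv, rfl⟩, rfl⟩, rfl⟩)
    have h2 : Ideal.map mk (edgeIdeal k G ^ 2) = Ideal.map mk (IsubI G c b (i : ℕ) ^ 2) := by
      rw [Ideal.map_pow, Ideal.map_pow, hmapeq]
    have h3 := congrArg (Ideal.comap mk) h2
    rwa [Ideal.comap_map_of_surjective mk Ideal.Quotient.mk_surjective,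
      Ideal.comap_map_of_surjective mk Ideal.Quotient.mk_surjective,
      ← RingHom.ker_eq_comap_bot, Ideal.mk_ker] at h3
  -- the regularity step
  have hstep : ∀ (i : Fin r) (g : MvPolynomial V k),
      (X (c i) + X (b i)) * g ∈ edgeIdeal k G ^ 2 ⊔ KspanI c b (i : ℕ) →
      g ∈ edgeIdeal k G ^ 2 ⊔ KspanI c b (i : ℕ) := by
    intro i g hgmem
    have hpsiF : psi k c b (i : ℕ) (X (c i) + X (b i)) = X (c i) + X (b i) := by
      rw [map_add, psi_X_of_not, psi_X_of_not]
      · rintro ⟨l, hl, hlb⟩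
        exact hbcl i l hlb.symm
      · rintro ⟨l, hl, hlb⟩
        have := hc hlb
        omega
    rw [hsup i] at hgmem ⊢
    obtain ⟨p, hp, q, hq, hpq⟩ := Submodule.mem_sup.mp hgmem
    have h1 : psi k c b (i : ℕ) p = (X (c i) + X (b i)) * psi k c b (i : ℕ) g := by
      have h0 := congrArg (psi k c b (i : ℕ)) hpq
      rwa [map_add, hpsiK i q hq, add_zero, map_mul, hpsiF] at h0
    have h2 : (X (c i) + X (b i)) * psi k c b (i : ℕ) g ∈ IsubI G c b (i : ℕ) ^ 2 := by
      rw [← h1]; exact hpsiIsub i p hp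
    have hsq : (IsubI G c b (i : ℕ) : Ideal (MvPolynomial V k)) ^ 2 =
        Ideal.span ((fun d => monomial d (1 : k)) '' D2 (EsSet G c b (i : ℕ))) := by
      rw [IsubI]; exact span_edgeSet_sq _
    have h3 : psi k c b (i : ℕ) g ∈ IsubI G c b (i : ℕ) ^ 2 := by
      rw [hsq, mem_ideal_span_monomial_image]
      rw [hsq, mem_ideal_span_monomial_image] at h2
      exact keyLemma (EsSet G c b (i : ℕ)) (c i) (b i) (hGadj i).ne (hEs_cbi i)
        (hEs_sym i) (hEs_leaf i) (hEs_tri i) (psi k c b (i : ℕ) g) h2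
    have h4 : g - psi k c b (i : ℕ) g ∈ KspanI c b (i : ℕ) := psi_sub_mem _ _
    have h5 : g = psi k c b (i : ℕ) g + (g - psi k c b (i : ℕ) g) := by ring
    rw [h5]
    exact Submodule.add_mem _ (Submodule.mem_sup_left h3) (Submodule.mem_sup_right h4)
  -- assemble
  constructor
  · rw [RingTheory.Sequence.isWeaklyRegular_iff]
    intro i hi
    have hi' : i < r := by simpa using hi
    have htake : Ideal.ofList
        ((List.ofFn fun i : Fin r => (X (c i) + X (b i) : MvPolynomial V k)).take i) =
        KspanI c b i := by
      rw [KspanI]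
      have hset : {x : MvPolynomial V k |
          x ∈ (List.ofFn fun i : Fin r => (X (c i) + X (b i) : MvPolynomial V k)).take i} =
          {p : MvPolynomial V k | ∃ j : Fin r, (j : ℕ) < i ∧ p = X (c j) + X (b j)} := by
        ext x
        simp only [Set.mem_setOf_eq]
        constructor
        · intro hx
          obtain ⟨n, hn, hget⟩ := List.mem_iff_getElem.mp hx
          rw [List.length_take, List.length_ofFn] at hn
          have hn1 : n < i := lt_of_lt_of_le hn (min_le_left _ _)
          have hn2 : n < r := lt_of_lt_of_le hn (min_le_right _ _)
          rw [List.getElem_take, List.getElem_ofFn] at hget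
          exact ⟨⟨n, hn2⟩, hn1, hget.symm⟩
        · rintro ⟨j, hj, rfl⟩
          apply List.mem_iff_getElem.mpr
          refine ⟨(j : ℕ), ?_, ?_⟩
          · rw [List.length_take, List.length_ofFn]
            exact lt_min hj j.isLt
          · rw [List.getElem_take, List.getElem_ofFn]
      exact congrArg Ideal.span hset
    rw [htake]
    have hget : (List.ofFn fun i : Fin r => (X (c i) + X (b i) : MvPolynomial V k))[i] =
        X (c ⟨i, hi'⟩) + X (b ⟨i, hi'⟩) := by
      rw [List.getElem_ofFn]
    rw [hget]
    exact isSMulRegular_quot _ _ _ (hstep ⟨i, hi'⟩)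
  · intro htop
    have h1 : Ideal.Quotient.mk (edgeIdeal k G ^ 2) 1 ∈
        ((Ideal.ofList (List.ofFn fun i : Fin r =>
          (X (c i) + X (b i) : MvPolynomial V k))) • ⊤ :
            Submodule (MvPolynomial V k) (MvPolynomial V k ⧸ edgeIdeal k G ^ 2)) :=
      htop ▸ Submodule.mem_top
    rw [smul_top_mem_iff] at h1
    have hker : edgeIdeal k G ^ 2 ⊔ Ideal.ofList (List.ofFn fun i : Fin r =>
        (X (c i) + X (b i) : MvPolynomial V k)) ≤
        RingHom.ker (constantCoeff (R := k) (σ := V)) := by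
      apply sup_le
      · refine le_trans (Ideal.pow_le_self two_ne_zero) ?_
        rw [edgeIdeal, Ideal.span_le]
        rintro _ ⟨u, v, huv, rfl⟩
        rw [SetLike.mem_coe, RingHom.mem_ker, map_mul, constantCoeff_X, zero_mul]
      · rw [Ideal.span_le]
        rintro x hx
        obtain ⟨j, rfl⟩ := List.mem_ofFn.mp hx
        rw [SetLike.mem_coe, RingHom.mem_ker, map_add, constantCoeff_X, constantCoeff_X, add_zero]
    have h2 := hker h1
    rw [RingHom.mem_ker, map_one] at h2
    exact one_ne_zero h2

end Main


/-- Let `G` be a finite simple graph with edge ideal `I = I(G)`, and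
let `c₁, …, c_r` be distinct leaves of `G` (vertices of degree one) with `b_i` the
unique neighbor of `c_i`.  Assume `d(c_i, c_j) ≥ 4` for `i ≠ j` and that no `b_i` lies
on a triangle of `G`.  Then `x_{c₁} + x_{b₁}, …, x_{c_r} + x_{b_r}` is a regular
sequence on `R/I²`. -/
theorem stmt10 {V k : Type*} [Fintype V] [DecidableEq V] [Field k]
    (G : SimpleGraph V) [DecidableRel G.Adj]
    (r : ℕ) (c b : Fin r → V)
    (hc : Function.Injective c)
    (hleaf : ∀ i, G.neighborFinset (c i) = {b i})
    (hdist : ∀ i j, i ≠ j → 4 ≤ G.dist (c i) (c j))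
    (htri : ∀ i, ¬ ∃ u v : V, G.Adj (b i) u ∧ G.Adj (b i) v ∧ G.Adj u v) :
    RingTheory.Sequence.IsRegular ((MvPolynomial V k) ⧸ (edgeIdeal k G ^ 2))
      (List.ofFn fun i : Fin r => (X (c i) + X (b i) : MvPolynomial V k)) := by
  exact stmt10' G c b hc hleaf hdist htri
end
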